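/- arXiv:1412.3227 — 12 statements merged into one kernel-verified Lean document; each statement's English description precedes it below -/
import Mathlib

section
/- Let X be a normed space over ℂ (or ℝ), let V be a Chebyshev subspace of X, and for each x ∈ X let c_V(x) denote the unique best approximation of x in V. Let P : X → X be a linear projection (P ∘ P = P) with ‖P‖ ≤ 1 and P(V) ⊆ V. Then for every x ∈ X, the best approximation of P(x) in V is fixed by P, i.e., P(c_V(P x)) = c_V(P x). -/
/-- If `V` is a Chebyshev subspace of a complex normed space `X` with best-approximation
map `cV`, and `P : X → X` is a contractive linear projection with `P(V) ⊆ V`, then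
`P (cV (P x)) = cV (P x)` for every `x`. -/
theorem fixed_best_approx_of_contractive_projection
    {X : Type*} [NormedAddCommGroup X] [NormedSpace ℂ X]
    (V : Submodule ℂ X)
    (hcheb : ∀ x : X, ∃! v : X, v ∈ V ∧ ∀ w ∈ V, ‖x - v‖ ≤ ‖x - w‖)
    (cV : X → X)
    (hcV : ∀ x : X, cV x ∈ V ∧ ∀ w ∈ V, ‖x - cV x‖ ≤ ‖x - w‖)
    (P : X →ₗ[ℂ] X)
    (hproj : ∀ x : X, P (P x) = P x)
    (hcontr : ∀ x : X, ‖P x‖ ≤ ‖x‖)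
    (hPV : ∀ v ∈ V, P v ∈ V) :
    ∀ x : X, P (cV (P x)) = cV (P x) := by
  intro x
  set y := P x with hy
  set v := cV y with hv
  have hvV := (hcV y).1
  have hbest := (hcV y).2
  have hPvV : P v ∈ V := hPV v hvV
  -- ‖y - P v‖ ≤ ‖y - v‖
  have h1 : ‖y - P v‖ ≤ ‖y - v‖ := by
    have : y - P v = P (y - v) := by
      rw [map_sub, hy, hproj]
    rw [this]
    exact hcontr _
  -- P v is also a best approximation
  have h2 : ∀ w ∈ V, ‖y - P v‖ ≤ ‖y - w‖ := fun w hw =>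
    h1.trans (hbest w hw)
  obtain ⟨u, hu, huniq⟩ := hcheb y
  have e1 : P v = u := huniq _ ⟨hPvV, h2⟩
  have e2 : v = u := huniq _ ⟨hvV, hbest⟩
  rw [e1, e2]
end

section
/- Let X be a complex normed space and let x ∈ X be an element such that the one-dimensional subspace ℂx is not a Chebyshev subspace of X. Then there exist an extreme point φ of the closed unit ball of the continuous dual space X*, a vector y ∈ X, and a scalar λ ∈ ℂ \ {0} such that φ(x) = 0 and φ(y) = ‖y‖ = ‖y − λx‖. -/
lemma complex_face_lemma {d t₁ t₂ : ℝ} {a b : ℂ} (ht₁ : 0 < t₁) (ht₂ : 0 < t₂)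
    (hsum : t₁ + t₂ = 1) (ha : ‖a‖ ≤ d) (hb : ‖b‖ ≤ d)
    (heq : t₁ • a + t₂ • b = (d : ℂ)) : a = d ∧ b = d := by
  have hre : t₁ * a.re + t₂ * b.re = d := by
    have := congrArg Complex.re heq
    simpa [Complex.add_re, Complex.smul_re] using this
  have hra : a.re ≤ d := (Complex.re_le_norm a).trans ha
  have hrb : b.re ≤ d := (Complex.re_le_norm b).trans hb
  have key : t₁ * (d - a.re) + t₂ * (d - b.re) = 0 := by
    linear_combination d * hsum - hre
  have h1 : 0 ≤ t₁ * (d - a.re) := mul_nonneg ht₁.le (by linarith)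
  have h2 : 0 ≤ t₂ * (d - b.re) := mul_nonneg ht₂.le (by linarith)
  have hae : a.re = d := by
    have : t₁ * (d - a.re) = 0 := by linarith
    rcases mul_eq_zero.1 this with h | h
    · exact absurd h ht₁.ne'
    · linarith
  have hbe : b.re = d := by
    have : t₂ * (d - b.re) = 0 := by linarith
    rcases mul_eq_zero.1 this with h | h
    · exact absurd h ht₂.ne'
    · linarith
  have hd : 0 ≤ d := (norm_nonneg a).trans ha
  have haim : a.im = 0 := by
    have h2 : ‖a‖^2 ≤ d^2 := pow_le_pow_left₀ (norm_nonneg a) ha 2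
    have h3 : ‖a‖^2 = a.re^2 + a.im^2 := by
      rw [Complex.sq_norm, Complex.normSq_apply]; ring
    have : a.im^2 ≤ 0 := by nlinarith
    nlinarith [sq_nonneg a.im]
  have hbim : b.im = 0 := by
    have h2 : ‖b‖^2 ≤ d^2 := pow_le_pow_left₀ (norm_nonneg b) hb 2
    have h3 : ‖b‖^2 = b.re^2 + b.im^2 := by
      rw [Complex.sq_norm, Complex.normSq_apply]; ring
    have : b.im^2 ≤ 0 := by nlinarith
    nlinarith [sq_nonneg b.im]
  constructor <;> apply Complex.ext <;> simp [hae, hbe, haim, hbim]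

/-- existence of a best approximation in the span of a single vector -/
lemma exists_best_approx {X : Type*} [NormedAddCommGroup X] [NormedSpace ℂ X]
    {x : X} (hx : x ≠ 0) (z : X) :
    ∃ v ∈ Submodule.span ℂ ({x} : Set X),
      ∀ w ∈ Submodule.span ℂ ({x} : Set X), ‖z - v‖ ≤ ‖z - w‖ := by
  have hxn : (0:ℝ) < ‖x‖ := norm_pos_iff.2 hx
  set R : ℝ := (2 * ‖z‖ + 1) / ‖x‖ with hR
  have hK : IsCompact (Metric.closedBall (0:ℂ) R) := isCompact_closedBall _ _
  have hcont : Continuous fun t : ℂ => ‖z - t • x‖ := by fun_prop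
  obtain ⟨t₀, ht₀K, ht₀⟩ := hK.exists_isMinOn ⟨0, by
      simp [Metric.mem_closedBall]
      positivity⟩ hcont.continuousOn
  refine ⟨t₀ • x, Submodule.smul_mem _ _ (Submodule.mem_span_singleton_self x), ?_⟩
  intro w hw
  obtain ⟨t, rfl⟩ := Submodule.mem_span_singleton.1 hw
  by_cases htR : t ∈ Metric.closedBall (0:ℂ) R
  · exact ht₀ htR
  · have ht : R < ‖t‖ := by
      simpa [Metric.mem_closedBall, dist_eq_norm] using htR
    have h0 : ‖z - t₀ • x‖ ≤ ‖z‖ := by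
      simpa using ht₀ (show (0:ℂ) ∈ Metric.closedBall (0:ℂ) R by
        simp [Metric.mem_closedBall]; positivity)
    have h1 : ‖t • x‖ - ‖z‖ ≤ ‖z - t • x‖ := by
      have := norm_sub_norm_le (t • x) z
      have h2 : ‖t • x - z‖ = ‖z - t • x‖ := norm_sub_rev _ _
      linarith
    have h3 : 2 * ‖z‖ + 1 < ‖t • x‖ := by
      rw [norm_smul]
      have : R * ‖x‖ < ‖t‖ * ‖x‖ := mul_lt_mul_of_pos_right ht hxn
      have hRx : R * ‖x‖ = 2 * ‖z‖ + 1 := by rw [hR, div_mul_cancel₀ _ hxn.ne']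
      linarith
    linarith

noncomputable instance {X : Type*} [NormedAddCommGroup X] [NormedSpace ℂ X] :
    LocallyConvexSpace ℝ (WeakDual ℂ X) := WeakBilin.locallyConvexSpace



/-- If `ℂx` is not a Chebyshev subspace of a complex normed space `X`, then there are an
extreme point `φ` of the closed unit ball of the dual `X*`, a vector `y` and a nonzero
scalar `λ` with `φ x = 0` and `φ y = ‖y‖ = ‖y - λ x‖`. -/
theorem exists_extreme_functional_of_not_Chebyshev
    {X : Type*} [NormedAddCommGroup X] [NormedSpace ℂ X] (x : X)
    (hx : ¬ (∀ z : X, ∃! v : X, v ∈ Submodule.span ℂ ({x} : Set X) ∧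
      ∀ w ∈ Submodule.span ℂ ({x} : Set X), ‖z - v‖ ≤ ‖z - w‖)) :
    ∃ (φ : StrongDual ℂ X) (y : X) (lam : ℂ),
      φ ∈ Set.extremePoints ℝ (Metric.closedBall (0 : StrongDual ℂ X) 1) ∧
      lam ≠ 0 ∧ φ x = 0 ∧ φ y = (‖y‖ : ℂ) ∧ ‖y‖ = ‖y - lam • x‖ := by
  -- x ≠ 0
  rcases eq_or_ne x 0 with rfl | hx0
  · exfalso
    apply hx
    intro z
    refine ⟨0, ⟨Submodule.zero_mem _, fun w hw => ?_⟩, fun v hv => ?_⟩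
    · rw [Submodule.span_zero_singleton, Submodule.mem_bot] at hw
      rw [hw]
    · obtain ⟨hv1, -⟩ := hv
      rw [Submodule.span_zero_singleton, Submodule.mem_bot] at hv1
      exact hv1
  -- get a point with non-unique best approximation
  push_neg at hx
  obtain ⟨z, hz⟩ := hx
  obtain ⟨v₁, hv₁mem, hv₁⟩ := exists_best_approx hx0 z
  have hnu : ¬ ∀ v', (v' ∈ Submodule.span ℂ ({x} : Set X) ∧
      ∀ w ∈ Submodule.span ℂ ({x} : Set X), ‖z - v'‖ ≤ ‖z - w‖) → v' = v₁ := by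
    intro h
    exact hz ⟨v₁, ⟨hv₁mem, hv₁⟩, h⟩
  push_neg at hnu
  obtain ⟨v₂, ⟨hv₂mem, hv₂⟩, hne⟩ := hnu
  set d : ℝ := ‖z - v₁‖ with hdd
  have hd21 : ‖z - v₂‖ = d := le_antisymm (hv₂ v₁ hv₁mem) (hv₁ v₂ hv₂mem)
  -- the scalar c
  obtain ⟨c, hc⟩ := Submodule.mem_span_singleton.1 (Submodule.sub_mem _ hv₂mem hv₁mem)
  have hc0 : c ≠ 0 := by
    rintro rfl
    rw [zero_smul] at hc
    exact hne (sub_eq_zero.1 hc.symm)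
  set y : X := z - v₁ with hyy
  have hyc : y - c • x = z - v₂ := by rw [hyy, hc]; abel
  have hynorm : ‖y‖ = d := rfl
  have hycnorm : ‖y - c • x‖ = d := by rw [hyc]; exact hd21
  -- the midpoint
  set m : X := y - (c/2) • x with hmm
  have hm_low : d ≤ ‖m‖ := by
    have hmem : v₁ + (c/2) • x ∈ Submodule.span ℂ ({x} : Set X) :=
      Submodule.add_mem _ hv₁mem
        (Submodule.smul_mem _ _ (Submodule.mem_span_singleton_self x))
    have : z - (v₁ + (c/2) • x) = m := by rw [hmm, hyy]; abel
    rw [← this]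
    exact hv₁ _ hmem
  have hm_high : ‖m‖ ≤ d := by
    have hid : m = (2:ℂ)⁻¹ • y + (2:ℂ)⁻¹ • (y - c • x) := by
      rw [hmm]; module
    rw [hid]
    calc ‖(2:ℂ)⁻¹ • y + (2:ℂ)⁻¹ • (y - c • x)‖
        ≤ ‖(2:ℂ)⁻¹ • y‖ + ‖(2:ℂ)⁻¹ • (y - c • x)‖ := norm_add_le _ _
      _ = (1/2) * ‖y‖ + (1/2) * ‖y - c • x‖ := by
          simp [norm_smul]
      _ = d := by rw [hynorm, hycnorm]; ring
  have hm : ‖m‖ = d := le_antisymm hm_high hm_low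
  have hdpos : 0 < d := by
    by_contra h
    push_neg at h
    have hy0 : y = 0 := norm_le_zero_iff.1 (by rw [hynorm]; exact h)
    have hyc0 : y - c • x = 0 := norm_le_zero_iff.1 (by rw [hycnorm]; exact h)
    rw [hy0, zero_sub, neg_eq_zero, smul_eq_zero] at hyc0
    rcases hyc0 with h' | h'
    · exact hc0 h'
    · exact hx0 h'
  have hm0 : m ≠ 0 := by
    rw [← norm_ne_zero_iff, hm]; exact hdpos.ne'
  -- the norming functional of the midpoint
  obtain ⟨ψ, hψ1, hψm⟩ := exists_dual_vector ℂ m (norm_ne_zero_iff.2 hm0)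
  have hψsum : ψ y + ψ (y - c • x) = 2 * (d:ℂ) := by
    have h2m : (2:ℂ) • m = y + (y - c • x) := by rw [hmm]; module
    calc ψ y + ψ (y - c • x) = ψ (y + (y - c • x)) := (map_add ψ _ _).symm
      _ = ψ ((2:ℂ) • m) := by rw [h2m]
      _ = 2 * ψ m := by rw [map_smul]; rfl
      _ = 2 * (d:ℂ) := by simp [hψm, hm]
  have hbd : ∀ (g : StrongDual ℂ X) (u : X), ‖g‖ ≤ 1 → ‖u‖ = d → ‖g u‖ ≤ d := by
    intro g u hg hu
    calc ‖g u‖ ≤ ‖g‖ * ‖u‖ := g.le_opNorm u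
      _ ≤ 1 * d := by rw [hu]; exact mul_le_mul_of_nonneg_right hg hdpos.le
      _ = d := one_mul d
  have hψface : ψ y = (d:ℂ) ∧ ψ (y - c • x) = (d:ℂ) := by
    apply complex_face_lemma (t₁ := 1/2) (t₂ := 1/2) (by norm_num) (by norm_num) (by norm_num)
      (hbd ψ y hψ1.le hynorm) (hbd ψ _ hψ1.le hycnorm)
    rw [Complex.real_smul, Complex.real_smul]
    push_cast
    linear_combination hψsum / 2
  -- the face S
  set S : Set (StrongDual ℂ X) :=
    Metric.closedBall 0 1 ∩ {g | g y = (d:ℂ) ∧ g (y - c • x) = (d:ℂ)} with hSS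
  have hSne : S.Nonempty := ⟨ψ, by
    constructor
    · rw [mem_closedBall_zero_iff, hψ1]
    · exact ⟨hψface.1, hψface.2⟩⟩
  have hScomp : IsCompact (WeakDual.toStrongDual ⁻¹' S) := by
    have h1 : IsCompact (WeakDual.toStrongDual ⁻¹'
        Metric.closedBall (0 : StrongDual ℂ X) 1) :=
      WeakDual.isCompact_closedBall 0 1
    have h2 : IsClosed {g : WeakDual ℂ X | g y = (d:ℂ)} :=
      isClosed_singleton.preimage (WeakDual.eval_continuous y)
    have h3 : IsClosed {g : WeakDual ℂ X | g (y - c • x) = (d:ℂ)} :=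
      isClosed_singleton.preimage (WeakDual.eval_continuous (y - c • x))
    exact h1.inter_right (h2.inter h3)
  have hψS : ψ ∈ S := ⟨mem_closedBall_zero_iff.2 hψ1.le, hψface.1, hψface.2⟩
  obtain ⟨ξ, hξ⟩ := hScomp.extremePoints_nonempty ⟨StrongDual.toWeakDual ψ, hψS⟩
  have hξS : (WeakDual.toStrongDual ξ) ∈ S := hξ.1
  refine ⟨WeakDual.toStrongDual ξ, y, c, ⟨hξS.1, ?_⟩, hc0, ?_, ?_, ?_⟩
  · -- extreme point of the ball
    intro a ha b hb hseg
    obtain ⟨t₁, t₂, ht₁, ht₂, hsum, heq⟩ := hseg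
    have haS : a ∈ S := by
      have hay := congrArg (fun g : StrongDual ℂ X => g y) heq
      have hac := congrArg (fun g : StrongDual ℂ X => g (y - c • x)) heq
      simp only [ContinuousLinearMap.add_apply, ContinuousLinearMap.smul_apply] at hay hac
      have hy' := complex_face_lemma ht₁ ht₂ hsum
        (hbd a y (mem_closedBall_zero_iff.1 ha) hynorm)
        (hbd b y (mem_closedBall_zero_iff.1 hb) hynorm) (by rw [hay]; exact hξS.2.1)
      have hc' := complex_face_lemma ht₁ ht₂ hsum
        (hbd a _ (mem_closedBall_zero_iff.1 ha) hycnorm)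
        (hbd b _ (mem_closedBall_zero_iff.1 hb) hycnorm) (by rw [hac]; exact hξS.2.2)
      exact ⟨ha, hy'.1, hc'.1⟩
    have hbS : b ∈ S := by
      have hay := congrArg (fun g : StrongDual ℂ X => g y) heq
      have hac := congrArg (fun g : StrongDual ℂ X => g (y - c • x)) heq
      simp only [ContinuousLinearMap.add_apply, ContinuousLinearMap.smul_apply] at hay hac
      have hy' := complex_face_lemma ht₁ ht₂ hsum
        (hbd a y (mem_closedBall_zero_iff.1 ha) hynorm)
        (hbd b y (mem_closedBall_zero_iff.1 hb) hynorm) (by rw [hay]; exact hξS.2.1)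
      have hc' := complex_face_lemma ht₁ ht₂ hsum
        (hbd a _ (mem_closedBall_zero_iff.1 ha) hycnorm)
        (hbd b _ (mem_closedBall_zero_iff.1 hb) hycnorm) (by rw [hac]; exact hξS.2.2)
      exact ⟨hb, hy'.2, hc'.2⟩
    exact hξ.2 haS hbS ⟨t₁, t₂, ht₁, ht₂, hsum, heq⟩
  · -- φ x = 0
    have h1 := hξS.2.1
    have h2 := hξS.2.2
    have h3 : (WeakDual.toStrongDual ξ) (c • x) = 0 := by
      have := (map_sub (WeakDual.toStrongDual ξ) y (c • x))
      rw [h2, h1] at this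
      linear_combination this
    rw [map_smul, smul_eq_mul] at h3
    exact (mul_eq_zero.1 h3).resolve_left hc0
  · rw [hynorm]; exact hξS.2.1
  · rw [hynorm, hycnorm]
end

section
/- Let K be a compact Hausdorff topological space and let f be a non-zero element of the Banach space C(K, ℂ) of continuous complex-valued functions on K with the supremum norm. Then the one-dimensional subspace ℂf is a Chebyshev subspace of C(K, ℂ) if and only if f(t) ≠ 0 for every t ∈ K (i.e., f is invertible in the algebra C(K, ℂ)). -/
/-- On a compact space, a continuous map attains its sup norm. -/
lemma cheb_aux_exists_norm_eq {K : Type*} [TopologicalSpace K] [CompactSpace K] [Nonempty K]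
    (h : C(K, ℂ)) : ∃ t, ‖h t‖ = ‖h‖ := by
  obtain ⟨t, _, ht⟩ := isCompact_univ.exists_isMaxOn Set.univ_nonempty
    (Continuous.continuousOn (by fun_prop) : ContinuousOn (fun t => ‖h t‖) Set.univ)
  refine ⟨t, le_antisymm (h.norm_coe_le_norm t) ?_⟩
  exact (h.norm_le (norm_nonneg _)).mpr fun x => ht (Set.mem_univ x)

/-- Strict convexity of `ℂ` via the parallelogram law. -/
lemma cheb_aux_strict {a b : ℂ} {d : ℝ} (ha : ‖a‖ ≤ d) (hb : ‖b‖ ≤ d)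
    (hab : ‖a + b‖ = 2 * d) : a = b := by
  have := parallelogram_law_with_norm ℂ a b
  have h2 : ‖a - b‖ = 0 := by nlinarith [norm_nonneg (a - b), norm_nonneg a, norm_nonneg b]
  exact sub_eq_zero.mp (norm_eq_zero.mp h2)

/-- A non-zero `f ∈ C(K, ℂ)` spans a Chebyshev subspace of `C(K, ℂ)` iff `f` vanishes
nowhere, i.e. `f` is invertible in the algebra `C(K, ℂ)`. -/
theorem span_singleton_chebyshev_iff_invertible_CK
    {K : Type*} [TopologicalSpace K] [CompactSpace K] [T2Space K]
    (f : C(K, ℂ)) (hf : f ≠ 0) :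
    (∀ g : C(K, ℂ), ∃! v : C(K, ℂ), v ∈ Submodule.span ℂ ({f} : Set C(K, ℂ)) ∧
        ∀ w ∈ Submodule.span ℂ ({f} : Set C(K, ℂ)), ‖g - v‖ ≤ ‖g - w‖) ↔
    (∀ t : K, f t ≠ 0) := by
  have hK : Nonempty K := by
    by_contra hK
    exact hf (ContinuousMap.ext fun t => absurd ⟨t⟩ hK)
  have hfpos : 0 < ‖f‖ := norm_pos_iff.mpr hf
  constructor
  · -- Chebyshev ⇒ nonvanishing
    intro hcheb t₀
    by_contra ht₀
    -- the test function g t = 1 - ‖f t‖ / ‖f‖ (real-valued)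
    set g : C(K, ℂ) :=
      (⟨Complex.ofReal, Complex.continuous_ofReal⟩ : C(ℝ, ℂ)).comp
        ⟨fun t => 1 - ‖f t‖ / ‖f‖, by fun_prop⟩ with hg
    have hgapp : ∀ t, g t = ((1 - ‖f t‖ / ‖f‖ : ℝ) : ℂ) := fun t => rfl
    have hr : ∀ t, ‖f t‖ / ‖f‖ ≤ 1 :=
      fun t => (div_le_one hfpos).mpr (f.norm_coe_le_norm t)
    have hrnn : ∀ t, 0 ≤ ‖f t‖ / ‖f‖ := fun t => div_nonneg (norm_nonneg _) hfpos.le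
    -- any element of the span is a multiple of f
    have hspan : ∀ w ∈ Submodule.span ℂ ({f} : Set C(K, ℂ)), ∃ c : ℂ, w = c • f := by
      intro w hw
      obtain ⟨c, hc⟩ := Submodule.mem_span_singleton.mp hw
      exact ⟨c, hc.symm⟩
    -- lower bound: ‖g - w‖ ≥ 1 for any w in the span
    have hlow : ∀ w ∈ Submodule.span ℂ ({f} : Set C(K, ℂ)), (1 : ℝ) ≤ ‖g - w‖ := by
      intro w hw
      obtain ⟨c, rfl⟩ := hspan w hw
      have : ‖(g - c • f) t₀‖ ≤ ‖g - c • f‖ := ContinuousMap.norm_coe_le_norm _ t₀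
      simpa [hgapp t₀, ht₀] using this
    -- ‖g‖ ≤ 1
    have hg1 : ‖g‖ ≤ 1 := by
      refine (g.norm_le (by norm_num)).mpr fun t => ?_
      rw [hgapp t, Complex.norm_real, Real.norm_of_nonneg (by linarith [hr t])]
      linarith [hrnn t]
    -- ‖g - ‖f‖⁻¹ • f‖ ≤ 1
    have hg2 : ‖g - ((‖f‖⁻¹ : ℝ) : ℂ) • f‖ ≤ 1 := by
      refine (ContinuousMap.norm_le _ (by norm_num)).mpr fun t => ?_
      have h1 : ‖(g - ((‖f‖⁻¹ : ℝ) : ℂ) • f) t‖ ≤ ‖g t‖ + ‖((‖f‖⁻¹ : ℝ) : ℂ) • f t‖ := by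
        simpa [sub_eq_add_neg] using norm_add_le (g t) (-(((‖f‖⁻¹ : ℝ) : ℂ) • f t))
      have h2 : ‖g t‖ = 1 - ‖f t‖ / ‖f‖ := by
        rw [hgapp t, Complex.norm_real, Real.norm_of_nonneg (by linarith [hr t])]
      have h3 : ‖((‖f‖⁻¹ : ℝ) : ℂ) • f t‖ = ‖f t‖ / ‖f‖ := by
        rw [norm_smul, Complex.norm_real, Real.norm_of_nonneg (inv_nonneg.mpr hfpos.le),
          div_eq_inv_mul]
      rw [h2, h3] at h1
      linarith
    obtain ⟨v, _, huniq⟩ := hcheb g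
    have h0 : (0 : C(K, ℂ)) ∈ Submodule.span ℂ ({f} : Set C(K, ℂ)) := Submodule.zero_mem _
    have hfm : ((‖f‖⁻¹ : ℝ) : ℂ) • f ∈ Submodule.span ℂ ({f} : Set C(K, ℂ)) :=
      Submodule.smul_mem _ _ (Submodule.mem_span_singleton_self f)
    have e1 : (0 : C(K, ℂ)) = v :=
      huniq 0 ⟨h0, fun w hw => by simpa using le_trans hg1 (hlow w hw)⟩
    have e2 : ((‖f‖⁻¹ : ℝ) : ℂ) • f = v :=
      huniq _ ⟨hfm, fun w hw => le_trans hg2 (hlow w hw)⟩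
    have : ((‖f‖⁻¹ : ℝ) : ℂ) • f = 0 := e2.trans e1.symm
    have hc0 : ((‖f‖⁻¹ : ℝ) : ℂ) ≠ 0 :=
      Complex.ofReal_ne_zero.mpr (ne_of_gt (inv_pos.mpr hfpos))
    exact hf ((smul_eq_zero.mp this).resolve_left hc0)
  · -- nonvanishing ⇒ Chebyshev
    intro hnv g
    -- existence of a best approximation
    have hcont : Continuous fun c : ℂ => ‖g - c • f‖ := by fun_prop
    set R : ℝ := (2 * ‖g‖ + 1) / ‖f‖ with hR
    have hRpos : 0 ≤ R := div_nonneg (by positivity) hfpos.le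
    obtain ⟨c₀, hc₀mem, hc₀min⟩ := (isCompact_closedBall (0 : ℂ) R).exists_isMinOn
      ⟨0, Metric.mem_closedBall_self hRpos⟩ hcont.continuousOn
    have hmemc : ∀ c : ℂ, c • f ∈ Submodule.span ℂ ({f} : Set C(K, ℂ)) :=
      fun c => Submodule.smul_mem _ _ (Submodule.mem_span_singleton_self f)
    set d : ℝ := ‖g - c₀ • f‖ with hd
    have hmin : ∀ w ∈ Submodule.span ℂ ({f} : Set C(K, ℂ)), d ≤ ‖g - w‖ := by
      intro w hw
      obtain ⟨c, rfl⟩ := (Submodule.mem_span_singleton.mp hw).imp fun c hc => hc.symm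
      by_cases hc : c ∈ Metric.closedBall (0 : ℂ) R
      · exact hc₀min hc
      · have hcnorm : R < ‖c‖ := by
          simpa [Metric.mem_closedBall, dist_eq_norm] using hc
        have h1 : d ≤ ‖g‖ := by
          simpa using hc₀min (Metric.mem_closedBall_self hRpos)
        have h2 : ‖c • f‖ - ‖g‖ ≤ ‖g - c • f‖ := by
          have h2' := norm_sub_norm_le (c • f) g
          rwa [norm_sub_rev] at h2'
        have h3 : ‖c • f‖ = ‖c‖ * ‖f‖ := norm_smul c f
        have h4 : R * ‖f‖ = 2 * ‖g‖ + 1 := div_mul_cancel₀ _ (ne_of_gt hfpos)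
        nlinarith [norm_nonneg g]
    refine ⟨c₀ • f, ⟨hmemc c₀, hmin⟩, ?_⟩
    rintro v' ⟨hv'mem, hv'min⟩
    obtain ⟨c', rfl⟩ := (Submodule.mem_span_singleton.mp hv'mem).imp fun c hc => hc.symm
    have heq : ‖g - c' • f‖ = d := le_antisymm (hv'min _ (hmemc c₀)) (hmin _ (hmemc c'))
    set m : C(K, ℂ) := ((c₀ + c') / 2) • f with hm
    have hmid : (g - c₀ • f) + (g - c' • f) = (2 : ℂ) • (g - m) := by
      rw [hm]
      ext t
      simp only [ContinuousMap.add_apply, ContinuousMap.sub_apply, ContinuousMap.smul_apply,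
        smul_eq_mul]
      ring
    have hup : ‖g - m‖ ≤ d := by
      have h1 : ‖(g - c₀ • f) + (g - c' • f)‖ ≤ d + d := by
        calc ‖(g - c₀ • f) + (g - c' • f)‖ ≤ ‖g - c₀ • f‖ + ‖g - c' • f‖ := norm_add_le _ _
        _ = d + d := by rw [heq]
      rw [hmid, norm_smul] at h1
      simp only [Complex.norm_ofNat] at h1
      linarith
    have hdown : d ≤ ‖g - m‖ := hmin _ (hmemc _)
    have hnorm : ‖g - m‖ = d := le_antisymm hup hdown
    obtain ⟨t, ht⟩ := cheb_aux_exists_norm_eq (g - m)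
    have hab : ‖(g - c₀ • f) t + (g - c' • f) t‖ = 2 * d := by
      have : (g - c₀ • f) t + (g - c' • f) t = ((g - c₀ • f) + (g - c' • f)) t := rfl
      rw [this, hmid]
      simp only [ContinuousMap.smul_apply, norm_smul, Complex.norm_ofNat]
      rw [ht, hnorm]
    have ha : ‖(g - c₀ • f) t‖ ≤ d := ContinuousMap.norm_coe_le_norm _ t
    have hb : ‖(g - c' • f) t‖ ≤ d := heq ▸ ContinuousMap.norm_coe_le_norm (g - c' • f) t
    have := cheb_aux_strict ha hb hab
    simp only [ContinuousMap.sub_apply, ContinuousMap.smul_apply, smul_eq_mul] at this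
    have hcc : c₀ = c' := by
      have h5 : c₀ * f t = c' * f t := by linear_combination -this
      exact mul_right_cancel₀ (hnv t) h5
    rw [hcc]
end

section
/- (Haar) Let K be a compact Hausdorff topological space, let n ≥ 1, and let V be an n-dimensional linear subspace of the Banach space C(K, ℂ) of continuous complex-valued functions on K with the supremum norm. Then V is a Chebyshev subspace of C(K, ℂ) if and only if every non-zero f ∈ V has at most n − 1 zeros, i.e., the set {t ∈ K : f(t) = 0} has at most n − 1 elements. -/
open Set

noncomputable section HaarAux
set_option linter.unusedSectionVars false
set_option maxHeartbeats 1000000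

variable {K : Type*} [TopologicalSpace K] [CompactSpace K] [T2Space K]

def haarEval (V : Submodule ℂ C(K, ℂ)) (S : Finset K) : ↥V →ₗ[ℂ] ({x // x ∈ S} → ℂ) where
  toFun v i := (v : C(K, ℂ)) (i : K)
  map_add' u v := by ext i; simp
  map_smul' c v := by ext i; simp

lemma haar_extend (n : ℕ) (V : Submodule ℂ C(K, ℂ)) [FiniteDimensional ℂ V]
    (hdim : Module.finrank ℂ V = n) (S : Finset K) (hS : S.card ≤ n) :
    ∃ T : Finset K, S ⊆ T ∧ T.card = n := by
  by_cases hK : Infinite K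
  · exact Infinite.exists_superset_card_eq S n hS
  · have : Finite K := not_infinite_iff_finite.mp hK
    have : Fintype K := Fintype.ofFinite K
    have hinj : Function.Injective
        ((ContinuousMap.coeFnLinearMap ℂ (M := ℂ)).comp V.subtype) := by
      intro a b hab
      exact Subtype.ext (DFunLike.coe_injective hab)
    have hle : Module.finrank ℂ V ≤ Module.finrank ℂ (K → ℂ) :=
      LinearMap.finrank_le_finrank_of_injective hinj
    rw [hdim, Module.finrank_pi] at hle
    obtain ⟨T, hT1, hT2, hT3⟩ := Finset.exists_subsuperset_card_eq (Finset.subset_univ S) hS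
      (by simpa [Finset.card_univ] using hle)
    exact ⟨T, hT1, hT3⟩

lemma haar_eval_bijective (n : ℕ) (V : Submodule ℂ C(K, ℂ)) [FiniteDimensional ℂ V]
    (hdim : Module.finrank ℂ V = n)
    (hH : ∀ f ∈ V, f ≠ 0 → ({t : K | f t = 0}.Finite ∧ {t : K | f t = 0}.ncard ≤ n - 1))
    (hn : 1 ≤ n) (S : Finset K) (hS : S.card = n) :
    Function.Bijective (haarEval V S) := by
  have hrank : Module.finrank ℂ V = Module.finrank ℂ ({x // x ∈ S} → ℂ) := by
    rw [hdim, Module.finrank_pi, Fintype.card_coe, hS]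
  rw [Function.Bijective, ← LinearMap.injective_iff_surjective_of_finrank_eq_finrank hrank,
    and_self]
  rw [← LinearMap.ker_eq_bot, Submodule.eq_bot_iff]
  rintro ⟨v, hv⟩ hker
  have hvS : ∀ t ∈ S, v t = 0 := by
    intro t ht
    have := congrFun hker ⟨t, ht⟩
    simpa [haarEval] using this
  ext1
  simp only [ZeroMemClass.coe_zero]
  by_contra hv0
  obtain ⟨hfin, hcard⟩ := hH v hv hv0
  have hsub : (S : Set K) ⊆ {t : K | v t = 0} := fun t ht => hvS t ht
  have : n ≤ {t : K | v t = 0}.ncard := by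
    calc n = (S : Set K).ncard := by rw [Set.ncard_coe_finset, hS]
    _ ≤ _ := Set.ncard_le_ncard hsub hfin
  omega

/-- Interpolation: any function can be matched on ≤ n points by an element of V. -/
lemma haar_interp (n : ℕ) (V : Submodule ℂ C(K, ℂ)) [FiniteDimensional ℂ V]
    (hdim : Module.finrank ℂ V = n)
    (hH : ∀ f ∈ V, f ≠ 0 → ({t : K | f t = 0}.Finite ∧ {t : K | f t = 0}.ncard ≤ n - 1))
    (hn : 1 ≤ n) (S : Finset K) (hS : S.card ≤ n) (φ : K → ℂ) :
    ∃ w ∈ V, ∀ t ∈ S, w t = φ t := by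
  obtain ⟨T, hST, hT⟩ := haar_extend n V hdim S hS
  obtain ⟨-, hsurj⟩ := haar_eval_bijective n V hdim hH hn T hT
  obtain ⟨w, hw⟩ := hsurj (fun i => φ i)
  refine ⟨w, w.2, fun t ht => ?_⟩
  have := congrFun hw ⟨t, hST ht⟩
  simpa [haarEval] using this


lemma haar_norm_attained [Nonempty K] (F : C(K, ℂ)) :
    ∃ t0 : K, ‖F‖ = ‖F t0‖ ∧ ∀ t, ‖F t‖ ≤ ‖F t0‖ := by
  obtain ⟨t0, -, hmax'⟩ := isCompact_univ.exists_isMaxOn univ_nonempty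
    ((continuous_norm.comp F.continuous).continuousOn : ContinuousOn (fun t => ‖F t‖) univ)
  have hmax : ∀ t : K, ‖F t‖ ≤ ‖F t0‖ := fun t => hmax' (mem_univ t)
  exact ⟨t0, le_antisymm ((ContinuousMap.norm_le F (norm_nonneg _)).mpr
    (fun t => hmax t)) (F.norm_coe_le_norm t0), hmax⟩

lemma haar_exists_best (V : Submodule ℂ C(K, ℂ)) [FiniteDimensional ℂ V] (g : C(K, ℂ)) :
    ∃ v : ↥V, ∀ w : ↥V, ‖g - ↑v‖ ≤ ‖g - ↑w‖ := by
  have : ProperSpace ↥V := FiniteDimensional.proper ℂ ↥V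
  have hcont : Continuous fun v : ↥V => ‖g - ↑v‖ :=
    (continuous_const.sub continuous_subtype_val).norm
  have htend : Filter.Tendsto (fun v : ↥V => ‖g - ↑v‖) (Filter.cocompact ↥V) Filter.atTop := by
    refine Filter.tendsto_atTop_mono (fun v => ?_)
      (Filter.tendsto_atTop_add_const_right _ (-‖g‖) tendsto_norm_cocompact_atTop)
    have h1 : ‖(v : C(K, ℂ))‖ - ‖g‖ ≤ ‖(v : C(K, ℂ)) - g‖ := norm_sub_norm_le _ _
    rw [norm_sub_rev] at h1
    show ‖v‖ + -‖g‖ ≤ ‖g - ↑v‖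
    have h2 : ‖v‖ = ‖(v : C(K, ℂ))‖ := rfl
    linarith
  exact hcont.exists_forall_le htend

lemma haar_unique [Nonempty K] (n : ℕ) (hn : 1 ≤ n) (V : Submodule ℂ C(K, ℂ))
    [FiniteDimensional ℂ V] (hdim : Module.finrank ℂ V = n)
    (hH : ∀ f ∈ V, f ≠ 0 → ({t : K | f t = 0}.Finite ∧ {t : K | f t = 0}.ncard ≤ n - 1))
    (g v1 v2 : C(K, ℂ))
    (h1 : v1 ∈ V ∧ ∀ w ∈ V, ‖g - v1‖ ≤ ‖g - w‖)
    (h2 : v2 ∈ V ∧ ∀ w ∈ V, ‖g - v2‖ ≤ ‖g - w‖) : v1 = v2 := by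
  by_contra hne
  set d : ℝ := ‖g - v1‖ with hd
  have hd2 : ‖g - v2‖ = d := le_antisymm (h2.2 v1 h1.1) (h1.2 v2 h2.1)
  have hd0 : 0 < d := by
    rcases (norm_nonneg (g - v1)).eq_or_lt with h | h
    · exact absurd ((sub_eq_zero.mp (norm_eq_zero.mp (hd ▸ h.symm))).symm.trans
        (sub_eq_zero.mp (norm_eq_zero.mp (hd2.trans (hd ▸ h.symm))))) hne
    · exact h
  set v : C(K, ℂ) := (2⁻¹ : ℂ) • (v1 + v2) with hv
  have hvV : v ∈ V := V.smul_mem _ (V.add_mem h1.1 h2.1)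
  set F : C(K, ℂ) := g - v with hF
  have hFt : ∀ t, F t = (2⁻¹ : ℂ) * ((g t - v1 t) + (g t - v2 t)) := by
    intro t; simp [hF, hv]; ring
  -- pointwise bounds
  have hb1 : ∀ t, ‖g t - v1 t‖ ≤ d := fun t => (ContinuousMap.norm_coe_le_norm (g - v1) t)
  have hb2 : ∀ t, ‖g t - v2 t‖ ≤ d := fun t => hd2 ▸ (ContinuousMap.norm_coe_le_norm (g - v2) t)
  have hFnorm : ‖F‖ = d := by
    refine le_antisymm ((ContinuousMap.norm_le F hd0.le).mpr (fun t => ?_)) (h1.2 v hvV)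
    rw [hFt t]
    calc ‖(2⁻¹ : ℂ) * ((g t - v1 t) + (g t - v2 t))‖
        = 2⁻¹ * ‖(g t - v1 t) + (g t - v2 t)‖ := by
          rw [norm_mul]; norm_num
      _ ≤ 2⁻¹ * (‖g t - v1 t‖ + ‖g t - v2 t‖) := by
          gcongr; exact norm_add_le _ _
      _ ≤ 2⁻¹ * (d + d) := by gcongr <;> [exact hb1 t; exact hb2 t]
      _ = d := by ring
  set E : Set K := {t | ‖F t‖ = d} with hE
  -- On E, g - v1 and g - v2 agree
  have hEeq : ∀ t ∈ E, v1 t = v2 t := by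
    intro t ht
    have habd : ‖(g t - v1 t) + (g t - v2 t)‖ = 2 * d := by
      have : ‖F t‖ = d := ht
      rw [hFt t, norm_mul] at this
      have h2' : ‖(2⁻¹ : ℂ)‖ = (2⁻¹ : ℝ) := by norm_num
      rw [h2'] at this; linarith
    have hpar := parallelogram_law_with_norm ℂ (g t - v1 t) (g t - v2 t)
    have hdiff : ‖(g t - v1 t) - (g t - v2 t)‖ = 0 := by
      nlinarith [norm_nonneg ((g t - v1 t) - (g t - v2 t)), hb1 t, hb2 t,
        norm_nonneg (g t - v1 t), norm_nonneg (g t - v2 t)]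
    have := norm_eq_zero.mp hdiff
    have : v2 t = v1 t := by
      have h' : (g t - v1 t) - (g t - v2 t) = v2 t - v1 t := by ring
      rw [h'] at this; exact sub_eq_zero.mp this
    exact this.symm
  -- E is finite with at most n-1 elements
  have huV : v1 - v2 ∈ V := V.sub_mem h1.1 h2.1
  have hune : v1 - v2 ≠ 0 := sub_ne_zero.mpr hne
  obtain ⟨hZfin, hZcard⟩ := hH _ huV hune
  have hEZ : E ⊆ {t : K | (v1 - v2) t = 0} := by
    intro t ht; simp only [mem_setOf_eq, ContinuousMap.sub_apply]
    rw [hEeq t ht]; ring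
  have hEfin : E.Finite := hZfin.subset hEZ
  have hEcard : E.ncard ≤ n - 1 := le_trans (Set.ncard_le_ncard hEZ hZfin) hZcard
  -- interpolate F on E
  obtain ⟨w, hwV, hwE⟩ := haar_interp n V hdim hH hn hEfin.toFinset
    (by rw [← Set.ncard_eq_toFinset_card E hEfin]; omega) (fun t => F t)
  have hwE' : ∀ t ∈ E, w t = F t := fun t ht => hwE t (hEfin.mem_toFinset.mpr ht)
  -- E is nonempty, w ≠ 0 on it
  obtain ⟨t0, hFt0, -⟩ := haar_norm_attained F
  have ht0E : t0 ∈ E := by rw [hE, mem_setOf_eq, ← hFt0, hFnorm]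
  have hwpos : 0 < ‖w‖ := by
    have : ‖w t0‖ = d := by rw [hwE' t0 ht0E, ← hFt0, hFnorm]
    have := ContinuousMap.norm_coe_le_norm w t0
    linarith
  set U : Set K := {t | ‖F t - w t‖ < d} with hU
  have hcontFw : Continuous fun t => ‖F t - w t‖ := (F.continuous.sub w.continuous).norm
  have hUopen : IsOpen U := isOpen_lt hcontFw continuous_const
  have hEU : E ⊆ U := by
    intro t ht
    rw [hU, mem_setOf_eq, hwE' t ht]
    simpa using hd0
  -- choose ε
  obtain ⟨ε, hε0, hε1, hεb⟩ : ∃ ε : ℝ, 0 < ε ∧ ε < 1 ∧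
      ∀ t, t ∉ U → ‖F t‖ + ε * ‖w‖ < d := by
    by_cases hne' : (Uᶜ : Set K).Nonempty
    · have hcomp : IsCompact (Uᶜ : Set K) := hUopen.isClosed_compl.isCompact
      obtain ⟨t1, ht1, hmax⟩ := hcomp.exists_isMaxOn hne'
        ((continuous_norm.comp F.continuous).continuousOn)
      have hd' : ‖F t1‖ < d := by
        rcases lt_or_eq_of_le (hFnorm ▸ ContinuousMap.norm_coe_le_norm F t1) with h | h
        · exact h
        · exact absurd (hEU h) ht1
      refine ⟨min 2⁻¹ ((d - ‖F t1‖) / (2 * ‖w‖)), lt_min (by norm_num)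
        (div_pos (by linarith) (by linarith)), lt_of_le_of_lt (min_le_left _ _) (by norm_num),
        fun t ht => ?_⟩
      have hFb : ‖F t‖ ≤ ‖F t1‖ := hmax ht
      have hεw : min 2⁻¹ ((d - ‖F t1‖) / (2 * ‖w‖)) * ‖w‖ ≤ (d - ‖F t1‖) / 2 := by
        have := min_le_right 2⁻¹ ((d - ‖F t1‖) / (2 * ‖w‖))
        calc min 2⁻¹ ((d - ‖F t1‖) / (2 * ‖w‖)) * ‖w‖
            ≤ ((d - ‖F t1‖) / (2 * ‖w‖)) * ‖w‖ := by gcongr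
          _ = (d - ‖F t1‖) / 2 := by field_simp
      linarith
    · exact ⟨2⁻¹, by norm_num, by norm_num,
        fun t ht => absurd ⟨t, ht⟩ hne'⟩
  -- the improved approximation
  set v' : C(K, ℂ) := v + (ε : ℂ) • w with hv'
  have hv'V : v' ∈ V := V.add_mem hvV (V.smul_mem _ hwV)
  have hgv' : g - v' = F - (ε : ℂ) • w := by
    rw [hv', hF]; ring
  obtain ⟨t2, hGt2, -⟩ := haar_norm_attained (F - (ε : ℂ) • w)
  have hGapp : (F - (ε : ℂ) • w) t2 = F t2 - (ε : ℂ) * w t2 := by simp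
  have hεnorm : ‖(ε : ℂ)‖ = ε := by
    rw [Complex.norm_real, Real.norm_eq_abs, abs_of_pos hε0]
  have hkey : ‖F t2 - (ε : ℂ) * w t2‖ < d := by
    by_cases ht2 : t2 ∈ U
    · have hlt : ‖F t2 - w t2‖ < d := ht2
      have hsplit : F t2 - (ε : ℂ) * w t2 =
          ((1 - ε : ℝ) : ℂ) * F t2 + (ε : ℂ) * (F t2 - w t2) := by
        push_cast; ring
      calc ‖F t2 - (ε : ℂ) * w t2‖
          ≤ ‖((1 - ε : ℝ) : ℂ) * F t2‖ + ‖(ε : ℂ) * (F t2 - w t2)‖ := by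
            rw [hsplit]; exact norm_add_le _ _
        _ = (1 - ε) * ‖F t2‖ + ε * ‖F t2 - w t2‖ := by
            rw [norm_mul, norm_mul, hεnorm, Complex.norm_real, Real.norm_eq_abs,
              abs_of_pos (by linarith)]
        _ < d := by
            have := hFnorm ▸ ContinuousMap.norm_coe_le_norm F t2
            nlinarith
    · have := hεb t2 ht2
      calc ‖F t2 - (ε : ℂ) * w t2‖ ≤ ‖F t2‖ + ‖(ε : ℂ) * w t2‖ := norm_sub_le _ _
        _ = ‖F t2‖ + ε * ‖w t2‖ := by rw [norm_mul, hεnorm]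
        _ ≤ ‖F t2‖ + ε * ‖w‖ := by gcongr; exact ContinuousMap.norm_coe_le_norm w t2
        _ < d := this
  have : d ≤ ‖g - v'‖ := h1.2 v' hv'V
  rw [hgv', hGt2, hGapp] at this
  linarith

lemma haar_necessary (n : ℕ) (hn : 1 ≤ n) (V : Submodule ℂ C(K, ℂ))
    [FiniteDimensional ℂ V] (hdim : Module.finrank ℂ V = n)
    (hCheb : ∀ g : C(K, ℂ), ∃! v : C(K, ℂ), v ∈ V ∧ ∀ w ∈ V, ‖g - v‖ ≤ ‖g - w‖)
    (f : C(K, ℂ)) (hfV : f ∈ V) (hf0 : f ≠ 0) :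
    {t : K | f t = 0}.Finite ∧ {t : K | f t = 0}.ncard ≤ n - 1 := by
  classical
  by_contra hcon
  set Z : Set K := {t : K | f t = 0} with hZ
  -- find n distinct zeros
  obtain ⟨S, hSZ, hScard⟩ : ∃ S : Finset K, (↑S : Set K) ⊆ Z ∧ S.card = n := by
    by_cases hZf : Z.Finite
    · have hcard : n ≤ hZf.toFinset.card := by
        rw [← Set.ncard_eq_toFinset_card Z hZf]
        by_contra h'
        exact hcon ⟨hZf, by omega⟩
      obtain ⟨T, hT, hTcard⟩ := Finset.exists_subset_card_eq hcard
      exact ⟨T, fun t ht => (hZf.mem_toFinset.mp (hT ht)), hTcard⟩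
    · exact Set.Infinite.exists_subset_card_eq hZf n
  -- the evaluation map is not surjective
  have hker : haarEval V S ⟨f, hfV⟩ = 0 := by
    ext i; exact hSZ i.2
  have hnotinj : ¬ Function.Injective (haarEval V S) := by
    intro hinj
    have h0 : (⟨f, hfV⟩ : ↥V) = 0 := hinj (by rw [hker]; exact (map_zero _).symm)
    exact hf0 (by simpa using congrArg Subtype.val h0)
  have hrank : Module.finrank ℂ ↥V = Module.finrank ℂ ({x // x ∈ S} → ℂ) := by
    rw [hdim, Module.finrank_pi, Fintype.card_coe, hScard]
  have hlt : LinearMap.range (haarEval V S) < ⊤ :=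
    lt_top_iff_ne_top.mpr (fun htop => hnotinj
      ((LinearMap.injective_iff_surjective_of_finrank_eq_finrank hrank).mpr
        (LinearMap.range_eq_top.mp htop)))
  -- a nonzero functional annihilating the range
  obtain ⟨φ, hφ0, hφbot⟩ :=
    Submodule.exists_dual_map_eq_bot_of_lt_top hlt inferInstance
  have hφv : ∀ v : ↥V, φ (haarEval V S v) = 0 := by
    intro v
    have hmem : φ (haarEval V S v) ∈ (LinearMap.range (haarEval V S)).map φ :=
      ⟨_, ⟨v, rfl⟩, rfl⟩
    rw [hφbot] at hmem
    simpa using hmem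
  set c : {x // x ∈ S} → ℂ := fun i => φ (fun j => if i = j then 1 else 0) with hc
  have hφsum : ∀ x : {x // x ∈ S} → ℂ, φ x = ∑ i, x i * c i := by
    intro x
    rw [LinearMap.pi_apply_eq_sum_univ φ x]
    simp [hc, smul_eq_mul]
  have hcne : ∃ i, c i ≠ 0 := by
    by_contra hall
    push_neg at hall
    refine hφ0 (LinearMap.ext fun x => ?_)
    rw [hφsum]
    simp [hall]
  set α : ℝ := ∑ i, ‖c i‖ with hα
  have hαpos : 0 < α := by
    obtain ⟨i0, hi0⟩ := hcne
    exact Finset.sum_pos' (fun i _ => norm_nonneg _)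
      ⟨i0, Finset.mem_univ _, norm_pos_iff.mpr hi0⟩
  set σ : {x // x ∈ S} → ℂ := fun i =>
    if c i = 0 then 1 else (starRingEnd ℂ) (c i) / (‖c i‖ : ℂ) with hσ
  have hσnorm : ∀ i, ‖σ i‖ = 1 := by
    intro i
    rw [hσ]
    by_cases hci : c i = 0
    · simp [hci]
    · have h1 : ‖c i‖ ≠ 0 := norm_ne_zero_iff.mpr hci
      simp only [if_neg hci, norm_div, RCLike.norm_conj, Complex.norm_real,
        Real.norm_eq_abs, abs_of_nonneg (norm_nonneg _)]
      exact div_self h1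
  have hσc : ∀ i, c i * σ i = (‖c i‖ : ℂ) := by
    intro i
    by_cases hci : c i = 0
    · simp [hσ, hci]
    · have h1 : (‖c i‖ : ℂ) ≠ 0 := by
        simpa using norm_ne_zero_iff.mpr hci
      simp only [hσ, if_neg hci]
      rw [mul_div_assoc', Complex.mul_conj, Complex.normSq_eq_norm_sq]
      push_cast
      rw [sq, mul_div_assoc, div_self h1, mul_one]
  -- Urysohn bump functions
  have hψex : ∀ i : {x // x ∈ S}, ∃ ψ : C(K, ℝ),
      (∀ t ∈ S, t ≠ ↑i → ψ t = 0) ∧ ψ ↑i = 1 ∧ ∀ x, ψ x ∈ Icc (0:ℝ) 1 := by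
    intro i
    have hc1 : IsClosed (↑(S.erase ↑i) : Set K) := (S.erase ↑i).finite_toSet.isClosed
    have hc2 : IsClosed ({(↑i : K)} : Set K) := isClosed_singleton
    have hdisj : Disjoint (↑(S.erase ↑i) : Set K) ({(↑i : K)} : Set K) := by
      simp [Set.disjoint_singleton_right]
    obtain ⟨ψ, hψ0, hψ1, hψI⟩ := exists_continuous_zero_one_of_isClosed hc1 hc2 hdisj
    refine ⟨ψ, fun t ht hti => ?_, by simpa using hψ1 rfl, hψI⟩
    have htmem : t ∈ (↑(S.erase ↑i) : Set K) := by
      simp only [Finset.coe_erase, Set.mem_diff, Set.mem_singleton_iff]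
      exact ⟨ht, hti⟩
    simpa using hψ0 htmem
  choose ψ hψ0 hψ1 hψI using hψex
  set h0 : C(K, ℂ) := ⟨fun t => ∑ i : {x // x ∈ S}, σ i * ((ψ i t : ℝ) : ℂ),
    continuous_finset_sum _ fun i _ => continuous_const.mul
      (Complex.continuous_ofReal.comp (ψ i).continuous)⟩ with hh0
  have hh0S : ∀ j : {x // x ∈ S}, h0 ↑j = σ j := by
    intro j
    show (∑ i : {x // x ∈ S}, σ i * ((ψ i ↑j : ℝ) : ℂ)) = σ j
    rw [Finset.sum_eq_single j]
    · rw [hψ1 j]; simp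
    · intro i _ hij
      rw [hψ0 i ↑j j.2 (fun h => hij (Subtype.ext h).symm)]
      simp
    · intro h; exact absurd (Finset.mem_univ j) h
  have hmaxpos : ∀ t, (0:ℝ) < max 1 ‖h0 t‖ := fun t => lt_of_lt_of_le one_pos (le_max_left _ _)
  set g0 : C(K, ℂ) := ⟨fun t => h0 t / ((max 1 ‖h0 t‖ : ℝ) : ℂ),
    Continuous.div h0.continuous
      (Complex.continuous_ofReal.comp (continuous_const.max h0.continuous.norm))
      (fun t => Complex.ofReal_ne_zero.mpr (ne_of_gt (hmaxpos t)))⟩ with hg0def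
  have hg0le : ∀ t, ‖g0 t‖ ≤ 1 := by
    intro t
    simp only [hg0def, ContinuousMap.coe_mk]
    rw [norm_div, Complex.norm_real, Real.norm_eq_abs, abs_of_pos (hmaxpos t),
      div_le_one (hmaxpos t)]
    exact le_max_right _ _
  have hg0S : ∀ j : {x // x ∈ S}, g0 ↑j = σ j := by
    intro j
    simp only [hg0def, ContinuousMap.coe_mk]
    rw [hh0S j, hσnorm j]
    norm_num
  set q : C(K, ℂ) := ⟨fun t => g0 t * ((1 - min 1 ‖f t‖ : ℝ) : ℂ),
    g0.continuous.mul (Complex.continuous_ofReal.comp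
      (continuous_const.sub (continuous_const.min f.continuous.norm)))⟩ with hqdef
  have hmin0 : ∀ t, 0 ≤ min 1 ‖f t‖ := fun t => le_min one_pos.le (norm_nonneg _)
  have hmin1 : ∀ t, min 1 ‖f t‖ ≤ 1 := fun t => min_le_left _ _
  have hq1 : ∀ t, ‖q t‖ ≤ 1 - min 1 ‖f t‖ := by
    intro t
    simp only [hqdef, ContinuousMap.coe_mk]
    rw [norm_mul, Complex.norm_real, Real.norm_eq_abs, abs_of_nonneg (by linarith [hmin1 t])]
    calc ‖g0 t‖ * (1 - min 1 ‖f t‖) ≤ 1 * (1 - min 1 ‖f t‖) :=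
        mul_le_mul_of_nonneg_right (hg0le t) (by linarith [hmin1 t])
      _ = _ := one_mul _
  have hqS : ∀ j : {x // x ∈ S}, q ↑j = σ j := by
    intro j
    have hfj : f ↑j = 0 := hSZ j.2
    simp only [hqdef, ContinuousMap.coe_mk]
    rw [hfj]
    simp [hg0S j]
  have hlow : ∀ w ∈ V, (1:ℝ) ≤ ‖q - w‖ := by
    intro w hw
    have hφw : (∑ i : {x // x ∈ S}, (w : C(K,ℂ)) ↑i * c i) = 0 := by
      have h := hφv ⟨w, hw⟩
      rw [hφsum] at h
      simpa [haarEval] using h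
    have hqsum : (∑ i : {x // x ∈ S}, q ↑i * c i) = ((α : ℝ) : ℂ) := by
      rw [hα]
      push_cast
      refine Finset.sum_congr rfl fun i _ => ?_
      rw [hqS i, mul_comm, hσc i]
    have hkey : (α : ℝ) ≤ ‖q - w‖ * α := by
      have hsum : ∑ i : {x // x ∈ S}, (q ↑i - w ↑i) * c i = ((α:ℝ) : ℂ) := by
        simp only [sub_mul, Finset.sum_sub_distrib]
        rw [hqsum, hφw, sub_zero]
      calc α = ‖∑ i : {x // x ∈ S}, (q ↑i - w ↑i) * c i‖ := by
            rw [hsum, Complex.norm_real, Real.norm_eq_abs, abs_of_pos hαpos]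
        _ ≤ ∑ i : {x // x ∈ S}, ‖(q ↑i - w ↑i) * c i‖ := norm_sum_le _ _
        _ = ∑ i : {x // x ∈ S}, ‖q ↑i - w ↑i‖ * ‖c i‖ := by simp [norm_mul]
        _ ≤ ∑ i : {x // x ∈ S}, ‖q - w‖ * ‖c i‖ := by
            refine Finset.sum_le_sum fun i _ => ?_
            have h := ContinuousMap.norm_coe_le_norm (q - w) ↑i
            simp only [ContinuousMap.sub_apply] at h
            exact mul_le_mul_of_nonneg_right h (norm_nonneg _)
        _ = ‖q - w‖ * α := by rw [hα, Finset.mul_sum]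
    nlinarith
  have hqnorm : ‖q‖ ≤ 1 := (ContinuousMap.norm_le q one_pos.le).mpr
    fun t => le_trans (hq1 t) (by linarith [hmin0 t])
  set ε : ℝ := min 1 (1 / ‖f‖) with hε
  have hfpos : 0 < ‖f‖ := norm_pos_iff.mpr hf0
  have hεpos : 0 < ε := lt_min one_pos (by positivity)
  have hε1 : ε ≤ 1 := min_le_left _ _
  have hεf : ∀ t, ‖q t - (ε:ℂ) * f t‖ ≤ 1 := by
    intro t
    have hb := hq1 t
    have h2 : ‖(ε:ℂ) * f t‖ = ε * ‖f t‖ := by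
      rw [norm_mul, Complex.norm_real, Real.norm_eq_abs, abs_of_pos hεpos]
    have h3 : ‖f t‖ ≤ ‖f‖ := f.norm_coe_le_norm t
    have h4 : ‖q t - (ε:ℂ)*f t‖ ≤ ‖q t‖ + ε * ‖f t‖ := by
      calc ‖q t - (ε:ℂ)*f t‖ ≤ ‖q t‖ + ‖(ε:ℂ)*f t‖ := norm_sub_le _ _
        _ = ‖q t‖ + ε * ‖f t‖ := by rw [h2]
    rcases le_or_gt ‖f t‖ 1 with hft | hft
    · have hm : min 1 ‖f t‖ = ‖f t‖ := min_eq_right hft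
      nlinarith [norm_nonneg (f t)]
    · have hm : min 1 ‖f t‖ = 1 := min_eq_left hft.le
      have h5 : ε * ‖f t‖ ≤ 1 := by
        have h6 : ε ≤ 1 / ‖f‖ := min_le_right _ _
        calc ε * ‖f t‖ ≤ (1/‖f‖) * ‖f‖ :=
            mul_le_mul h6 h3 (norm_nonneg _) (by positivity)
          _ = 1 := by field_simp
      nlinarith
  have hbest0 : (0:C(K,ℂ)) ∈ V ∧ ∀ w ∈ V, ‖q - 0‖ ≤ ‖q - w‖ :=
    ⟨V.zero_mem, fun w hw => by rw [sub_zero]; exact le_trans hqnorm (hlow w hw)⟩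
  have hbestε : ((ε:ℂ) • f) ∈ V ∧ ∀ w ∈ V, ‖q - (ε:ℂ) • f‖ ≤ ‖q - w‖ := by
    refine ⟨V.smul_mem _ hfV, fun w hw => ?_⟩
    refine le_trans ?_ (hlow w hw)
    refine (ContinuousMap.norm_le _ one_pos.le).mpr fun t => ?_
    simpa [smul_eq_mul] using hεf t
  obtain ⟨v, -, huniq⟩ := hCheb q
  have h00 := huniq 0 hbest0
  have hεε := huniq _ hbestε
  have heq : ((ε:ℂ) • f : C(K,ℂ)) = 0 := hεε.trans h00.symm
  rcases smul_eq_zero.mp heq with h | h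
  · exact Complex.ofReal_ne_zero.mpr hεpos.ne' h
  · exact hf0 h

end HaarAux

/-- (Haar) An `n`-dimensional subspace `V` of `C(K, ℂ)` is a Chebyshev subspace of
`C(K, ℂ)` iff every non-zero `f ∈ V` has at most `n - 1` zeros. -/
theorem haar_chebyshev_iff_zeros
    {K : Type*} [TopologicalSpace K] [CompactSpace K] [T2Space K]
    (n : ℕ) (hn : 1 ≤ n) (V : Submodule ℂ C(K, ℂ))
    [FiniteDimensional ℂ V] (hdim : Module.finrank ℂ V = n) :
    (∀ g : C(K, ℂ), ∃! v : C(K, ℂ), v ∈ V ∧ ∀ w ∈ V, ‖g - v‖ ≤ ‖g - w‖) ↔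
    (∀ f ∈ V, f ≠ 0 →
      ({t : K | f t = 0}.Finite ∧ {t : K | f t = 0}.ncard ≤ n - 1)) := by
  constructor
  · intro hCheb f hfV hf0
    exact haar_necessary n hn V hdim hCheb f hfV hf0
  · intro hH g
    have hK : Nonempty K := by
      obtain ⟨T, -, hT⟩ := haar_extend n V hdim ∅ (by simp)
      have hTne : T.Nonempty := Finset.card_pos.mp (by omega)
      exact ⟨hTne.choose⟩
    obtain ⟨v, hbest⟩ := haar_exists_best V g
    refine ⟨↑v, ⟨v.2, fun w hw => hbest ⟨w, hw⟩⟩, fun y hy => ?_⟩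
    exact haar_unique n hn V hdim hH g y ↑v hy ⟨v.2, fun w hw => hbest ⟨w, hw⟩⟩
end

section
/- (Minimum covering sphere) Let E be a complex Hilbert space and let S be a non-empty finite subset of E. Then there exists a unique point c ∈ E minimizing the maximum distance to S, i.e., a unique c ∈ E such that max_{p ∈ S} ‖p − c‖ ≤ max_{p ∈ S} ‖p − y‖ for every y ∈ E. -/
set_option maxHeartbeats 1000000

/-- (Minimum covering sphere) For every non-empty finite subset `S` of a complex Hilbert
space `E`, there is a unique point `c` minimizing the maximum distance to `S`. -/
theorem minimum_covering_sphere
    {E : Type*} [NormedAddCommGroup E] [InnerProductSpace ℂ E] [CompleteSpace E]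
    (S : Finset E) (hS : S.Nonempty) :
    ∃! c : E, ∀ y : E,
      S.sup' hS (fun p => ‖p - c‖) ≤ S.sup' hS (fun p => ‖p - y‖) := by
  letI : InnerProductSpace ℝ E := InnerProductSpace.rclikeToReal ℂ E
  set f : E → ℝ := fun y => S.sup' hS (fun p => ‖p - y‖) with hf
  have hfc : Continuous f :=
    Continuous.finset_sup'_apply hS fun p _ => (continuous_const.sub continuous_id).norm
  set K : Set E := convexHull ℝ (S : Set E) with hK
  have hKconv : Convex ℝ K := convex_convexHull ℝ _
  have hKcomp : IsCompact K := (S.finite_toSet).isCompact_convexHull ℝ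
  have hKne : K.Nonempty := hS.to_set.mono (subset_convexHull ℝ _)
  have hSK : (S : Set E) ⊆ K := subset_convexHull ℝ _
  obtain ⟨c, hcK, hcmin⟩ := hKcomp.exists_isMinOn hKne hfc.continuousOn
  -- c is a global minimizer: given y, project it onto K
  have hglobal : ∀ y : E, f c ≤ f y := by
    intro y
    obtain ⟨v, hvK, hv⟩ := exists_norm_eq_iInf_of_complete_convex hKne
      (hKcomp.isClosed.isComplete) hKconv y
    have hv' := (norm_eq_iInf_iff_real_inner_le_zero hKconv hvK).mp hv
    have hle : f v ≤ f y := by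
      apply Finset.sup'_le
      intro p hp
      have hpK : p ∈ K := hSK hp
      have h1 := hv' p hpK
      have h2 := real_inner_comm (p - v) (y - v)
      have hexp := norm_sub_sq_real (p - v) (y - v)
      have hxy : p - y = (p - v) - (y - v) := by abel
      have key : ‖p - v‖ ≤ ‖p - y‖ := by
        rw [hxy]
        nlinarith [norm_nonneg (p - v), norm_nonneg ((p - v) - (y - v)),
          sq_nonneg ‖y - v‖]
      exact key.trans (Finset.le_sup' (fun q => ‖q - y‖) hp)
    exact le_trans (isMinOn_iff.mp hcmin v hvK) hle
  refine ⟨c, hglobal, ?_⟩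
  intro b hb
  by_contra hne
  have hfb : f b = f c := le_antisymm (hb c) (hglobal b)
  set r := f c with hr
  set m := midpoint ℝ b c with hm
  have hlt : f m < r := by
    obtain ⟨p, hp, hpe⟩ := S.exists_mem_eq_sup' hS (fun p => ‖p - m‖)
    have hfm : f m = ‖p - m‖ := hpe
    rw [hfm]
    have hd : (0:ℝ) < ‖b - c‖ := by
      rw [norm_pos_iff, sub_ne_zero]; exact hne
    have hpar := parallelogram_law_with_norm ℝ (p - b) (p - c)
    have e1 : (p - b) + (p - c) = (2:ℝ) • (p - m) := by
      have h : m + m = b + c := hm ▸ midpoint_add_self ℝ b c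
      rw [two_smul]
      have h2 : (p - m) + (p - m) = p + p - (m + m) := by abel
      rw [h2, h]; abel
    have e2 : (p - b) - (p - c) = c - b := by abel
    rw [e1, e2, norm_smul] at hpar
    have h2 : ‖(2:ℝ)‖ = 2 := by norm_num
    rw [h2] at hpar
    have hb' : ‖p - b‖ ≤ r := hfb ▸ Finset.le_sup' (fun q => ‖q - b‖) hp
    have hc' : ‖p - c‖ ≤ r := Finset.le_sup' (fun q => ‖q - c‖) hp
    have h0 : (0:ℝ) ≤ r := le_trans (norm_nonneg _) hc'
    have hcb : ‖c - b‖ = ‖b - c‖ := norm_sub_rev c b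
    nlinarith [norm_nonneg (p - b), norm_nonneg (p - c), norm_nonneg (p - m)]
  have hbm : f b ≤ f m := hb m
  rw [hfb] at hbm
  exact absurd hbm (not_le.mpr hlt)
end

section
/- Let E be a complex inner product space and let J : E → E be a conjugation, i.e., a conjugate-linear map satisfying J(J(x)) = x and ⟨Jx, Jy⟩ = ⟨y, x⟩ for all x, y ∈ E. Define the spin norm of x ∈ E by N(x) = (‖x‖² + √(‖x‖⁴ − |⟨x, Jx⟩|²))^{1/2}. If η, ξ ∈ E satisfy ⟨η, ξ⟩ = 0 and ⟨η, Jξ⟩ = 0, then N(η + ξ) ≥ N(η), and N(η + ξ) = N(η) if and only if ξ = 0. -/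
open scoped ComplexInnerProductSpace

/-- In a complex inner product space `E` with conjugation `J` and associated spin norm
`N`, if `η ⊥ ξ` and `η ⊥ Jξ`, then `N (η + ξ) ≥ N η`, with equality iff `ξ = 0`. -/
theorem spin_norm_increases_on_orthogonal_sum
    {E : Type*} [NormedAddCommGroup E] [InnerProductSpace ℂ E]
    (J : E →ₗ⋆[ℂ] E)
    (hJinv : ∀ x : E, J (J x) = x)
    (hJinner : ∀ x y : E, ⟪J x, J y⟫ = ⟪y, x⟫)
    (N : E → ℝ)
    (hN : ∀ x : E, N x =
      Real.sqrt (‖x‖ ^ 2 + Real.sqrt (‖x‖ ^ 4 - ‖⟪x, J x⟫‖ ^ 2)))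
    (η ξ : E) (h1 : ⟪η, ξ⟫ = 0) (h2 : ⟪η, J ξ⟫ = 0) :
    N η ≤ N (η + ξ) ∧ (N (η + ξ) = N η ↔ ξ = 0) := by
  -- J preserves norms
  have hJsq : ∀ x : E, ‖J x‖ ^ 2 = ‖x‖ ^ 2 := by
    intro x
    have h := hJinner x x
    rw [inner_self_eq_norm_sq_to_K, inner_self_eq_norm_sq_to_K] at h
    exact_mod_cast congrArg Complex.re h
  -- |⟪x, J x⟫| ≤ ‖x‖ ^ 2
  have habs : ∀ x : E, ‖⟪x, J x⟫‖ ≤ ‖x‖ ^ 2 := by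
    intro x
    have h := norm_inner_le_norm (𝕜 := ℂ) x (J x)
    have hJn : ‖J x‖ = ‖x‖ := by
      have := hJsq x
      nlinarith [norm_nonneg (J x), norm_nonneg x]
    calc ‖⟪x, J x⟫‖ = ‖(⟪x, J x⟫ : ℂ)‖ := rfl
      _ ≤ ‖x‖ * ‖J x‖ := h
      _ = ‖x‖ ^ 2 := by rw [hJn]; ring
  have hξJη : ⟪ξ, J η⟫ = 0 := by
    have h := hJinner (J ξ) η
    rw [hJinv] at h
    rw [h, h2]
  have hsum : ‖η + ξ‖ ^ 2 = ‖η‖ ^ 2 + ‖ξ‖ ^ 2 := by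
    rw [@norm_add_sq ℂ, h1]
    simp
  have hc : ⟪η + ξ, J (η + ξ)⟫ = ⟪η, J η⟫ + ⟪ξ, J ξ⟫ := by
    rw [map_add, inner_add_left, inner_add_right, inner_add_right, h2, hξJη]
    ring
  set A := ‖η‖ ^ 2 with hA
  set B := ‖ξ‖ ^ 2 with hB
  set P := ‖⟪η, J η⟫‖ with hP
  set Q := ‖⟪ξ, J ξ⟫‖ with hQ
  set C := ‖⟪η + ξ, J (η + ξ)⟫‖ with hC
  have hA0 : 0 ≤ A := sq_nonneg _
  have hB0 : 0 ≤ B := sq_nonneg _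
  have hP0 : 0 ≤ P := norm_nonneg _
  have hQ0 : 0 ≤ Q := norm_nonneg _
  have hC0 : 0 ≤ C := norm_nonneg _
  have hPA : P ≤ A := habs η
  have hQB : Q ≤ B := habs ξ
  have hCPQ : C ≤ P + Q := by
    rw [hC, hc]
    exact norm_add_le _ _
  -- rewrite N values
  have hNsum : N (η + ξ) = Real.sqrt ((A + B) + Real.sqrt ((A + B) ^ 2 - C ^ 2)) := by
    rw [hN, show ‖η + ξ‖ ^ 4 = (‖η + ξ‖ ^ 2) ^ 2 by ring, hsum]
  have hNη : N η = Real.sqrt (A + Real.sqrt (A ^ 2 - P ^ 2)) := by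
    rw [hN, show ‖η‖ ^ 4 = (‖η‖ ^ 2) ^ 2 by ring]
  have key : Real.sqrt (A ^ 2 - P ^ 2) ≤ Real.sqrt ((A + B) ^ 2 - C ^ 2) := by
    apply Real.sqrt_le_sqrt
    nlinarith [sq_nonneg (A - P), mul_nonneg hB0 (sub_nonneg.mpr hPA),
      mul_le_mul hCPQ hCPQ hC0 (by linarith), mul_le_mul hQB hQB hQ0 hB0]
  have hle : N η ≤ N (η + ξ) := by
    rw [hNsum, hNη]
    apply Real.sqrt_le_sqrt
    linarith
  refine ⟨hle, ?_, fun h => by rw [h, add_zero]⟩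
  intro heq
  -- from equality, B = 0
  have hinner1 : 0 ≤ A + Real.sqrt (A ^ 2 - P ^ 2) := by positivity
  have hinner2 : 0 ≤ (A + B) + Real.sqrt ((A + B) ^ 2 - C ^ 2) := by positivity
  have hsq : (A + B) + Real.sqrt ((A + B) ^ 2 - C ^ 2)
      = A + Real.sqrt (A ^ 2 - P ^ 2) := by
    have := congrArg (fun t => t ^ 2) (hNsum ▸ hNη ▸ heq)
    simpa [Real.sq_sqrt hinner1, Real.sq_sqrt hinner2] using this
  have hB0' : B = 0 := by linarith
  have : ‖ξ‖ = 0 := by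
    have := hB0'.symm ▸ hB
    nlinarith [norm_nonneg ξ]
  exact norm_eq_zero.mp this
end

section
/- Let E be a complex Hilbert space, let J : E → E be a conjugation (a conjugate-linear map with J(J(x)) = x and ⟨Jx, Jy⟩ = ⟨y, x⟩ for all x, y ∈ E), and define the spin norm N(x) = (‖x‖² + √(‖x‖⁴ − |⟨x, Jx⟩|²))^{1/2}. Let K be a closed linear subspace of E with J(K) ⊆ K, and let P denote the orthogonal projection of E onto K. Then for every x ∈ E, P(x) is the unique element k₀ ∈ K satisfying N(x − k₀) ≤ N(x − k) for all k ∈ K; in particular, K is a Chebyshev subspace of E with respect to the spin norm. -/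
open scoped ComplexInnerProductSpace

/-- Key inequality: if `w ⊥ K` and `m ∈ K` (with `K` invariant under the conjugation `J`),
then the spin norm satisfies `N(w)² + ‖m‖² ≤ N(w+m)²`. -/
lemma spin_key {E : Type*} [NormedAddCommGroup E] [InnerProductSpace ℂ E]
    (J : E →ₗ⋆[ℂ] E)
    (hJinv : ∀ x : E, J (J x) = x)
    (hJinner : ∀ x y : E, ⟪J x, J y⟫ = ⟪y, x⟫)
    (N : E → ℝ)
    (hN : ∀ x : E, N x =
      Real.sqrt (‖x‖ ^ 2 + Real.sqrt (‖x‖ ^ 4 - ‖⟪x, J x⟫‖ ^ 2)))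
    (K : Submodule ℂ E)
    (hJK : ∀ k ∈ K, J k ∈ K)
    (w m : E) (hw : w ∈ Kᗮ) (hm : m ∈ K) :
    N w ^ 2 + ‖m‖ ^ 2 ≤ N (w + m) ^ 2 := by
  -- J is isometric
  have hJnorm : ∀ y : E, ‖J y‖ = ‖y‖ := by
    intro y
    have h := hJinner y y
    have h2 : ‖J y‖ ^ 2 = ‖y‖ ^ 2 := by
      rw [← @inner_self_eq_norm_sq ℂ, ← @inner_self_eq_norm_sq ℂ, h]
    nlinarith [norm_nonneg (J y), norm_nonneg y]
  have habs : ∀ y : E, ‖⟪y, J y⟫‖ ≤ ‖y‖ ^ 2 := by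
    intro y
    have h := norm_inner_le_norm (𝕜 := ℂ) y (J y)
    rw [hJnorm y] at h
    calc ‖⟪y, J y⟫‖ = ‖(⟪y, J y⟫ : ℂ)‖ := rfl
      _ ≤ ‖y‖ * ‖y‖ := h
      _ = ‖y‖ ^ 2 := (sq ‖y‖).symm
  have hNsq : ∀ y : E,
      N y ^ 2 = ‖y‖ ^ 2 + Real.sqrt (‖y‖ ^ 4 - ‖⟪y, J y⟫‖ ^ 2) := by
    intro y
    rw [hN y, Real.sq_sqrt]
    positivity
  -- orthogonality facts
  have hwm : ⟪w, m⟫ = (0 : ℂ) := Submodule.inner_left_of_mem_orthogonal hm hw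
  have hJwK : J w ∈ Kᗮ := by
    rw [Submodule.mem_orthogonal]
    intro u hu
    have h1 : ⟪u, J w⟫ = ⟪w, J u⟫ := by
      conv_lhs => rw [← hJinv u]
      rw [hJinner]
    rw [h1]
    exact Submodule.inner_left_of_mem_orthogonal (hJK u hu) hw
  -- norm of the sum
  have hnormsum : ‖w + m‖ ^ 2 = ‖w‖ ^ 2 + ‖m‖ ^ 2 := by
    have h := @norm_add_sq ℂ _ _ _ _ w m
    rw [hwm] at h
    simpa using h
  -- inner product of the sum with its conjugate
  have hinnersum : ⟪w + m, J (w + m)⟫ = ⟪w, J w⟫ + ⟪m, J m⟫ := by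
    rw [map_add, inner_add_left, inner_add_right, inner_add_right]
    have h1 : ⟪w, J m⟫ = (0 : ℂ) :=
      Submodule.inner_left_of_mem_orthogonal (hJK m hm) hw
    have h2 : ⟪m, J w⟫ = (0 : ℂ) :=
      Submodule.inner_right_of_mem_orthogonal hm hJwK
    rw [h1, h2]
    ring
  -- real arithmetic
  set s := ‖w‖ ^ 2 with hs
  set t := ‖m‖ ^ 2 with ht
  set A := ‖⟪w, J w⟫‖ with hA
  set B := ‖⟪m, J m⟫‖ with hB
  have hAs : A ≤ s := habs w
  have hBt : B ≤ t := habs m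
  have hA0 : 0 ≤ A := norm_nonneg _
  have hB0 : 0 ≤ B := norm_nonneg _
  have hs0 : 0 ≤ s := sq_nonneg _
  have ht0 : 0 ≤ t := sq_nonneg _
  have hCAB : ‖⟪w + m, J (w + m)⟫‖ ≤ A + B := by
    rw [hinnersum]; exact norm_add_le _ _
  set C := ‖⟪w + m, J (w + m)⟫‖ with hC
  have hC0 : 0 ≤ C := norm_nonneg _
  rw [hNsq, hNsq, hnormsum]
  have h4 : ‖w‖ ^ 4 = s ^ 2 := by rw [hs]; ring
  have h4' : ‖w + m‖ ^ 4 = (s + t) ^ 2 := by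
    have : ‖w + m‖ ^ 4 = (‖w + m‖ ^ 2) ^ 2 := by ring
    rw [this, hnormsum]
  rw [h4, h4']
  have hsqrtle : Real.sqrt (s ^ 2 - A ^ 2) ≤ Real.sqrt ((s + t) ^ 2 - C ^ 2) := by
    apply Real.sqrt_le_sqrt
    nlinarith [mul_nonneg ht0 (sub_nonneg.mpr hAs)]
  linarith

/-- Let `E` be a complex Hilbert space with a conjugation `J` and spin norm `N`, and let
`K` be a closed subspace with `J(K) ⊆ K`. Then for each `x ∈ E` the orthogonal projection
`P x` is the unique best approximation of `x` in `K` for the spin norm; in particular `K`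
is a Chebyshev subspace of `E` for the spin norm. -/
theorem conjugation_invariant_subspace_chebyshev_spin_norm
    {E : Type*} [NormedAddCommGroup E] [InnerProductSpace ℂ E] [CompleteSpace E]
    (J : E →ₗ⋆[ℂ] E)
    (hJinv : ∀ x : E, J (J x) = x)
    (hJinner : ∀ x y : E, ⟪J x, J y⟫ = ⟪y, x⟫)
    (N : E → ℝ)
    (hN : ∀ x : E, N x =
      Real.sqrt (‖x‖ ^ 2 + Real.sqrt (‖x‖ ^ 4 - ‖⟪x, J x⟫‖ ^ 2)))
    (K : Submodule ℂ E) (hKclosed : IsClosed (K : Set E))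
    [K.HasOrthogonalProjection]
    (hJK : ∀ k ∈ K, J k ∈ K) :
    ∀ x : E,
      (∀ k ∈ K, N (x - (K.orthogonalProjectionOnto x : E)) ≤ N (x - k)) ∧
      (∀ k₀ ∈ K, (∀ k ∈ K, N (x - k₀) ≤ N (x - k)) →
        k₀ = (K.orthogonalProjectionOnto x : E)) ∧
      (∃! v : E, v ∈ K ∧ ∀ k ∈ K, N (x - v) ≤ N (x - k)) := by
  intro x
  set P : E := (K.orthogonalProjectionOnto x : E) with hP
  have hPK : P ∈ K := (K.orthogonalProjectionOnto x).2
  have hw : x - P ∈ Kᗮ := K.sub_starProjection_mem_orthogonal x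
  have hN0 : ∀ y : E, 0 ≤ N y := fun y => (hN y) ▸ Real.sqrt_nonneg _
  -- best approximation
  have hbest : ∀ k ∈ K, N (x - P) ≤ N (x - k) := by
    intro k hk
    have hm : P - k ∈ K := K.sub_mem hPK hk
    have hdec : x - k = (x - P) + (P - k) := by abel
    have hkey := spin_key J hJinv hJinner N hN K hJK (x - P) (P - k) hw hm
    rw [← hdec] at hkey
    have hsq : N (x - P) ^ 2 ≤ N (x - k) ^ 2 := by nlinarith [sq_nonneg ‖P - k‖]
    nlinarith [hN0 (x - P), hN0 (x - k)]
  -- uniqueness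
  have huniq : ∀ k₀ ∈ K, (∀ k ∈ K, N (x - k₀) ≤ N (x - k)) → k₀ = P := by
    intro k₀ hk₀ hk₀best
    have hm : P - k₀ ∈ K := K.sub_mem hPK hk₀
    have hdec : x - k₀ = (x - P) + (P - k₀) := by abel
    have hkey := spin_key J hJinv hJinner N hN K hJK (x - P) (P - k₀) hw hm
    rw [← hdec] at hkey
    have hle : N (x - k₀) ≤ N (x - P) := hk₀best P hPK
    have hsq : N (x - k₀) ^ 2 ≤ N (x - P) ^ 2 := by
      nlinarith [hN0 (x - k₀), hN0 (x - P)]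
    have hm0 : ‖P - k₀‖ ^ 2 ≤ 0 := by linarith
    have : P - k₀ = 0 := by
      have := sq_nonneg ‖P - k₀‖
      have h0 : ‖P - k₀‖ ^ 2 = 0 := le_antisymm hm0 this
      have : ‖P - k₀‖ = 0 := by nlinarith [norm_nonneg (P - k₀)]
      exact norm_eq_zero.mp this
    exact (sub_eq_zero.mp this).symm
  exact ⟨hbest, huniq, ⟨P, ⟨hPK, hbest⟩,
    fun v ⟨hv, hvb⟩ => huniq v hv hvb⟩⟩
end

section
/- Let n ≥ 1, let H = ℂ² with the Euclidean (Hilbert) norm and orthonormal basis ξ₁ = (1,0), ξ₂ = (0,1), and let X be the ℓ∞-direct sum of n copies of H, i.e., X = {(h₁, …, hₙ) : hᵢ ∈ H} with norm ‖(h₁,…,hₙ)‖ = max_{1 ≤ i ≤ n} ‖hᵢ‖₂. Let V be the two-dimensional subspace of X spanned by e₁ = (ξ₁, …, ξ₁) and e₂ = (ξ₂, …, ξ₂). Then V is a Chebyshev subspace of X: every x ∈ X admits a unique v ∈ V with ‖x − v‖ ≤ ‖x − w‖ for all w ∈ V. -/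
open Metric

private lemma decomp' (h : EuclideanSpace ℂ (Fin 2)) :
    h = h 0 • EuclideanSpace.single (0 : Fin 2) (1 : ℂ)
      + h 1 • EuclideanSpace.single (1 : Fin 2) (1 : ℂ) := by
  ext j
  fin_cases j <;> simp [EuclideanSpace.single_apply]

private lemma span_const' (n : ℕ) (v : Fin n → EuclideanSpace ℂ (Fin 2)) :
    v ∈ Submodule.span ℂ
        ({fun _ => EuclideanSpace.single (0 : Fin 2) (1 : ℂ),
          fun _ => EuclideanSpace.single (1 : Fin 2) (1 : ℂ)} :
          Set (Fin n → EuclideanSpace ℂ (Fin 2))) ↔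
      ∃ h : EuclideanSpace ℂ (Fin 2), v = fun _ => h := by
  constructor
  · intro hv
    induction hv using Submodule.span_induction with
    | mem y hy =>
      rcases hy with h | h
      · exact ⟨_, h⟩
      · exact ⟨_, h⟩
    | zero => exact ⟨0, rfl⟩
    | add a b _ _ ha hb =>
      obtain ⟨h1, rfl⟩ := ha; obtain ⟨h2, rfl⟩ := hb
      exact ⟨h1 + h2, rfl⟩
    | smul c a _ ha =>
      obtain ⟨h1, rfl⟩ := ha
      exact ⟨c • h1, rfl⟩
  · rintro ⟨h, rfl⟩
    have : (fun _ : Fin n => h)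
        = h 0 • (fun _ : Fin n => EuclideanSpace.single (0 : Fin 2) (1 : ℂ))
        + h 1 • (fun _ : Fin n => EuclideanSpace.single (1 : Fin 2) (1 : ℂ)) := by
      funext i
      exact decomp' h
    rw [this]
    exact Submodule.add_mem _
      (Submodule.smul_mem _ _ (Submodule.subset_span (Or.inl rfl)))
      (Submodule.smul_mem _ _ (Submodule.subset_span (Or.inr rfl)))

private lemma midpoint_bound' (a b c : EuclideanSpace ℂ (Fin 2)) (r : ℝ)
    (h1 : ‖a - b‖ ≤ r) (h2 : ‖a - c‖ ≤ r) :
    ‖a - (2 : ℂ)⁻¹ • (b + c)‖ ^ 2 ≤ r ^ 2 - ‖b - c‖ ^ 2 / 4 := by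
  have e1 : a - (2 : ℂ)⁻¹ • (b + c) = (2 : ℂ)⁻¹ • ((a - b) + (a - c)) := by
    rw [smul_add]; module
  have par := parallelogram_law_with_norm ℂ (a - b) (a - c)
  have e2 : (a - b) - (a - c) = -(b - c) := by abel
  rw [e2, norm_neg] at par
  rw [e1, norm_smul]
  have hc : ‖(2 : ℂ)⁻¹‖ = 2⁻¹ := by norm_num
  rw [hc]
  have n1 := norm_nonneg (a - b)
  have n2 := norm_nonneg (a - c)
  nlinarith [norm_nonneg (b - c), norm_nonneg ((a - b) + (a - c))]

/-- The two-dimensional subspace of the `ℓ∞`-sum of `n` copies of `ℓ²(2)` spanned by the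
constant tuples `e₁ = (ξ₁, …, ξ₁)` and `e₂ = (ξ₂, …, ξ₂)` is a Chebyshev subspace. -/
theorem diagonal_hilbert_chebyshev_in_linfty_sum
    (n : ℕ) (hn : 1 ≤ n) :
    ∀ x : Fin n → EuclideanSpace ℂ (Fin 2),
      ∃! v : Fin n → EuclideanSpace ℂ (Fin 2),
        v ∈ Submodule.span ℂ
          ({fun _ => EuclideanSpace.single (0 : Fin 2) (1 : ℂ),
            fun _ => EuclideanSpace.single (1 : Fin 2) (1 : ℂ)} :
            Set (Fin n → EuclideanSpace ℂ (Fin 2))) ∧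
        ∀ w ∈ Submodule.span ℂ
          ({fun _ => EuclideanSpace.single (0 : Fin 2) (1 : ℂ),
            fun _ => EuclideanSpace.single (1 : Fin 2) (1 : ℂ)} :
            Set (Fin n → EuclideanSpace ℂ (Fin 2))),
          ‖x - v‖ ≤ ‖x - w‖ := by
  intro x
  set f : EuclideanSpace ℂ (Fin 2) → ℝ := fun h => ‖x - fun _ => h‖ with hf
  have hcont : Continuous f :=
    (continuous_const.sub (continuous_pi fun _ => continuous_id)).norm
  set R : ℝ := 2 * ‖x‖ + 1 with hR
  have hR0 : (0 : ℝ) ≤ R := by positivity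
  obtain ⟨h₀, h₀mem, hmin⟩ :=
    (isCompact_closedBall (0 : EuclideanSpace ℂ (Fin 2)) R).exists_isMinOn
      ⟨0, mem_closedBall_self hR0⟩ hcont.continuousOn
  have i0 : Fin n := ⟨0, hn⟩
  -- coordinatewise bound: ‖x i - h‖ ≤ f h
  have hcoord : ∀ (h : EuclideanSpace ℂ (Fin 2)) (i : Fin n), ‖x i - h‖ ≤ f h := by
    intro h i
    exact norm_le_pi_norm (x - fun _ => h) i
  -- lower bound
  have flb : ∀ h : EuclideanSpace ℂ (Fin 2), ‖h‖ - ‖x‖ ≤ f h := by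
    intro h
    have h1 : ‖x i0‖ ≤ ‖x‖ := norm_le_pi_norm x i0
    have h2 : ‖h‖ - ‖x i0‖ ≤ ‖x i0 - h‖ := by
      have := norm_sub_norm_le h (x i0)
      calc ‖h‖ - ‖x i0‖ ≤ ‖h - x i0‖ := norm_sub_norm_le h (x i0)
        _ = ‖x i0 - h‖ := norm_sub_rev _ _
    linarith [hcoord h i0]
  have hf0 : f 0 = ‖x‖ := by
    have : (fun _ : Fin n => (0 : EuclideanSpace ℂ (Fin 2)))
        = (0 : Fin n → EuclideanSpace ℂ (Fin 2)) := rfl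
    rw [hf]; simp [this]
  have hglob : ∀ h : EuclideanSpace ℂ (Fin 2), f h₀ ≤ f h := by
    intro h
    by_cases hb : h ∈ closedBall (0 : EuclideanSpace ℂ (Fin 2)) R
    · exact hmin hb
    · have h1 : R < ‖h‖ := by
        simpa [mem_closedBall, dist_zero_right] using hb
      have h2 : f h₀ ≤ f 0 := hmin (mem_closedBall_self hR0)
      have := flb h
      rw [hf0] at h2
      linarith
  refine ⟨fun _ => h₀, ⟨(span_const' n _).mpr ⟨h₀, rfl⟩, ?_⟩, ?_⟩
  · intro w hw
    obtain ⟨h, rfl⟩ := (span_const' n w).mp hw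
    exact hglob h
  · rintro y ⟨hy, hymin⟩
    obtain ⟨h₁, rfl⟩ := (span_const' n y).mp hy
    have hle1 : f h₁ ≤ f h₀ := hymin _ ((span_const' n _).mpr ⟨h₀, rfl⟩)
    have hle2 : f h₀ ≤ f h₁ := hglob h₁
    set r : ℝ := f h₀ with hrdef
    have hr1 : f h₁ = r := le_antisymm hle1 hle2
    have hr0 : 0 ≤ r := norm_nonneg _
    set m : EuclideanSpace ℂ (Fin 2) := (2 : ℂ)⁻¹ • (h₁ + h₀) with hm
    have hrm : r ≤ f m := hr1 ▸ hymin _ ((span_const' n _).mpr ⟨m, rfl⟩)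
    have hkey : ∀ i : Fin n, ‖x i - m‖ ^ 2 ≤ r ^ 2 - ‖h₁ - h₀‖ ^ 2 / 4 := by
      intro i
      exact midpoint_bound' (x i) h₁ h₀ r (hr1 ▸ hcoord h₁ i) (hcoord h₀ i)
    set t : ℝ := r ^ 2 - ‖h₁ - h₀‖ ^ 2 / 4 with ht
    have ht0 : 0 ≤ t := le_trans (sq_nonneg _) (hkey i0)
    have hfm : f m ≤ Real.sqrt t := by
      rw [hf]
      refine (pi_norm_le_iff_of_nonneg (Real.sqrt_nonneg t)).mpr fun i => ?_
      show ‖x i - m‖ ≤ Real.sqrt t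
      rw [Real.le_sqrt (norm_nonneg _) ht0]
      exact hkey i
    have hrt : r ≤ Real.sqrt t := le_trans hrm hfm
    have hr2 : r ^ 2 ≤ t := (Real.le_sqrt hr0 ht0).mp hrt
    have hd2 : ‖h₁ - h₀‖ ^ 2 ≤ 0 := by rw [ht] at hr2; linarith
    have hd : ‖h₁ - h₀‖ = 0 := by
      have := le_antisymm hd2 (sq_nonneg _)
      exact pow_eq_zero_iff (by norm_num) |>.mp this
    have : h₁ = h₀ := sub_eq_zero.mp (norm_eq_zero.mp hd)
    rw [this]
end

section
/- Let n ≥ 1 and consider the space M_{n×2n}(ℂ) of n × 2n complex matrices equipped with the operator norm (the norm as linear operators from ℓ²-ℂ^{2n} to ℓ²-ℂⁿ). Let F be the subspace of all matrices x such that x(i,j) = 0 whenever j ≠ i and j ≠ i + n, and let W be the two-dimensional subspace of F spanned by the matrices A and B defined by A(i,j) = 1 if j = i and 0 otherwise, and B(i,j) = 1 if j = i + n and 0 otherwise. Then W is a Chebyshev subspace of F: every x ∈ F admits a unique w ∈ W with ‖x − w‖ ≤ ‖x − w'‖ for all w' ∈ W. -/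
private lemma csAux (α β c d s : ℝ) (hα : 0 ≤ α) (hβ : 0 ≤ β) (hc : 0 ≤ c) (hd : 0 ≤ d)
    (hs : 0 ≤ s) (h : s ≤ α * c + β * d) : s ^ 2 ≤ (α ^ 2 + β ^ 2) * (c ^ 2 + d ^ 2) := by
  nlinarith [sq_nonneg (α * d - β * c)]

open Finset in
theorem normFormulaAux (n : ℕ) (hn : 1 ≤ n) (y : Matrix (Fin n) (Fin (2*n)) ℂ)
    (hy : ∀ (i : Fin n) (j : Fin (2*n)), (j:ℕ) ≠ (i:ℕ) → (j:ℕ) ≠ (i:ℕ) + n → y i j = 0) :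
    ‖LinearMap.toContinuousLinearMap (Matrix.toEuclideanLin y)‖ =
      Real.sqrt (Finset.univ.sup' (by
        haveI : NeZero n := ⟨by omega⟩
        exact Finset.univ_nonempty) fun i : Fin n =>
        ‖y i ⟨i, by omega⟩‖^2 + ‖y i ⟨(i:ℕ) + n, by omega⟩‖^2) := by
  haveI : NeZero n := ⟨by omega⟩
  set T := LinearMap.toContinuousLinearMap (Matrix.toEuclideanLin y) with hT
  set j1 : Fin n → Fin (2*n) := fun i => ⟨i, by omega⟩ with hj1
  set j2 : Fin n → Fin (2*n) := fun i => ⟨(i:ℕ) + n, by omega⟩ with hj2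
  set Q : Fin n → ℝ := fun i => ‖y i (j1 i)‖^2 + ‖y i (j2 i)‖^2 with hQ
  set S : ℝ := Finset.univ.sup' Finset.univ_nonempty Q with hS
  have hQ0 : ∀ i, 0 ≤ Q i := fun i => by positivity
  have hS0 : 0 ≤ S := le_trans (hQ0 ⟨0, by omega⟩) (Finset.le_sup' Q (Finset.mem_univ _))
  -- coordinates of T v
  have hTv : ∀ (v : EuclideanSpace ℂ (Fin (2*n))) (i : Fin n),
      T v i = y i (j1 i) * v (j1 i) + y i (j2 i) * v (j2 i) := by
    intro v i
    have : T v i = ∑ j, y i j * v j := rfl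
    rw [this]
    have hsub : ∑ j, y i j * v j = ∑ j ∈ ({j1 i, j2 i} : Finset (Fin (2*n))), y i j * v j := by
      refine (Finset.sum_subset (Finset.subset_univ _) ?_).symm
      intro j _ hj
      simp only [Finset.mem_insert, Finset.mem_singleton] at hj
      push_neg at hj
      have h1 : (j:ℕ) ≠ (i:ℕ) := fun h => hj.1 (Fin.ext h)
      have h2 : (j:ℕ) ≠ (i:ℕ) + n := fun h => hj.2 (Fin.ext h)
      rw [hy i j h1 h2, zero_mul]
    rw [hsub, Finset.sum_pair (by
      intro h
      have := congrArg (Fin.val) h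
      simp [hj1, hj2] at this
      omega)]
  -- norm squared of vectors
  have hnorm2 : ∀ (m : ℕ) (u : EuclideanSpace ℂ (Fin m)), ‖u‖^2 = ∑ i, ‖u i‖^2 := by
    intro m u
    rw [EuclideanSpace.norm_eq, Real.sq_sqrt (by positivity)]
  -- sum over Fin (2*n) splits
  have hsplit : ∀ f : Fin (2*n) → ℝ, ∑ j, f j = ∑ i : Fin n, (f (j1 i) + f (j2 i)) := by
    intro f
    rw [Finset.sum_add_distrib]
    have h2n : n + n = 2 * n := by omega
    have key := Fintype.sum_equiv (finSumFinEquiv.trans (finCongr h2n))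
      (fun x => Sum.elim (fun i => f (j1 i)) (fun i => f (j2 i)) x) f ?_
    · rw [← key, Fintype.sum_sum_type]
      simp
    · rintro (i | i) <;>
        [skip; skip] <;>
        simp only [Sum.elim_inl, Sum.elim_inr, Equiv.trans_apply, finSumFinEquiv_apply_left,
          finSumFinEquiv_apply_right, finCongr_apply] <;>
        refine congrArg f (Fin.ext ?_) <;>
        simp only [hj1, hj2, Fin.coe_cast, Fin.coe_castAdd, Fin.coe_natAdd] <;>
        omega
  -- Cauchy–Schwarz per row
  have hrow : ∀ (v : EuclideanSpace ℂ (Fin (2*n))) (i : Fin n),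
      ‖T v i‖^2 ≤ Q i * (‖v (j1 i)‖^2 + ‖v (j2 i)‖^2) := by
    intro v i
    rw [hTv v i]
    have h1 : ‖y i (j1 i) * v (j1 i) + y i (j2 i) * v (j2 i)‖ ≤
        ‖y i (j1 i)‖ * ‖v (j1 i)‖ + ‖y i (j2 i)‖ * ‖v (j2 i)‖ := by
      refine (norm_add_le _ _).trans ?_
      simp [norm_mul]
    simp only [hQ]
    exact csAux _ _ _ _ _ (norm_nonneg _) (norm_nonneg _) (norm_nonneg _) (norm_nonneg _)
      (norm_nonneg _) h1
  have hub : ∀ v : EuclideanSpace ℂ (Fin (2*n)), ‖T v‖ ≤ Real.sqrt S * ‖v‖ := by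
    intro v
    have h2 : ‖T v‖^2 ≤ S * ‖v‖^2 := by
      rw [hnorm2 n (T v), hnorm2 (2*n) v, hsplit (fun j => ‖v j‖^2)]
      calc ∑ i, ‖T v i‖^2 ≤ ∑ i, Q i * (‖v (j1 i)‖^2 + ‖v (j2 i)‖^2) :=
            Finset.sum_le_sum (fun i _ => hrow v i)
        _ ≤ ∑ i, S * (‖v (j1 i)‖^2 + ‖v (j2 i)‖^2) := Finset.sum_le_sum (fun i _ => by
            have hle := Finset.le_sup' Q (Finset.mem_univ i)
            have := sq_nonneg ‖v (j1 i)‖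
            have := sq_nonneg ‖v (j2 i)‖
            rw [← hS] at hle
            nlinarith)
        _ = S * ∑ i, (‖v (j1 i)‖^2 + ‖v (j2 i)‖^2) := by rw [Finset.mul_sum]
    calc ‖T v‖ = Real.sqrt (‖T v‖^2) := (Real.sqrt_sq (norm_nonneg _)).symm
      _ ≤ Real.sqrt (S * ‖v‖^2) := Real.sqrt_le_sqrt h2
      _ = Real.sqrt S * ‖v‖ := by rw [Real.sqrt_mul hS0, Real.sqrt_sq (norm_nonneg _)]
  have hTle : ‖T‖ ≤ Real.sqrt S := T.opNorm_le_bound (Real.sqrt_nonneg S) hub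
  -- lower bound
  obtain ⟨i0, -, hi0⟩ := Finset.exists_mem_eq_sup' (Finset.univ_nonempty (α := Fin n)) Q
  set a := y i0 (j1 i0) with ha
  set b := y i0 (j2 i0) with hb
  set v : EuclideanSpace ℂ (Fin (2*n)) := (WithLp.equiv 2 (Fin (2*n) → ℂ)).symm
    (fun j => if j = j1 i0 then (starRingEnd ℂ) a else if j = j2 i0 then (starRingEnd ℂ) b else 0)
    with hv
  have hvj : ∀ j, v j = if j = j1 i0 then (starRingEnd ℂ) a
      else if j = j2 i0 then (starRingEnd ℂ) b else 0 := fun j => rfl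
  have hj1j2 : ∀ i i' : Fin n, j1 i ≠ j2 i' := by
    intro i i' h
    have := congrArg Fin.val h
    simp only [hj1, hj2] at this
    omega
  have hj1inj : ∀ i i' : Fin n, j1 i = j1 i' ↔ i = i' := by
    intro i i'
    constructor
    · intro h
      have := congrArg Fin.val h
      simp only [hj1] at this
      exact Fin.ext this
    · intro h; rw [h]
  have hj2inj : ∀ i i' : Fin n, j2 i = j2 i' ↔ i = i' := by
    intro i i'
    constructor
    · intro h
      have := congrArg Fin.val h
      simp only [hj2] at this
      exact Fin.ext (by omega)
    · intro h; rw [h]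
  have hvnorm : ‖v‖^2 = S := by
    rw [hnorm2 (2*n) v, hsplit (fun j => ‖v j‖^2)]
    have hterm : ∀ i : Fin n, ‖v (j1 i)‖^2 + ‖v (j2 i)‖^2 = if i = i0 then Q i0 else 0 := by
      intro i
      rw [hvj, hvj]
      by_cases h : i = i0
      · subst h
        rw [if_pos rfl, if_neg (fun hc => hj1j2 i i hc.symm), if_pos rfl, if_pos rfl]
        simp [hQ, RCLike.norm_conj, ha, hb]
      · have h1 : j1 i ≠ j1 i0 := fun hc => h ((hj1inj i i0).1 hc)
        have h2 : j2 i ≠ j2 i0 := fun hc => h ((hj2inj i i0).1 hc)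
        have h3 : j1 i ≠ j2 i0 := hj1j2 i i0
        have h4 : j2 i ≠ j1 i0 := fun hc => hj1j2 i0 i hc.symm
        rw [if_neg h1, if_neg h3, if_neg h4, if_neg h2, if_neg h]
        simp
    rw [Finset.sum_congr rfl (fun i _ => hterm i), Finset.sum_ite_eq' Finset.univ i0 (fun _ => Q i0)]
    simp only [Finset.mem_univ, if_true]
    rw [hS]
    exact hi0.symm
  have hTvi0 : ‖T v i0‖ = Q i0 := by
    rw [hTv v i0, hvj, hvj]
    rw [if_pos rfl, if_neg (hj1j2 i0 i0).symm, if_pos rfl]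
    rw [← ha, ← hb, Complex.mul_conj, Complex.mul_conj]
    rw [← Complex.ofReal_add, Complex.norm_real, Real.norm_eq_abs,
      abs_of_nonneg (add_nonneg (Complex.normSq_nonneg _) (Complex.normSq_nonneg _))]
    simp [hQ, Complex.normSq_eq_norm_sq, ha, hb]
  have hTvge : Q i0 ≤ ‖T v‖ := by
    rw [← hTvi0]
    have h1 : ‖T v i0‖^2 ≤ ‖T v‖^2 := by
      rw [hnorm2 n (T v)]
      exact Finset.single_le_sum (fun (i : Fin n) _ => sq_nonneg ‖T v i‖) (Finset.mem_univ i0)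
    calc ‖T v i0‖ = Real.sqrt (‖T v i0‖^2) := (Real.sqrt_sq (norm_nonneg _)).symm
      _ ≤ Real.sqrt (‖T v‖^2) := Real.sqrt_le_sqrt h1
      _ = ‖T v‖ := Real.sqrt_sq (norm_nonneg _)
  have hSQ : S = Q i0 := hi0
  have hTge : Real.sqrt S ≤ ‖T‖ := by
    rcases eq_or_lt_of_le hS0 with h0 | h0
    · rw [← h0, Real.sqrt_zero]
      exact norm_nonneg T
    · have hvS : ‖v‖ = Real.sqrt S := by
        rw [← hvnorm, Real.sqrt_sq (norm_nonneg _)]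
      have := T.le_opNorm v
      rw [hvS] at this
      have hkey : S ≤ ‖T‖ * Real.sqrt S := le_trans (hSQ ▸ hTvge) this
      have hsq : Real.sqrt S * Real.sqrt S = S := Real.mul_self_sqrt hS0
      have hs0 : 0 < Real.sqrt S := Real.sqrt_pos.2 h0
      have hfin : Real.sqrt S * Real.sqrt S ≤ ‖T‖ * Real.sqrt S := by rw [hsq]; exact hkey
      exact le_of_mul_le_mul_right hfin hs0
  exact le_antisymm hTle hTge
private lemma paraAux (c s s' : ℂ) :
    ‖c - (s + s')/2‖^2 = (‖c - s‖^2 + ‖c - s'‖^2)/2 - ‖s - s'‖^2/4 := by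
  have h := parallelogram_law_with_norm ℝ (c - (s + s')/2) ((s' - s)/2)
  have e1 : c - (s + s')/2 + (s' - s)/2 = c - s := by ring
  have e2 : c - (s + s')/2 - (s' - s)/2 = c - s' := by ring
  rw [e1, e2] at h
  have e3 : ‖(s' - s)/2‖ = ‖s - s'‖/2 := by
    rw [norm_div, norm_sub_rev]
    norm_num
  rw [e3] at h
  have hd : (0:ℝ) < 2 := by norm_num
  nlinarith [h]

/-- In the space of `n × 2n` complex matrices with the `ℓ²`-operator norm, consider the
subspace `F` of matrices supported on positions `(i, i)` and `(i, i + n)`, and its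
two-dimensional subspace `W` spanned by `A` (ones on the `(i,i)` positions) and `B`
(ones on the `(i, i+n)` positions). Then `W` is a Chebyshev subspace of `F`. -/
theorem two_dim_chebyshev_in_rank_n_matrix_triple
    (n : ℕ) (hn : 1 ≤ n)
    (opNorm : Matrix (Fin n) (Fin (2 * n)) ℂ → ℝ)
    (hopNorm : ∀ x : Matrix (Fin n) (Fin (2 * n)) ℂ,
      opNorm x = ‖LinearMap.toContinuousLinearMap (Matrix.toEuclideanLin x)‖)
    (A B : Matrix (Fin n) (Fin (2 * n)) ℂ)
    (hA : ∀ (i : Fin n) (j : Fin (2 * n)),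
      A i j = if (j : ℕ) = (i : ℕ) then 1 else 0)
    (hB : ∀ (i : Fin n) (j : Fin (2 * n)),
      B i j = if (j : ℕ) = (i : ℕ) + n then 1 else 0) :
    ∀ x : Matrix (Fin n) (Fin (2 * n)) ℂ,
      (∀ (i : Fin n) (j : Fin (2 * n)),
        (j : ℕ) ≠ (i : ℕ) → (j : ℕ) ≠ (i : ℕ) + n → x i j = 0) →
      ∃! w : Matrix (Fin n) (Fin (2 * n)) ℂ,
        w ∈ Submodule.span ℂ ({A, B} : Set (Matrix (Fin n) (Fin (2 * n)) ℂ)) ∧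
        ∀ w' ∈ Submodule.span ℂ ({A, B} : Set (Matrix (Fin n) (Fin (2 * n)) ℂ)),
          opNorm (x - w) ≤ opNorm (x - w') := by
  intro x hx
  haveI : NeZero n := ⟨by omega⟩
  have hne : (Finset.univ : Finset (Fin n)).Nonempty := Finset.univ_nonempty
  set j1 : Fin n → Fin (2*n) := fun i => ⟨i, by omega⟩ with hj1
  set j2 : Fin n → Fin (2*n) := fun i => ⟨(i:ℕ)+n, by omega⟩ with hj2
  set a : Fin n → ℂ := fun i => x i (j1 i) with ha
  set b : Fin n → ℂ := fun i => x i (j2 i) with hb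
  -- entries of A and B
  have hA1 : ∀ i, A i (j1 i) = 1 := fun i => by
    rw [hA i (j1 i), if_pos]; rfl
  have hA2 : ∀ i, A i (j2 i) = 0 := fun i => by
    rw [hA i (j2 i), if_neg]
    show ¬((i:ℕ) + n = i)
    omega
  have hB1 : ∀ i, B i (j1 i) = 0 := fun i => by
    rw [hB i (j1 i), if_neg]
    show ¬((i:ℕ) = i + n)
    omega
  have hB2 : ∀ i, B i (j2 i) = 1 := fun i => by
    rw [hB i (j2 i), if_pos]; rfl
  -- support of x - (s•A + t•B)
  have hsupp : ∀ (s t : ℂ) (i : Fin n) (j : Fin (2*n)), (j:ℕ) ≠ (i:ℕ) → (j:ℕ) ≠ (i:ℕ) + n →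
      (x - (s • A + t • B)) i j = 0 := by
    intro s t i j h1 h2
    simp [Matrix.sub_apply, Matrix.add_apply, Matrix.smul_apply, hx i j h1 h2,
      hA i j, hB i j, h1, h2]
  -- entries of x - (s•A + t•B)
  have hentry1 : ∀ (s t : ℂ) (i : Fin n), (x - (s • A + t • B)) i (j1 i) = a i - s := by
    intro s t i
    simp [Matrix.sub_apply, Matrix.add_apply, Matrix.smul_apply, hA1 i, hB1 i, ha]
  have hentry2 : ∀ (s t : ℂ) (i : Fin n), (x - (s • A + t • B)) i (j2 i) = b i - t := by
    intro s t i
    simp [Matrix.sub_apply, Matrix.add_apply, Matrix.smul_apply, hA2 i, hB2 i, hb]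
  -- the distance function
  set g : Fin n → ℂ × ℂ → ℝ := fun i p => ‖a i - p.1‖^2 + ‖b i - p.2‖^2 with hg
  set F : ℂ × ℂ → ℝ := fun p => Finset.univ.sup' hne (fun i => g i p) with hF
  have hg0 : ∀ i p, 0 ≤ g i p := fun i p => by positivity
  have hgle : ∀ i p, g i p ≤ F p := by
    intro i p
    show g i p ≤ Finset.univ.sup' hne (fun i => g i p)
    exact Finset.le_sup' (fun i => g i p) (Finset.mem_univ i)
  have hF0 : ∀ p, 0 ≤ F p :=
    fun p => le_trans (hg0 ⟨0, by omega⟩ p) (hgle ⟨0, by omega⟩ p)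
  -- the operator norm formula
  have hOp : ∀ p : ℂ × ℂ, opNorm (x - (p.1 • A + p.2 • B)) = Real.sqrt (F p) := by
    intro p
    rw [hopNorm, normFormulaAux n hn _ (hsupp p.1 p.2)]
    congr 1
    refine Finset.sup'_congr _ rfl (fun i _ => ?_)
    show ‖(x - (p.1 • A + p.2 • B)) i (j1 i)‖^2 + ‖(x - (p.1 • A + p.2 • B)) i (j2 i)‖^2
        = g i p
    rw [hentry1 p.1 p.2 i, hentry2 p.1 p.2 i]
  -- continuity of F
  have hgc : ∀ i, Continuous (g i) := by
    intro i
    apply Continuous.add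
    · exact ((continuous_const.sub continuous_fst).norm).pow 2
    · exact ((continuous_const.sub continuous_snd).norm).pow 2
  have hFc : Continuous F := by
    rw [continuous_iff_continuousAt]
    intro p
    exact ContinuousAt.finset_sup'_apply hne (fun i _ => (hgc i).continuousAt)
  -- existence of a global minimizer of F
  obtain ⟨i0⟩ : Nonempty (Fin n) := ⟨⟨0, by omega⟩⟩
  set R : ℝ := Real.sqrt (F 0) + ‖a i0‖ + ‖b i0‖ + 1 with hR
  have hR0 : 0 ≤ R := by positivity
  obtain ⟨p₀, hp₀K, hp₀⟩ := (isCompact_closedBall (0 : ℂ × ℂ) R).exists_isMinOn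
    ⟨0, Metric.mem_closedBall_self hR0⟩ hFc.continuousOn
  have hglobal : ∀ p, F p₀ ≤ F p := by
    intro p
    by_cases hp : p ∈ Metric.closedBall (0 : ℂ × ℂ) R
    · exact hp₀ hp
    · have h0 : F p₀ ≤ F 0 := hp₀ (Metric.mem_closedBall_self hR0)
      have hnorm : R < ‖p‖ := by
        simp only [Metric.mem_closedBall, dist_zero_right, not_le] at hp
        exact hp
      refine h0.trans (le_of_lt ?_)
      have hmax : R < max ‖p.1‖ ‖p.2‖ := by rwa [← Prod.norm_def]
      have hsq : Real.sqrt (F 0) ^ 2 = F 0 := Real.sq_sqrt (hF0 0)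
      have hs0 : 0 ≤ Real.sqrt (F 0) := Real.sqrt_nonneg _
      have hkey : Real.sqrt (F 0) + 1 ≤ ‖a i0 - p.1‖ ∨ Real.sqrt (F 0) + 1 ≤ ‖b i0 - p.2‖ := by
        rcases lt_max_iff.mp hmax with h | h
        · left
          have h1 : ‖p.1‖ - ‖a i0‖ ≤ ‖p.1 - a i0‖ := norm_sub_norm_le _ _
          rw [norm_sub_rev] at h1
          rw [hR] at h
          have := norm_nonneg (b i0)
          linarith
        · right
          have h1 : ‖p.2‖ - ‖b i0‖ ≤ ‖p.2 - b i0‖ := norm_sub_norm_le _ _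
          rw [norm_sub_rev] at h1
          rw [hR] at h
          have := norm_nonneg (a i0)
          linarith
      have hgp : F 0 < g i0 p := by
        rcases hkey with h | h
        · have := sq_nonneg ‖b i0 - p.2‖
          have h2 : (Real.sqrt (F 0) + 1)^2 ≤ ‖a i0 - p.1‖^2 := by
            apply pow_le_pow_left₀ (by positivity) h
          simp only [hg]
          nlinarith
        · have := sq_nonneg ‖a i0 - p.1‖
          have h2 : (Real.sqrt (F 0) + 1)^2 ≤ ‖b i0 - p.2‖^2 := by
            apply pow_le_pow_left₀ (by positivity) h
          simp only [hg]
          nlinarith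
      exact hgp.trans_le (hgle i0 p)
  -- the minimizer matrix
  refine ⟨p₀.1 • A + p₀.2 • B, ⟨Submodule.mem_span_pair.mpr ⟨p₀.1, p₀.2, rfl⟩, ?_⟩, ?_⟩
  · intro w' hw'
    obtain ⟨s, t, hst⟩ := Submodule.mem_span_pair.mp hw'
    rw [← hst, hOp p₀, hOp (s, t)]
    exact Real.sqrt_le_sqrt (hglobal (s, t))
  · rintro w' ⟨hw'mem, hw'min⟩
    obtain ⟨s, t, hst⟩ := Submodule.mem_span_pair.mp hw'mem
    set q : ℂ × ℂ := (s, t) with hq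
    have hw'q : w' = q.1 • A + q.2 • B := hst.symm
    -- both are minimizers, so F q = F p₀
    have h1 : opNorm (x - w') ≤ opNorm (x - (p₀.1 • A + p₀.2 • B)) :=
      hw'min _ (Submodule.mem_span_pair.mpr ⟨p₀.1, p₀.2, rfl⟩)
    rw [hw'q, hOp q, hOp p₀] at h1
    have h2 : Real.sqrt (F p₀) ≤ Real.sqrt (F q) := Real.sqrt_le_sqrt (hglobal q)
    have hFeq : F q = F p₀ := by
      have := le_antisymm h1 h2
      calc F q = Real.sqrt (F q) ^ 2 := (Real.sq_sqrt (hF0 q)).symm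
        _ = Real.sqrt (F p₀) ^ 2 := by rw [this]
        _ = F p₀ := Real.sq_sqrt (hF0 p₀)
    -- uniqueness via the parallelogram law
    have hqp : q = p₀ := by
      by_contra hne'
      set m : ℂ × ℂ := ((q.1 + p₀.1)/2, (q.2 + p₀.2)/2) with hm
      set δ : ℝ := (‖q.1 - p₀.1‖^2 + ‖q.2 - p₀.2‖^2)/4 with hδ
      have hδ0 : 0 < δ := by
        have : q.1 ≠ p₀.1 ∨ q.2 ≠ p₀.2 := by
          by_contra hc
          push_neg at hc
          exact hne' (Prod.ext hc.1 hc.2)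
        rcases this with h | h
        · have : 0 < ‖q.1 - p₀.1‖ := norm_pos_iff.mpr (sub_ne_zero.mpr h)
          have := sq_nonneg ‖q.2 - p₀.2‖
          rw [hδ]
          nlinarith
        · have : 0 < ‖q.2 - p₀.2‖ := norm_pos_iff.mpr (sub_ne_zero.mpr h)
          have := sq_nonneg ‖q.1 - p₀.1‖
          rw [hδ]
          nlinarith
      have hmid : ∀ i, g i m = (g i q + g i p₀)/2 - δ := by
        intro i
        simp only [hg, hm, hδ]
        rw [paraAux (a i) q.1 p₀.1, paraAux (b i) q.2 p₀.2]
        ring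
      have hFm : F m ≤ F p₀ - δ := by
        refine Finset.sup'_le hne _ (fun i _ => ?_)
        have hq1 : g i q ≤ F p₀ := hFeq ▸ hgle i q
        have hq2 : g i p₀ ≤ F p₀ := hgle i p₀
        rw [hmid i]
        have h4 : (g i q + g i p₀)/2 ≤ F p₀ := by
          rw [div_le_iff₀ (by norm_num : (0:ℝ) < 2)]
          linarith
        exact sub_le_sub_right h4 δ
      have := hglobal m
      linarith
    rw [hw'q, hqp]
end

section
/- Let H be an infinite-dimensional separable complex Hilbert space and let K(H) denote the Banach space of compact linear operators on H with the operator norm. Then for every natural number n there exists an n-dimensional linear subspace V of K(H) which is a Chebyshev subspace of K(H): every compact operator T on H admits a unique S ∈ V with ‖T − S‖ ≤ ‖T − S'‖ for all S' ∈ V. -/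
open TopologicalSpace

namespace LSWaux

open scoped ComplexInnerProductSpace
open Filter

variable {H : Type*} [NormedAddCommGroup H] [InnerProductSpace ℂ H]

/-- The compact operators as a submodule. -/
noncomputable def compactsSub (H : Type*) [NormedAddCommGroup H] [InnerProductSpace ℂ H] :
    Submodule ℂ (H →L[ℂ] H) where
  carrier := {T : H →L[ℂ] H | IsCompactOperator T}
  add_mem' := by
    intro f g hf hg
    have h := hf.add hg
    simpa [ContinuousLinearMap.coe_add'] using h
  zero_mem' := by
    have h : IsCompactOperator (0 : H → H) := isCompactOperator_zero
    simpa using h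
  smul_mem' := by
    intro c f hf
    have h := hf.smul c
    simpa [ContinuousLinearMap.coe_smul'] using h

lemma isCompactOperator_rankOne (a v : H) :
    IsCompactOperator ⇑((innerSL ℂ a).smulRight v) := by
  refine ⟨(fun c : ℂ => c • v) '' Metric.closedBall 0 ‖a‖,
    (isCompact_closedBall _ _).image (continuous_id.smul continuous_const), ?_⟩
  refine Filter.mem_of_superset (Metric.ball_mem_nhds 0 one_pos) ?_
  intro x hx
  have hx1 : ‖x‖ < 1 := by simpa [Metric.mem_ball, dist_zero_right] using hx
  refine ⟨⟪a, x⟫, ?_, by simp⟩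
  simp only [Metric.mem_closedBall, dist_zero_right]
  calc ‖⟪a, x⟫‖ ≤ ‖a‖ * ‖x‖ := norm_inner_le_norm a x
    _ ≤ ‖a‖ * 1 := by nlinarith [norm_nonneg a]
    _ = ‖a‖ := mul_one _

variable [CompleteSpace H]

noncomputable def sOp (e : ℕ → H) (j : ℕ) : H →L[ℂ] H :=
  ∑' k, ((2 : ℂ)⁻¹) ^ k • ((innerSL ℂ (e k)).smulRight (e (k + j)))

lemma norm_term_le (e : ℕ → H) (he : Orthonormal ℂ e) (j k : ℕ) :
    ‖((2 : ℂ)⁻¹) ^ k • ((innerSL ℂ (e k)).smulRight (e (k + j)))‖ ≤ ((1:ℝ)/2) ^ k := by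
  rw [norm_smul, norm_pow, ContinuousLinearMap.norm_smulRight_apply, innerSL_apply_norm,
    he.1 k, he.1 (k + j)]
  have h2 : ‖(2 : ℂ)⁻¹‖ = (1:ℝ)/2 := by
    rw [norm_inv]
    norm_num
  rw [h2]
  norm_num

lemma hasSum_sOp (e : ℕ → H) (he : Orthonormal ℂ e) (j : ℕ) :
    HasSum (fun k => ((2 : ℂ)⁻¹) ^ k • ((innerSL ℂ (e k)).smulRight (e (k + j)))) (sOp e j) :=
  (Summable.of_norm_bounded summable_geometric_two (norm_term_le e he j)).hasSum

lemma inner_sOp (e : ℕ → H) (he : Orthonormal ℂ e) (j : ℕ) (x : H) (i : ℕ) :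
    ⟪e i, sOp e j x⟫ = if j ≤ i then ((2 : ℂ)⁻¹) ^ (i - j) * ⟪e (i - j), x⟫ else 0 := by
  classical
  have h1 := (hasSum_sOp e he j).mapL (ContinuousLinearMap.apply ℂ H x)
  simp only [ContinuousLinearMap.apply_apply] at h1
  have h2 := h1.mapL (innerSL ℂ (e i))
  have hfun : (fun k => (innerSL ℂ (e i))
        (((((2 : ℂ)⁻¹) ^ k • ((innerSL ℂ (e k)).smulRight (e (k + j))))) x))
      = fun k => if i = k + j then ((2 : ℂ)⁻¹) ^ k * ⟪e k, x⟫ else 0 := by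
    funext k
    simp only [ContinuousLinearMap.smul_apply, ContinuousLinearMap.smulRight_apply,
      innerSL_apply_apply, inner_smul_right]
    rw [orthonormal_iff_ite.mp he i (k + j)]
    by_cases h : i = k + j <;> simp [h]
  rw [hfun] at h2
  by_cases hj : j ≤ i
  · have h3 : (fun k => if i = k + j then ((2 : ℂ)⁻¹) ^ k * ⟪e k, x⟫ else 0)
        = fun k => if k = i - j then ((2 : ℂ)⁻¹) ^ (i - j) * ⟪e (i - j), x⟫ else 0 := by
      funext k
      by_cases h : k = i - j
      · subst h; rw [if_pos (by omega), if_pos rfl]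
      · rw [if_neg (by omega), if_neg h]
    rw [h3] at h2
    rw [if_pos hj]
    exact h2.unique (hasSum_ite_eq _ _)
  · rw [if_neg hj]
    have h3 : (fun k => if i = k + j then ((2 : ℂ)⁻¹) ^ k * ⟪e k, x⟫ else 0)
        = fun _ => (0 : ℂ) := by
      funext k; rw [if_neg (by omega)]
    rw [h3] at h2
    exact h2.unique hasSum_zero

lemma isCompactOperator_sOp (e : ℕ → H) (he : Orthonormal ℂ e) (j : ℕ) :
    IsCompactOperator ⇑(sOp e j) := by
  have h : Filter.Tendsto
      (fun s : Finset ℕ => ∑ k ∈ s, ((2 : ℂ)⁻¹) ^ k • ((innerSL ℂ (e k)).smulRight (e (k + j))))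
      Filter.atTop (nhds (sOp e j)) := hasSum_sOp e he j
  refine isCompactOperator_of_tendsto h (Filter.Eventually.of_forall fun s => ?_)
  exact Submodule.sum_mem (compactsSub H)
    (fun k _ => Submodule.smul_mem _ _ (isCompactOperator_rankOne _ _))

lemma exists_norm_apply_eq (M : H →L[ℂ] H) (hM : IsCompactOperator ⇑M) :
    ∃ x : H, ‖x‖ ≤ 1 ∧ ‖M x‖ = ‖M‖ := by
  rcases eq_or_ne M 0 with rfl | hM0
  · exact ⟨0, by simp⟩
  have hr : (0:ℝ) < ‖M‖ := norm_pos_iff.mpr hM0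
  set r : ℝ := ‖M‖ with hrdef
  have hseq : ∀ nn : ℕ, ∃ x : H, ‖x‖ < 1 ∧ r - 1/(nn+1) < ‖M x‖ := by
    intro nn
    refine M.exists_lt_apply_of_lt_opNorm ?_
    have : (0:ℝ) < 1/(nn+1) := by positivity
    linarith
  choose x hx1 hx2 using hseq
  have hlim : Tendsto (fun nn => ‖M (x nn)‖) atTop (nhds r) := by
    refine tendsto_of_tendsto_of_tendsto_of_le_of_le
      (g := fun nn : ℕ => r - 1/(nn+1)) (h := fun _ : ℕ => r) ?_ tendsto_const_nhds
      (fun nn => (hx2 nn).le) (fun nn => ?_)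
    · have : Tendsto (fun nn : ℕ => 1 / ((nn : ℝ) + 1)) atTop (nhds 0) :=
        tendsto_one_div_add_atTop_nhds_zero_nat
      simpa using tendsto_const_nhds.sub this
    · calc ‖M (x nn)‖ ≤ ‖M‖ * ‖x nn‖ := M.le_opNorm _
        _ ≤ ‖M‖ * 1 := by nlinarith [hx1 nn, norm_nonneg (x nn)]
        _ = r := by rw [mul_one]
  set T : H →L[ℂ] H := ContinuousLinearMap.adjoint M ∘L M with hTdef
  have hTnorm : ‖T‖ = r * r := ContinuousLinearMap.norm_adjoint_comp_self M
  have hTc : IsCompactOperator ⇑T := by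
    have h := hM.continuous_comp (ContinuousLinearMap.adjoint M).continuous
    simpa [hTdef, ContinuousLinearMap.coe_comp'] using h
  set lam : ℂ := ((r^2 : ℝ) : ℂ) with hlamdef
  have hlam0 : lam ≠ 0 := by
    simp only [hlamdef, ne_eq, Complex.ofReal_eq_zero]
    positivity
  have hinner : ∀ y : H, ⟪T y, y⟫ = ((‖M y‖ : ℂ))^2 := by
    intro y
    rw [hTdef]
    calc ⟪(ContinuousLinearMap.adjoint M ∘L M) y, y⟫
        = ⟪ContinuousLinearMap.adjoint M (M y), y⟫ := rfl
      _ = ⟪M y, M y⟫ := ContinuousLinearMap.adjoint_inner_left M _ _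
      _ = ((‖M y‖ : ℂ))^2 := inner_self_eq_norm_sq_to_K (𝕜 := ℂ) (M y)
  have herrsq : ∀ nn : ℕ, ‖T (x nn) - lam • x nn‖^2 ≤ 2*r^4 - 2*r^2*‖M (x nn)‖^2 := by
    intro nn
    have hns := norm_sub_sq (𝕜 := ℂ) (T (x nn)) (lam • x nn)
    have hre : RCLike.re ⟪T (x nn), lam • x nn⟫ = r^2 * ‖M (x nn)‖^2 := by
      rw [inner_smul_right, hinner]
      simp [hlamdef, ← Complex.ofReal_pow]
    have h1 : ‖T (x nn)‖ ≤ r^2 := by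
      calc ‖T (x nn)‖ ≤ ‖T‖ * ‖x nn‖ := T.le_opNorm _
        _ ≤ (r*r) * 1 := by rw [hTnorm]; nlinarith [hx1 nn, norm_nonneg (x nn), mul_pos hr hr]
        _ = r^2 := by ring
    have h2 : ‖lam • x nn‖ ≤ r^2 := by
      rw [norm_smul]
      have hl : ‖lam‖ = r^2 := by
        rw [hlamdef, Complex.norm_real]
        simp [abs_of_nonneg (by positivity : (0:ℝ) ≤ r^2)]
      rw [hl]
      nlinarith [hx1 nn, norm_nonneg (x nn), sq_nonneg r]
    rw [hns, hre]
    nlinarith [norm_nonneg (T (x nn)), norm_nonneg (lam • x nn)]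
  have herr : Tendsto (fun nn => T (x nn) - lam • x nn) atTop (nhds 0) := by
    rw [tendsto_zero_iff_norm_tendsto_zero]
    have hsq : Tendsto (fun nn => ‖T (x nn) - lam • x nn‖^2) atTop (nhds 0) := by
      have hg : Tendsto (fun nn => 2*r^4 - 2*r^2*‖M (x nn)‖^2) atTop (nhds 0) := by
        have hmul := (hlim.mul hlim)
        have h2 : Tendsto (fun nn => 2*r^2*(‖M (x nn)‖*‖M (x nn)‖)) atTop (nhds (2*r^2*(r*r))) :=
          tendsto_const_nhds.mul hmul
        have h3 := (tendsto_const_nhds (x := (2*r^4 : ℝ))).sub h2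
        have he : (2*r^4 - 2*r^2*(r*r)) = 0 := by ring
        rw [he] at h3
        refine h3.congr fun nn => ?_
        ring
      exact squeeze_zero (fun nn => sq_nonneg _) herrsq hg
    have hs := hsq.sqrt
    rw [Real.sqrt_zero] at hs
    refine hs.congr fun nn => ?_
    rw [Real.sqrt_sq (norm_nonneg _)]
  have hKc : IsCompact (closure ((T : H →ₗ[ℂ] H) '' Metric.closedBall 0 1)) := by
    refine IsCompactOperator.isCompact_closure_image_closedBall ?_ 1
    simpa using hTc
  have hmem : ∀ nn, T (x nn) ∈ closure ((T : H →ₗ[ℂ] H) '' Metric.closedBall 0 1) := by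
    intro nn
    refine subset_closure ⟨x nn, ?_, by simp⟩
    simp [Metric.mem_closedBall, dist_zero_right, (hx1 nn).le]
  obtain ⟨z, hz, φ, hφmono, hφlim⟩ := hKc.isSeqCompact hmem
  have hTsub : Tendsto (fun nn => T (x (φ nn))) atTop (nhds z) := hφlim
  have hxlim : Tendsto (fun nn => x (φ nn)) atTop (nhds (lam⁻¹ • z)) := by
    have h5 : Tendsto (fun nn => lam • x (φ nn)) atTop (nhds z) := by
      have h6 := hTsub.sub (herr.comp (hφmono.tendsto_atTop))
      simpa using h6
    have h7 := h5.const_smul lam⁻¹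
    simpa [smul_smul, inv_mul_cancel₀ hlam0] using h7
  refine ⟨lam⁻¹ • z, ?_, ?_⟩
  · have hn := hxlim.norm
    exact le_of_tendsto hn (Filter.Eventually.of_forall fun nn => (hx1 (φ nn)).le)
  · have h8 : Tendsto (fun nn => ‖M (x (φ nn))‖) atTop (nhds ‖M (lam⁻¹ • z)‖) :=
      ((M.continuous.tendsto _).comp hxlim).norm
    have h9 : Tendsto (fun nn => ‖M (x (φ nn))‖) atTop (nhds r) :=
      hlim.comp (hφmono.tendsto_atTop)
    exact tendsto_nhds_unique h8 h9

lemma exists_best {X : Type*} [NormedAddCommGroup X] [NormedSpace ℂ X]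
    (V : Submodule ℂ X) [FiniteDimensional ℂ V] (x : X) :
    ∃ v ∈ V, ∀ w ∈ V, ‖x - v‖ ≤ ‖x - w‖ := by
  haveI : ProperSpace V := FiniteDimensional.proper ℂ V
  have hcont : Continuous fun v : V => ‖x - (v : X)‖ :=
    (continuous_const.sub continuous_subtype_val).norm
  have hK : IsCompact (Metric.closedBall (0 : V) (2*‖x‖+1)) := isCompact_closedBall _ _
  have h0K : (0 : V) ∈ Metric.closedBall (0 : V) (2*‖x‖+1) := by
    simp [Metric.mem_closedBall]
    positivity
  obtain ⟨v₀, hv₀K, hv₀min⟩ := hK.exists_isMinOn ⟨0, h0K⟩ hcont.continuousOn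
  refine ⟨v₀, v₀.2, fun w hw => ?_⟩
  by_cases hwb : ‖w‖ ≤ 2*‖x‖+1
  · have hmem : (⟨w, hw⟩ : V) ∈ Metric.closedBall (0 : V) (2*‖x‖+1) := by
      simpa [Metric.mem_closedBall, dist_zero_right] using hwb
    exact hv₀min hmem
  · push_neg at hwb
    have h1 : ‖x - (v₀ : X)‖ ≤ ‖x‖ := by
      have := hv₀min h0K
      simpa using this
    have h2 : ‖w‖ - ‖x‖ ≤ ‖x - w‖ := by
      have he : ‖w - x‖ = ‖x - w‖ := norm_sub_rev _ _
      linarith [abs_le.mp (abs_norm_sub_norm_le w x)]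
    linarith

lemma strict_convex_aux {a b : H} (ha : ‖a‖ ≤ 1) (hb : ‖b‖ ≤ 1) (hab : ‖a + b‖ = 2) :
    a = b := by
  have hp := parallelogram_law_with_norm ℂ a b
  have h0 : ‖a - b‖ = 0 := by nlinarith [norm_nonneg a, norm_nonneg b, norm_nonneg (a - b)]
  rw [norm_eq_zero, sub_eq_zero] at h0
  exact h0

end LSWaux
open scoped ComplexInnerProductSpace in
open LSWaux in
/-- (Legg–Scranton–Ward) If `H` is an infinite-dimensional separable complex Hilbert
space, then for every `n` there is an `n`-dimensional Chebyshev subspace of the space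
`K(H)` of compact operators on `H`. -/
theorem exists_finite_dim_chebyshev_in_compacts_of_separable
    {H : Type*} [NormedAddCommGroup H] [InnerProductSpace ℂ H] [CompleteSpace H]
    [SeparableSpace H] (hH : ¬ FiniteDimensional ℂ H) (n : ℕ) :
    ∃ V : Submodule ℂ (H →L[ℂ] H),
      (V : Set (H →L[ℂ] H)) ⊆ {T : H →L[ℂ] H | IsCompactOperator T} ∧
      Module.finrank ℂ V = n ∧
      ∀ T : H →L[ℂ] H, IsCompactOperator T →
        ∃! S : H →L[ℂ] H, S ∈ V ∧ ∀ S' ∈ V, ‖T - S‖ ≤ ‖T - S'‖ := by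
  classical
  obtain ⟨w, b0, hb0⟩ := exists_hilbertBasis ℂ H
  have hw_on : Orthonormal ℂ ((↑) : w → H) := hb0 ▸ b0.orthonormal
  haveI hwc : Countable w := by
    obtain ⟨s, hsc, hsd⟩ := TopologicalSpace.exists_countable_dense H
    haveI := hsc.to_subtype
    have hsel : ∀ u : w, ∃ y : s, dist (u : H) (y : H) < 1/2 := by
      intro u
      obtain ⟨y, hys, hyd⟩ := hsd.exists_dist_lt (u : H) (by norm_num : (0:ℝ) < 1/2)
      exact ⟨⟨y, hys⟩, hyd⟩
    choose f hf using hsel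
    have hinj : Function.Injective f := by
      intro u v huv
      by_contra hne
      have h0 : ⟪(u : H), (v : H)⟫ = 0 := hw_on.2 hne
      have h1 := hw_on.1 u
      have h1' := hw_on.1 v
      have h2 : ‖(u : H) - (v : H)‖^2 = 2 := by
        rw [norm_sub_sq (𝕜 := ℂ), h0, h1, h1']
        norm_num
      have hlt : dist (u : H) (v : H) < 1 := by
        calc dist (u : H) (v : H)
            ≤ dist (u : H) (f u : H) + dist (f u : H) (v : H) := dist_triangle _ _ _
          _ = dist (u : H) (f u : H) + dist (v : H) (f v : H) := by
              rw [huv, dist_comm (α := H) (f v : H) (v : H)]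
          _ < 1/2 + 1/2 := add_lt_add (hf u) (hf v)
          _ = 1 := by norm_num
      rw [dist_eq_norm] at hlt
      nlinarith [norm_nonneg ((u : H) - (v : H))]
    exact Function.Injective.countable hinj
  haveI hwi : Infinite w := by
    by_contra hfin
    rw [not_infinite_iff_finite] at hfin
    have hwfin : w.Finite := Set.finite_coe_iff.mp hfin
    haveI hfd : FiniteDimensional ℂ (Submodule.span ℂ w) :=
      FiniteDimensional.span_of_finite ℂ hwfin
    have hcl : IsClosed ((Submodule.span ℂ w : Submodule ℂ H) : Set H) :=
      Submodule.closed_of_finiteDimensional _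
    have hd := b0.dense_span
    rw [hb0, Subtype.range_coe] at hd
    rw [IsClosed.submodule_topologicalClosure_eq hcl] at hd
    apply hH
    rw [hd] at hfd
    exact Submodule.topEquiv.finiteDimensional
  obtain ⟨dnm⟩ := nonempty_denumerable w
  haveI := dnm
  let q : w ≃ ℕ := Denumerable.eqv w
  set e : ℕ → H := fun k => ((q.symm k : w) : H) with hedef
  have he : Orthonormal ℂ e := hw_on.comp _ q.symm.injective
  have hd0 := b0.dense_span
  rw [hb0, Subtype.range_coe] at hd0
  have hsp : ⊤ ≤ (Submodule.span ℂ (Set.range e)).topologicalClosure := by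
    have hre : Set.range e = w := by
      have h : Set.range e = Set.range ((↑) : w → H) := q.symm.surjective.range_comp _
      rw [h, Subtype.range_coe]
    rw [hre, hd0]
  let b : HilbertBasis ℕ ℂ H := HilbertBasis.mk he hsp
  have hbe : ⇑b = e := HilbertBasis.coe_mk _ _
  have hcoord : ∀ x : H, x ≠ 0 → ∃ k, ⟪e k, x⟫ ≠ 0 := by
    intro x hx
    by_contra hno
    push_neg at hno
    apply hx
    apply b.repr.injective
    rw [map_zero]
    refine lp.ext (funext fun i => ?_)
    rw [b.repr_apply_apply, hbe]
    simpa using hno i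
  -- the weighted shift operators
  set Wf : Fin n → (H →L[ℂ] H) := fun j => sOp e (j : ℕ) with hWdef
  have hWcpt : ∀ j : Fin n, IsCompactOperator ⇑(Wf j) := fun j => isCompactOperator_sOp e he _
  set V : Submodule ℂ (H →L[ℂ] H) := Submodule.span ℂ (Set.range Wf) with hVdef
  have hVle : V ≤ compactsSub H := by
    rw [hVdef]
    refine Submodule.span_le.mpr ?_
    rintro _ ⟨j, rfl⟩
    exact hWcpt j
  -- key injectivity property
  have keyInj : ∀ (c : Fin n → ℂ) (x : H), (∑ j, c j • Wf j) x = 0 → c = 0 ∨ x = 0 := by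
    intro c x hzero
    by_cases hc : c = 0
    · exact Or.inl hc
    by_cases hx : x = 0
    · exact Or.inr hx
    exfalso
    have hex := hcoord x hx
    have hk₀ : ⟪e (Nat.find hex), x⟫ ≠ 0 := Nat.find_spec hex
    set k₀ := Nat.find hex with hk₀def
    have hk₀min : ∀ k, k < k₀ → ⟪e k, x⟫ = 0 := fun k hk => not_not.mp (Nat.find_min hex hk)
    have hec : ∃ m, ∃ h : m < n, c ⟨m, h⟩ ≠ 0 := by
      obtain ⟨j, hj⟩ := Function.ne_iff.mp hc
      exact ⟨(j : ℕ), j.2, by simpa using hj⟩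
    obtain ⟨hmn, hm⟩ := Nat.find_spec hec
    set m := Nat.find hec with hmdef
    have hmmin : ∀ j', j' < m → ∀ h : j' < n, c ⟨j', h⟩ = 0 := by
      intro j' hj' h
      have h2 := Nat.find_min hec hj'
      push_neg at h2
      exact h2 h
    have h1 : ⟪e (k₀ + m), (∑ j, c j • Wf j) x⟫ = 0 := by rw [hzero, inner_zero_right]
    rw [ContinuousLinearMap.sum_apply, inner_sum] at h1
    have hterm : ∀ j : Fin n, ⟪e (k₀ + m), (c j • Wf j) x⟫
        = c j * (if (j:ℕ) ≤ k₀ + m then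
            ((2:ℂ)⁻¹)^(k₀+m-(j:ℕ)) * ⟪e (k₀+m-(j:ℕ)), x⟫ else 0) := by
      intro j
      rw [ContinuousLinearMap.smul_apply, inner_smul_right, hWdef]
      rw [inner_sOp e he (j:ℕ) x (k₀+m)]
    rw [Finset.sum_congr rfl (fun j _ => hterm j)] at h1
    have hsingle : ∑ j : Fin n, c j * (if (j:ℕ) ≤ k₀ + m then
          ((2:ℂ)⁻¹)^(k₀+m-(j:ℕ)) * ⟪e (k₀+m-(j:ℕ)), x⟫ else 0)
        = c ⟨m, hmn⟩ * (((2:ℂ)⁻¹)^(k₀) * ⟪e k₀, x⟫) := by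
      rw [Finset.sum_eq_single (⟨m, hmn⟩ : Fin n)]
      · have hcoe : ((⟨m, hmn⟩ : Fin n) : ℕ) = m := rfl
        rw [hcoe, if_pos (by omega : m ≤ k₀ + m), Nat.add_sub_cancel]
      · intro j _ hj
        have hjm : (j : ℕ) ≠ m := fun h => hj (Fin.ext h)
        rcases hjm.lt_or_gt with hlt | hgt
        · have hcj : c j = 0 := by
            have := hmmin (j : ℕ) hlt j.2
            simpa using this
          rw [hcj, zero_mul]
        · by_cases hle : (j : ℕ) ≤ k₀ + m
          · rw [if_pos hle, hk₀min _ (by omega), mul_zero, mul_zero]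
          · rw [if_neg hle, mul_zero]
      · intro hmem
        exact absurd (Finset.mem_univ _) hmem
    rw [hsingle] at h1
    have hpow : ((2:ℂ)⁻¹)^(k₀) ≠ 0 := pow_ne_zero _ (inv_ne_zero two_ne_zero)
    rcases mul_eq_zero.mp h1 with h | h
    · exact hm h
    · rcases mul_eq_zero.mp h with h' | h'
      · exact hpow h'
      · exact hk₀ h'
  refine ⟨V, fun T hT => hVle hT, ?_, ?_⟩
  · -- finrank
    have hli : LinearIndependent ℂ Wf := by
      rw [Fintype.linearIndependent_iff]
      intro g hg i
      rcases keyInj g (e 0) (by rw [hg]; simp) with h | h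
      · rw [h]; rfl
      · exfalso
        have h1 := he.1 0
        rw [h] at h1
        simp at h1
    rw [hVdef, finrank_span_eq_card hli, Fintype.card_fin]
  · intro T hT
    haveI : FiniteDimensional ℂ V := by
      rw [hVdef]
      exact FiniteDimensional.span_of_finite ℂ (Set.finite_range Wf)
    obtain ⟨S, hSV, hSmin⟩ := exists_best V T
    refine ⟨S, ⟨hSV, hSmin⟩, ?_⟩
    rintro S' ⟨hS'V, hS'min⟩
    by_contra hne
    set d : ℝ := ‖T - S‖ with hddef
    have hd' : ‖T - S'‖ = d := le_antisymm (hS'min S hSV) (hSmin S' hS'V)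
    set Smid : H →L[ℂ] H := (2:ℂ)⁻¹ • (S + S') with hmiddef
    have hSmidV : Smid ∈ V := Submodule.smul_mem _ _ (Submodule.add_mem _ hSV hS'V)
    have hTmid : T - Smid = (2:ℂ)⁻¹ • ((T - S) + (T - S')) := by
      rw [hmiddef]
      module
    have h2C : ‖(2:ℂ)⁻¹‖ = (1:ℝ)/2 := by
      rw [norm_inv]; norm_num
    have hmidnorm : ‖T - Smid‖ = d := by
      refine le_antisymm ?_ (hSmin Smid hSmidV)
      rw [hTmid]
      calc ‖(2:ℂ)⁻¹ • ((T - S) + (T - S'))‖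
          = ‖(2:ℂ)⁻¹‖ * ‖(T - S) + (T - S')‖ := norm_smul _ _
        _ ≤ (1/2) * (‖T - S‖ + ‖T - S'‖) := by
            rw [h2C]
            exact mul_le_mul_of_nonneg_left (norm_add_le _ _) (by norm_num)
        _ = d := by rw [hd', ← hddef]; ring
    rcases eq_or_lt_of_le (norm_nonneg (T - S)) with hd0 | hdpos
    · -- distance zero
      apply hne
      have h1 : T - S = 0 := norm_eq_zero.mp hd0.symm
      have h2 : T - S' = 0 := norm_eq_zero.mp (by rw [hd', hddef, ← hd0])
      have := sub_eq_zero.mp h1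
      have h4 := sub_eq_zero.mp h2
      rw [← this, ← h4]
    · set A : H →L[ℂ] H := ((d:ℂ))⁻¹ • (T - S) with hAdef
      set B : H →L[ℂ] H := ((d:ℂ))⁻¹ • (T - S') with hBdef
      set M : H →L[ℂ] H := ((d:ℂ))⁻¹ • (T - Smid) with hMdef
      have hdC : ‖((d:ℂ))⁻¹‖ = d⁻¹ := by
        have hdpos' : 0 < d := by rw [hddef]; exact hdpos
        rw [norm_inv, Complex.norm_real, Real.norm_eq_abs, abs_of_pos hdpos']
      have hMnorm : ‖M‖ = 1 := by
        have hdpos' : 0 < d := by rw [hddef]; exact hdpos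
        rw [hMdef, norm_smul, hdC, hmidnorm]
        field_simp
      have hMc : IsCompactOperator ⇑M := by
        have hSc : IsCompactOperator ⇑Smid := hVle hSmidV
        have h := (hT.sub hSc).smul ((d:ℂ))⁻¹
        have hco : ⇑M = ((d:ℂ))⁻¹ • (⇑T - ⇑Smid) := by
          rw [hMdef]
          ext y
          simp
        rw [hco]
        exact h
      obtain ⟨x, hx1, hx2⟩ := exists_norm_apply_eq M hMc
      rw [hMnorm] at hx2
      have hAB : ∀ C : H →L[ℂ] H, ‖T - C‖ = d → ‖(((d:ℂ))⁻¹ • (T - C)) x‖ ≤ 1 := by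
        intro C hC
        have hn : ‖((d:ℂ))⁻¹ • (T - C)‖ = 1 := by
          have hdpos' : 0 < d := by rw [hddef]; exact hdpos
          rw [norm_smul, hdC, hC]
          field_simp
        calc ‖(((d:ℂ))⁻¹ • (T - C)) x‖ ≤ ‖((d:ℂ))⁻¹ • (T - C)‖ * ‖x‖ :=
              ContinuousLinearMap.le_opNorm _ _
          _ ≤ 1 := by rw [hn]; linarith
      have hAnorm : ‖A x‖ ≤ 1 := hAB S hddef.symm
      have hBnorm : ‖B x‖ ≤ 1 := hAB S' hd'
      have hsum : A x + B x = (2:ℂ) • (M x) := by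
        rw [hAdef, hBdef, hMdef, hTmid]
        simp only [ContinuousLinearMap.smul_apply, ContinuousLinearMap.sub_apply,
          ContinuousLinearMap.add_apply]
        rw [smul_smul, smul_smul]
        rw [show (2:ℂ) * ((d:ℂ))⁻¹ * (2:ℂ)⁻¹ = ((d:ℂ))⁻¹ by ring]
        rw [smul_add]
      have hABx : ‖A x + B x‖ = 2 := by
        rw [hsum, norm_smul, hx2]
        simp
      have hABeq : A x = B x := strict_convex_aux hAnorm hBnorm hABx
      have hSx : (S' - S) x = 0 := by
        rw [hAdef, hBdef] at hABeq
        simp only [ContinuousLinearMap.smul_apply, ContinuousLinearMap.sub_apply] at hABeq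
        have hd0' : ((d:ℂ))⁻¹ ≠ 0 := by
          refine inv_ne_zero ?_
          simp only [ne_eq, Complex.ofReal_eq_zero]
          rw [hddef]
          exact ne_of_gt hdpos
        have h3 := smul_right_injective H hd0' hABeq
        have h4 : S x = S' x := sub_right_inj.mp h3
        rw [ContinuousLinearMap.sub_apply, h4, sub_self]
      obtain ⟨c, hc⟩ := (Submodule.mem_span_range_iff_exists_fun ℂ).mp
        (Submodule.sub_mem _ hS'V hSV : S' - S ∈ Submodule.span ℂ (Set.range Wf))
      rcases keyInj c x (by rw [hc]; exact hSx) with h | h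
      · have h5 : S' - S = 0 := by rw [← hc, h]; simp
        exact hne (by rwa [sub_eq_zero] at h5)
      · rw [h] at hx2
        simp at hx2
end

section
/- Let H be a non-separable complex Hilbert space and let K(H) denote the Banach space of compact linear operators on H with the operator norm. Then K(H) has no non-zero finite-dimensional Chebyshev subspaces: for every finite-dimensional subspace V of K(H) with V ≠ {0}, there exists a compact operator T on H which does not have a unique best approximation in V. -/
open TopologicalSpace

/-- (Legg–Scranton–Ward) If `H` is a non-separable complex Hilbert space, then `K(H)` has
no non-zero finite-dimensional Chebyshev subspaces. -/
theorem no_finite_dim_chebyshev_in_compacts_of_nonseparable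
    {H : Type*} [NormedAddCommGroup H] [InnerProductSpace ℂ H] [CompleteSpace H]
    (hH : ¬ SeparableSpace H)
    (V : Submodule ℂ (H →L[ℂ] H))
    (hVcompact : (V : Set (H →L[ℂ] H)) ⊆ {T : H →L[ℂ] H | IsCompactOperator T})
    [FiniteDimensional ℂ V] (hV : V ≠ ⊥) :
    ∃ T : H →L[ℂ] H, IsCompactOperator T ∧
      ¬ ∃! S : H →L[ℂ] H, S ∈ V ∧ ∀ S' ∈ V, ‖T - S‖ ≤ ‖T - S'‖ := by
  classical
  obtain ⟨S₀, hS₀V, hS₀0⟩ := Submodule.exists_mem_ne_zero_of_ne_bot hV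
  obtain ⟨s, hs⟩ : V.FG := Module.Finite.iff_fg.mp ‹FiniteDimensional ℂ V›
  have hsV : ∀ A ∈ (s : Set (H →L[ℂ] H)), A ∈ V := fun A hA => hs ▸ Submodule.subset_span hA
  set D : Set H := ⋃ A ∈ (s : Set (H →L[ℂ] H)), closure ((A : H → H) '' Metric.ball 0 1)
    with hD_def
  have hDsep : IsSeparable D := by
    rw [hD_def, Set.biUnion_eq_iUnion]
    refine IsSeparable.iUnion fun A => ?_
    have hAc : IsCompactOperator (A.1 : H → H) := hVcompact (hsV A.1 A.2)
    have hAc' : IsCompactOperator ((A.1 : H →ₗ[ℂ] H) : H → H) := by simpa using hAc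
    have := (hAc'.isCompact_closure_image_ball (𝕜₁ := ℂ) 1)
    simpa using this.isSeparable
  set M : Submodule ℂ H := (Submodule.span ℂ D).topologicalClosure with hM_def
  have hMsep : IsSeparable (M : Set H) := by
    rw [hM_def, Submodule.topologicalClosure_coe]
    exact hDsep.span.closure
  have hrangeA : ∀ A ∈ (s : Set (H →L[ℂ] H)), ∀ x : H, A x ∈ M := by
    intro A hA x
    have hc0 : ((‖x‖ + 1 : ℝ) : ℂ) ≠ 0 := by
      rw [Complex.ofReal_ne_zero]; positivity
    have hball : (((‖x‖ + 1 : ℝ) : ℂ))⁻¹ • x ∈ Metric.ball (0 : H) 1 := by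
      rw [Metric.mem_ball, dist_zero_right, norm_smul, norm_inv]
      have h1 : ‖((‖x‖ + 1 : ℝ) : ℂ)‖ = ‖x‖ + 1 := by
        rw [Complex.norm_real, Real.norm_of_nonneg (by positivity)]
      rw [h1, inv_mul_lt_iff₀ (by positivity)]
      linarith
    have hmem : A ((((‖x‖ + 1 : ℝ) : ℂ))⁻¹ • x) ∈ M := by
      apply Submodule.le_topologicalClosure _
      apply Submodule.subset_span
      exact Set.mem_biUnion hA (subset_closure (Set.mem_image_of_mem _ hball))
    have hx : A x = ((‖x‖ + 1 : ℝ) : ℂ) • A ((((‖x‖ + 1 : ℝ) : ℂ))⁻¹ • x) := by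
      rw [map_smul, smul_smul, mul_inv_cancel₀ hc0, one_smul]
    rw [hx]
    exact M.smul_mem _ hmem
  have hrange : ∀ S ∈ V, ∀ x : H, S x ∈ M := by
    intro S hSV
    have hSV' : S ∈ Submodule.span ℂ (s : Set (H →L[ℂ] H)) := hs ▸ hSV
    refine Submodule.span_induction (p := fun S _ => ∀ x : H, S x ∈ M)
      (fun A hA => hrangeA A hA) (fun x => by
        rw [ContinuousLinearMap.zero_apply]; exact M.zero_mem)
      (fun S T _ _ hS hT x => by
        rw [ContinuousLinearMap.add_apply]; exact M.add_mem (hS x) (hT x))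
      (fun c S _ hS x => by
        rw [ContinuousLinearMap.smul_apply]; exact M.smul_mem c (hS x)) hSV'
  haveI : CompleteSpace M := (Submodule.isClosed_topologicalClosure _).completeSpace_coe
  -- Key existence: a nonzero vector orthogonal to `M` and killed by `S₀`.
  have hex : ∃ e' : H, e' ≠ 0 ∧ S₀ e' = 0 ∧ e' ∈ Mᗮ := by
    by_contra hcon
    push_neg at hcon
    apply hH
    set A := ContinuousLinearMap.adjoint S₀ with hA
    set N := (Submodule.span ℂ (Set.range A ∪ (M : Set H))).topologicalClosure with hN
    have hMN : M ≤ N :=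
      le_trans (fun x hx => Submodule.subset_span (Or.inr hx)) (Submodule.le_topologicalClosure _)
    have hrangeN : ∀ y : H, A y ∈ N := fun y =>
      Submodule.le_topologicalClosure _ (Submodule.subset_span (Or.inl ⟨y, rfl⟩))
    have hAw : ∀ w ∈ Mᗮ, A w = 0 := by
      intro w hw
      have h0 : (inner ℂ (A w) (A w) : ℂ) = 0 := by
        rw [hA, ContinuousLinearMap.adjoint_inner_left]
        exact (Submodule.mem_orthogonal' M w).mp hw _ (hrange S₀ hS₀V _)
      exact inner_self_eq_zero.mp h0
    have hNsep : IsSeparable (N : Set H) := by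
      have h1 : IsSeparable (Set.range (A : H → H) ∪ (M : Set H)) := by
        refine IsSeparable.union ?_ hMsep
        have hsub : Set.range (A : H → H) ⊆ (A : H → H) '' (M : Set H) := by
          rintro _ ⟨x, rfl⟩
          obtain ⟨m, hm, w, hw, rfl⟩ := M.exists_add_mem_mem_orthogonal x
          exact ⟨m, hm, by rw [map_add, hAw w hw, add_zero]⟩
        exact (hMsep.image A.continuous).mono hsub
      rw [hN, Submodule.topologicalClosure_coe]
      exact h1.span.closure
    have hNtop : N = ⊤ := by
      rw [← Submodule.orthogonal_eq_bot_iff, Submodule.eq_bot_iff]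
      intro w hw
      by_contra hw0
      refine hcon w hw0 ?_ (Submodule.orthogonal_le hMN hw)
      have h2 : (inner ℂ (S₀ w) (S₀ w) : ℂ) = 0 := by
        rw [← ContinuousLinearMap.adjoint_inner_left]
        exact (Submodule.mem_orthogonal N w).mp hw _ (hrangeN (S₀ w))
      exact inner_self_eq_zero.mp h2
    rw [← isSeparable_univ_iff]
    have huniv : (N : Set H) = Set.univ := by rw [hNtop]; rfl
    rwa [huniv] at hNsep
  obtain ⟨e', he'0, hS₀e', he'M⟩ := hex
  set e : H := (((‖e'‖ : ℝ) : ℂ))⁻¹ • e' with he_def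
  have he1 : ‖e‖ = 1 := by
    rw [he_def, norm_smul, norm_inv, Complex.norm_real, norm_norm,
      inv_mul_cancel₀ (norm_ne_zero_iff.mpr he'0)]
  have heM : e ∈ Mᗮ := Submodule.smul_mem _ _ he'M
  have horth : ∀ S ∈ V, ∀ x : H, (inner ℂ e (S x) : ℂ) = 0 := fun S hS x =>
    (Submodule.mem_orthogonal' M e).mp heM _ (hrange S hS x)
  have hS₀e : S₀ e = 0 := by rw [he_def, map_smul, hS₀e', smul_zero]
  have hee : (inner ℂ e e : ℂ) = 1 := by
    rw [inner_self_eq_norm_sq_to_K, he1]; norm_num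
  set T : H →L[ℂ] H := (innerSL ℂ e).smulRight e with hT
  have hTapp : ∀ x : H, T x = (inner ℂ e x : ℂ) • e := fun x => rfl
  have hTcomp : IsCompactOperator (T : H → H) := by
    refine ⟨(fun z : ℂ => z • e) '' Metric.closedBall 0 1, ?_, ?_⟩
    · exact (isCompact_closedBall 0 1).image (continuous_id.smul continuous_const)
    · refine Filter.mem_of_superset (Metric.closedBall_mem_nhds (0 : H) one_pos) ?_
      intro x hx
      refine ⟨inner ℂ e x, ?_, (hTapp x).symm⟩
      rw [Metric.mem_closedBall, dist_zero_right]
      calc ‖(inner ℂ e x : ℂ)‖ ≤ ‖e‖ * ‖x‖ := norm_inner_le_norm e x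
        _ ≤ 1 := by
            rw [he1, one_mul]
            simpa [dist_zero_right] using hx
  have hlow : ∀ S' ∈ V, 1 ≤ ‖T - S'‖ := by
    intro S' hS'
    have h1 : (inner ℂ e ((T - S') e) : ℂ) = 1 := by
      rw [ContinuousLinearMap.sub_apply, inner_sub_right, hTapp, inner_smul_right, hee,
        horth S' hS' e]
      ring
    have h2 : (1 : ℝ) ≤ ‖(T - S') e‖ := by
      have h3 := norm_inner_le_norm (𝕜 := ℂ) e ((T - S') e)
      rw [h1, he1, one_mul] at h3
      simpa using h3
    calc (1 : ℝ) ≤ ‖(T - S') e‖ := h2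
      _ ≤ ‖T - S'‖ * ‖e‖ := (T - S').le_opNorm e
      _ = ‖T - S'‖ := by rw [he1, mul_one]
  have hT1 : ‖T‖ ≤ 1 := by
    refine ContinuousLinearMap.opNorm_le_bound _ zero_le_one fun x => ?_
    rw [hTapp, norm_smul, he1, mul_one, one_mul]
    exact (norm_inner_le_norm e x).trans (by rw [he1, one_mul])
  set S₁ : H →L[ℂ] H := (((‖S₀‖ : ℝ) : ℂ))⁻¹ • S₀ with hS₁def
  have hnS₀ : ‖S₀‖ ≠ 0 := norm_ne_zero_iff.mpr hS₀0
  have hS₁V : S₁ ∈ V := Submodule.smul_mem _ _ hS₀V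
  have hS₁0 : S₁ ≠ 0 := by
    apply smul_ne_zero _ hS₀0
    simpa using hnS₀
  have hS₁e : S₁ e = 0 := by rw [hS₁def, ContinuousLinearMap.smul_apply, hS₀e, smul_zero]
  have hS₁norm : ‖S₁‖ = 1 := by
    rw [hS₁def, norm_smul, norm_inv, Complex.norm_real, norm_norm, inv_mul_cancel₀ hnS₀]
  have hup : ‖T - S₁‖ ≤ 1 := by
    refine ContinuousLinearMap.opNorm_le_bound _ zero_le_one fun x => ?_
    set a : ℂ := inner ℂ e x with ha
    set y : H := x - a • e with hy
    have hey : (inner ℂ e y : ℂ) = 0 := by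
      rw [hy, inner_sub_right, inner_smul_right, hee, mul_one, ← ha, sub_self]
    have hxy : x = a • e + y := by rw [hy]; abel
    have hS₁x : S₁ x = S₁ y := by
      conv_lhs => rw [hxy]
      rw [map_add, map_smul, hS₁e, smul_zero, zero_add]
    have happ : (T - S₁) x = a • e + -(S₁ y) := by
      rw [ContinuousLinearMap.sub_apply, hTapp, hS₁x, ← ha, sub_eq_add_neg]
    have ho1 : (inner ℂ (a • e) (-(S₁ y)) : ℂ) = 0 := by
      rw [inner_neg_right, inner_smul_left, horth S₁ hS₁V y, mul_zero, neg_zero]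
    have hpyth1 : ‖(T - S₁) x‖ * ‖(T - S₁) x‖ = ‖a • e‖ * ‖a • e‖ + ‖S₁ y‖ * ‖S₁ y‖ := by
      rw [happ, norm_add_sq_eq_norm_sq_add_norm_sq_of_inner_eq_zero _ _ ho1, norm_neg]
    have ho2 : (inner ℂ (a • e) y : ℂ) = 0 := by
      rw [inner_smul_left, hey, mul_zero]
    have hpyth2 : ‖x‖ * ‖x‖ = ‖a • e‖ * ‖a • e‖ + ‖y‖ * ‖y‖ := by
      conv_lhs => rw [hxy]
      exact norm_add_sq_eq_norm_sq_add_norm_sq_of_inner_eq_zero _ _ ho2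
    have hSy : ‖S₁ y‖ ≤ ‖y‖ := by
      calc ‖S₁ y‖ ≤ ‖S₁‖ * ‖y‖ := S₁.le_opNorm y
        _ = ‖y‖ := by rw [hS₁norm, one_mul]
    have hle : ‖(T - S₁) x‖ * ‖(T - S₁) x‖ ≤ ‖x‖ * ‖x‖ := by
      rw [hpyth1, hpyth2]
      have h4 : ‖S₁ y‖ * ‖S₁ y‖ ≤ ‖y‖ * ‖y‖ := mul_self_le_mul_self (norm_nonneg _) hSy
      linarith
    rw [one_mul]
    nlinarith [norm_nonneg ((T - S₁) x), norm_nonneg x]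
  refine ⟨T, hTcomp, ?_⟩
  rintro ⟨S, _, huniq⟩
  have hP0 : ((0 : H →L[ℂ] H) ∈ V ∧ ∀ S' ∈ V, ‖T - 0‖ ≤ ‖T - S'‖) :=
    ⟨V.zero_mem, fun S' hS' => by rw [sub_zero]; exact hT1.trans (hlow S' hS')⟩
  have hP1 : (S₁ ∈ V ∧ ∀ S' ∈ V, ‖T - S₁‖ ≤ ‖T - S'‖) :=
    ⟨hS₁V, fun S' hS' => hup.trans (hlow S' hS')⟩
  have h01 : (0 : H →L[ℂ] H) = S₁ := (huniq 0 hP0).trans (huniq S₁ hP1).symm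
  exact hS₁0 h01.symm
end

section
/- Let H be a complex Hilbert space, let B(H) be the algebra of bounded linear operators on H with the operator norm, and let x ∈ B(H) be non-zero. Then ℂx is a Chebyshev subspace of B(H) if and only if x is left invertible (there exists y ∈ B(H) with yx = 1) or right invertible (there exists y ∈ B(H) with xy = 1). -/
set_option maxHeartbeats 2000000
set_option synthInstance.maxHeartbeats 1000000

open ContinuousLinearMap Submodule
open scoped InnerProductSpace ComplexConjugate

section ChebyshevAux

variable {H : Type*} [NormedAddCommGroup H] [InnerProductSpace ℂ H] [CompleteSpace H]

private lemma key_unique (z : H →L[ℂ] H) (hz : z ≠ 0) {m : ℝ} (hm : 0 < m)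
    (hlow : ∀ h : H, m * ‖h‖ ≤ ‖z h‖) (b : H →L[ℂ] H) (c : ℂ) {d : ℝ}
    (hb : ‖b‖ ≤ d) (hbc : ‖b - c • z‖ ≤ d) (hmid : d ≤ ‖b - (c/2) • z‖) : c = 0 := by
  by_contra hc
  have hd0 : (0:ℝ) ≤ d := le_trans (norm_nonneg b) hb
  have hczero : c • z ≠ 0 := smul_ne_zero hc hz
  rcases eq_or_lt_of_le hd0 with hd | hd
  · apply hczero
    have h1 : c • z = b - (b - c • z) := by abel
    have : ‖c • z‖ ≤ 0 := by
      calc ‖c • z‖ = ‖b - (b - c • z)‖ := by rw [← h1]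
        _ ≤ ‖b‖ + ‖b - c • z‖ := norm_sub_le _ _
        _ ≤ d + d := add_le_add hb hbc
        _ ≤ 0 := by linarith [hd.symm]
    exact norm_le_zero_iff.mp this
  · have hcn : (0:ℝ) < ‖c‖ := norm_pos_iff.mpr hc
    have hmid' : ‖b - (c/2) • z‖ = d := by
      refine le_antisymm ?_ hmid
      have h2 : b - (c/2) • z = ((2:ℂ))⁻¹ • (b + (b - c • z)) := by module
      rw [h2, norm_smul]
      have : ‖((2:ℂ))⁻¹‖ = 2⁻¹ := by
        rw [norm_inv]; norm_num
      rw [this]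
      calc (2:ℝ)⁻¹ * ‖b + (b - c • z)‖ ≤ 2⁻¹ * (‖b‖ + ‖b - c • z‖) :=
            by gcongr; exact norm_add_le _ _
        _ ≤ 2⁻¹ * (d + d) := by gcongr
        _ = d := by ring
    -- choose ε and a near-norming vector
    set ε : ℝ := min (d/2) ((m*‖c‖)^2/(64*d)) with hεdef
    have hε : 0 < ε := by
      apply lt_min (by linarith)
      positivity
    have hεd : ε ≤ d/2 := min_le_left _ _
    have hεc : ε ≤ (m*‖c‖)^2/(64*d) := min_le_right _ _
    have hlt : d - ε < ‖b - (c/2) • z‖ := by rw [hmid']; linarith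
    obtain ⟨h, hh1, hh2⟩ := (b - (c/2) • z).exists_lt_apply_of_lt_opNorm hlt
    -- basic facts
    have happ : (b - (c/2) • z) h = b h - (c/2) • z h := by simp
    have h2app : b h + (b h - c • z h) = (2:ℂ) • ((b - (c/2) • z) h) := by
      rw [happ]; module
    have hu : ‖b h‖ ≤ d := by
      calc ‖b h‖ ≤ ‖b‖ * ‖h‖ := b.le_opNorm h
        _ ≤ d * 1 := by
            apply mul_le_mul hb (le_of_lt hh1) (norm_nonneg h) hd0
        _ = d := mul_one d
    have hw : ‖(b - c • z) h‖ ≤ d := by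
      calc ‖(b - c • z) h‖ ≤ ‖b - c • z‖ * ‖h‖ := (b - c • z).le_opNorm h
        _ ≤ d * 1 := mul_le_mul hbc (le_of_lt hh1) (norm_nonneg h) hd0
        _ = d := mul_one d
    have hwapp : (b - c • z) h = b h - c • z h := by simp
    -- norm of h from below
    have hhge : (d - ε)/d < ‖h‖ := by
      rw [div_lt_iff₀ hd]
      calc d - ε < ‖(b - (c/2) • z) h‖ := hh2
        _ ≤ ‖b - (c/2) • z‖ * ‖h‖ := (b - (c/2) • z).le_opNorm h
        _ = ‖h‖ * d := by rw [hmid']; ring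
    -- parallelogram
    have hpar := parallelogram_law_with_norm ℂ (b h) (b h - c • z h)
    have hsum : 2 * (d - ε) < ‖b h + (b h - c • z h)‖ := by
      rw [h2app, norm_smul]
      have : ‖(2:ℂ)‖ = 2 := by norm_num
      rw [this]
      nlinarith [hh2]
    have hdiff : ‖b h - (b h - c • z h)‖ = ‖c‖ * ‖z h‖ := by
      have : b h - (b h - c • z h) = c • z h := by module
      rw [this, norm_smul]
    have hzlow : m * ‖h‖ ≤ ‖z h‖ := hlow h
    have hw' : ‖b h - c • z h‖ ≤ d := by rwa [hwapp] at hw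
    have hde : 0 < d - ε := by linarith
    have hsum2 : (2*(d-ε))^2 ≤ ‖b h + (b h - c • z h)‖^2 :=
      pow_le_pow_left₀ (by linarith) hsum.le 2
    have hdiffge : ‖c‖ * (m * ‖h‖) ≤ ‖c‖ * ‖z h‖ :=
      mul_le_mul_of_nonneg_left hzlow hcn.le
    have hdiff2 : (‖c‖ * (m * ‖h‖))^2 ≤ (‖c‖ * ‖z h‖)^2 :=
      pow_le_pow_left₀ (by positivity) hdiffge 2
    have hu2 : ‖b h‖ * ‖b h‖ ≤ d * d := mul_le_mul hu hu (norm_nonneg _) hd0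
    have hw2 : ‖b h - c • z h‖ * ‖b h - c • z h‖ ≤ d * d :=
      mul_le_mul hw' hw' (norm_nonneg _) hd0
    have hdiffsq : ‖b h - (b h - c • z h)‖ * ‖b h - (b h - c • z h)‖ = (‖c‖ * ‖z h‖)^2 := by
      rw [hdiff]; ring
    have hub : (‖c‖ * (m * ‖h‖))^2 ≤ 8 * d * ε := by
      nlinarith [hpar, hdiffsq, hsum2, hdiff2, hu2, hw2, sq_nonneg ε]
    have hh12 : (1:ℝ)/2 < ‖h‖ := by
      calc (1:ℝ)/2 ≤ (d - ε)/d := by rw [le_div_iff₀ hd]; linarith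
        _ < ‖h‖ := hhge
    have hh4 : (1:ℝ)/4 < ‖h‖ * ‖h‖ := by nlinarith [hh12]
    have hlb : (m * ‖c‖ / 2)^2 < (‖c‖ * (m * ‖h‖))^2 := by
      nlinarith [hh4, mul_pos (mul_pos hm hcn) (mul_pos hm hcn)]
    have h8 : 8 * d * ε ≤ (m * ‖c‖)^2 / 8 := by
      calc 8 * d * ε ≤ 8 * d * ((m*‖c‖)^2/(64*d)) := by gcongr
        _ = (m*‖c‖)^2 / 8 := by field_simp; ring
    nlinarith [hub, hlb, h8, mul_pos hm hcn]

private lemma exists_best (x : H →L[ℂ] H) (hx : x ≠ 0) (a : H →L[ℂ] H) :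
    ∃ c : ℂ, ∀ c' : ℂ, ‖a - c • x‖ ≤ ‖a - c' • x‖ := by
  have hxn : (0:ℝ) < ‖x‖ := norm_pos_iff.mpr hx
  set R : ℝ := 2 * ‖a‖ / ‖x‖ with hR
  have hR0 : 0 ≤ R := by positivity
  have hK : IsCompact (Metric.closedBall (0:ℂ) R) := isCompact_closedBall 0 R
  have hne : (Metric.closedBall (0:ℂ) R).Nonempty := ⟨0, by simpa using hR0⟩
  have hcont : ContinuousOn (fun c : ℂ => ‖a - c • x‖) (Metric.closedBall 0 R) := by
    apply Continuous.continuousOn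
    exact (continuous_const.sub (continuous_id.smul continuous_const)).norm
  obtain ⟨c, hcK, hmin⟩ := hK.exists_isMinOn hne hcont
  refine ⟨c, fun c' => ?_⟩
  by_cases hc' : c' ∈ Metric.closedBall (0:ℂ) R
  · exact hmin hc'
  · have h0K : (0:ℂ) ∈ Metric.closedBall (0:ℂ) R := by simpa using hR0
    have h1 : ‖a - c • x‖ ≤ ‖a‖ := by
      have := hmin h0K
      simpa using this
    have h2 : R < ‖c'‖ := by
      simpa [Metric.mem_closedBall, dist_eq_norm] using hc'
    have h3 : ‖a‖ ≤ ‖a - c' • x‖ := by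
      have h4 : ‖c' • x‖ - ‖a‖ ≤ ‖a - c' • x‖ := by
        have := norm_sub_norm_le (c' • x) a
        calc ‖c' • x‖ - ‖a‖ ≤ ‖c' • x - a‖ := norm_sub_norm_le _ _
          _ = ‖a - c' • x‖ := norm_sub_rev _ _
      have h5 : 2 * ‖a‖ ≤ ‖c'‖ * ‖x‖ := by
        calc 2 * ‖a‖ = R * ‖x‖ := by rw [hR]; field_simp
          _ ≤ ‖c'‖ * ‖x‖ := by gcongr
      rw [norm_smul] at h4
      linarith
    exact le_trans h1 h3

private lemma exists_flat_ker (x : H →L[ℂ] H) (hx : x ≠ 0)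
    {u v : H} (hu1 : ‖u‖ = 1) (hv1 : ‖v‖ = 1) (hxu : x u = 0) (hxv : (star x) v = 0) :
    ∃ (a : H →L[ℂ] H) (c₀ : ℂ), c₀ ≠ 0 ∧ ‖a‖ ≤ 1 ∧ ‖a - c₀ • x‖ ≤ 1 ∧
      ∀ c : ℂ, 1 ≤ ‖a - c • x‖ := by
  have hxn : (0:ℝ) < ‖x‖ := norm_pos_iff.mpr hx
  set a : H →L[ℂ] H := (innerSL ℂ u).smulRight v with ha
  have happ : ∀ h : H, a h = (⟪u, h⟫_ℂ) • v := fun h => rfl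
  set c₀ : ℂ := ((‖x‖⁻¹ : ℝ) : ℂ) with hc₀
  have hc₀ne : c₀ ≠ 0 := by
    simp only [hc₀, ne_eq, Complex.ofReal_eq_zero, inv_eq_zero]
    exact ne_of_gt hxn
  have hadj : ∀ h : H, ⟪v, x h⟫_ℂ = 0 := by
    intro h
    have h1 : ⟪(ContinuousLinearMap.adjoint x) v, h⟫_ℂ = ⟪v, x h⟫_ℂ :=
      ContinuousLinearMap.adjoint_inner_left x h v
    rw [← h1]
    rw [show (ContinuousLinearMap.adjoint x) v = (star x) v from rfl, hxv]
    simp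
  -- operator norm of a is ≤ 1
  have hanorm : ‖a‖ ≤ 1 := by
    apply opNorm_le_bound _ zero_le_one
    intro h
    rw [happ, norm_smul, hv1, mul_one, one_mul]
    calc ‖⟪u, h⟫_ℂ‖ ≤ ‖u‖ * ‖h‖ := norm_inner_le_norm u h
      _ = ‖h‖ := by rw [hu1, one_mul]
  -- lower bound
  have hlower : ∀ c : ℂ, 1 ≤ ‖a - c • x‖ := by
    intro c
    have h1 : (a - c • x) u = v := by
      rw [sub_apply, smul_apply, happ, hxu, smul_zero, sub_zero]
      rw [inner_self_eq_norm_sq_to_K, hu1]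
      norm_num
    calc (1:ℝ) = ‖v‖ := hv1.symm
      _ = ‖(a - c • x) u‖ := by rw [h1]
      _ ≤ ‖a - c • x‖ * ‖u‖ := le_opNorm _ _
      _ = ‖a - c • x‖ := by rw [hu1, mul_one]
  -- upper bound at c₀
  have hupper : ‖a - c₀ • x‖ ≤ 1 := by
    apply opNorm_le_bound _ zero_le_one
    intro h
    set k : H := h - (⟪u, h⟫_ℂ) • u with hk
    have hxk : x h = x k := by
      rw [hk, map_sub, map_smul, hxu, smul_zero, sub_zero]
    have hpyth : ‖⟪u, h⟫_ℂ‖^2 + ‖k‖^2 = ‖h‖^2 := by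
      have h2 : ‖k‖^2 = ‖h‖^2 - 2 * RCLike.re (⟪h, (⟪u, h⟫_ℂ) • u⟫_ℂ) + ‖(⟪u, h⟫_ℂ) • u‖^2 :=
        norm_sub_sq h _
      have h3 : ⟪h, (⟪u, h⟫_ℂ) • u⟫_ℂ = (⟪u, h⟫_ℂ) * ⟪h, u⟫_ℂ := inner_smul_right h u _
      have h4 : ⟪h, u⟫_ℂ = conj (⟪u, h⟫_ℂ) := by
        rw [← inner_conj_symm]
      have h5 : RCLike.re ((⟪u, h⟫_ℂ) * conj (⟪u, h⟫_ℂ)) = ‖⟪u, h⟫_ℂ‖^2 := by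
        rw [RCLike.mul_conj]
        norm_cast
      have h6 : ‖(⟪u, h⟫_ℂ) • u‖^2 = ‖⟪u, h⟫_ℂ‖^2 := by
        rw [norm_smul, hu1, mul_one]
      rw [h3, h4, h5, h6] at h2
      linarith
    have hsq : ‖(a - c₀ • x) h‖^2 ≤ ‖h‖^2 := by
      have h7 : (a - c₀ • x) h = (⟪u, h⟫_ℂ) • v - c₀ • x h := by
        rw [sub_apply, smul_apply, happ]
      have h8 : ‖(⟪u, h⟫_ℂ) • v - c₀ • x h‖^2
          = ‖(⟪u, h⟫_ℂ) • v‖^2 - 2 * RCLike.re (⟪(⟪u, h⟫_ℂ) • v, c₀ • x h⟫_ℂ)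
            + ‖c₀ • x h‖^2 := norm_sub_sq _ _
      have h9 : ⟪(⟪u, h⟫_ℂ) • v, c₀ • x h⟫_ℂ = 0 := by
        rw [inner_smul_right, inner_smul_left, hadj h]
        ring
      have h10 : ‖(⟪u, h⟫_ℂ) • v‖^2 = ‖⟪u, h⟫_ℂ‖^2 := by rw [norm_smul, hv1, mul_one]
      have h11 : ‖c₀ • x h‖ ≤ ‖k‖ := by
        rw [norm_smul, hxk]
        have h12 : ‖c₀‖ = ‖x‖⁻¹ := by
          rw [hc₀]
          rw [Complex.norm_real]
          exact abs_of_pos (inv_pos.mpr hxn)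
        rw [h12]
        calc ‖x‖⁻¹ * ‖x k‖ ≤ ‖x‖⁻¹ * (‖x‖ * ‖k‖) := by
              gcongr
              exact le_opNorm x k
          _ = ‖k‖ := by field_simp
      have h13 : ‖c₀ • x h‖^2 ≤ ‖k‖^2 := by
        apply pow_le_pow_left₀ (norm_nonneg _) h11
      rw [h7, h8, h9]
      simp only [map_zero, mul_zero, sub_zero]
      rw [h10]
      linarith [hpyth]
    rw [one_mul]
    nlinarith [hsq, norm_nonneg ((a - c₀ • x) h), norm_nonneg h]
  exact ⟨a, c₀, hc₀ne, hanorm, hupper, hlower⟩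

private lemma exists_flat (z : H →L[ℂ] H) (hz : z ≠ 0)
    (hinj : ∀ h : H, z h = 0 → h = 0) (hns : ¬ IsUnit (star z * z)) :
    ∃ (a : H →L[ℂ] H) (c₀ : ℂ), c₀ ≠ 0 ∧ ‖a‖ ≤ 1 ∧ ‖a - c₀ • z‖ ≤ 1 ∧
      ∀ c : ℂ, 1 ≤ ‖a - c • z‖ := by
  -- the absolute value of z
  set m : H →L[ℂ] H := CFC.sqrt (star z * z) with hmdef
  have hmnn : (0:H →L[ℂ] H) ≤ m := CFC.sqrt_nonneg _
  have hmsa : IsSelfAdjoint m := IsSelfAdjoint.of_nonneg hmnn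
  have hmsq : m ^ 2 = star z * z := CFC.sq_sqrt (a := star z * z) (star_mul_self_nonneg z)
  have hadj : ∀ g h : H, ⟪m g, h⟫_ℂ = ⟪g, m h⟫_ℂ := by
    intro g h
    have h1 : ⟪(ContinuousLinearMap.adjoint m) g, h⟫_ℂ = ⟪g, m h⟫_ℂ :=
      ContinuousLinearMap.adjoint_inner_left m h g
    rw [← h1]
    congr 1
    rw [← ContinuousLinearMap.star_eq_adjoint, hmsa.star_eq]
  -- ‖m h‖ = ‖z h‖
  have hkey : ∀ h : H, ‖m h‖ = ‖z h‖ := by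
    intro h
    have h1 : ⟪m h, m h⟫_ℂ = ⟪h, m (m h)⟫_ℂ := hadj h (m h)
    have h15 : m (m h) = (star z) (z h) := by
      have : m (m h) = (m ^ 2) h := by rw [sq, mul_apply_eq_comp]
      rw [this, hmsq, mul_apply_eq_comp]
    have h2 : ⟪h, (star z) (z h)⟫_ℂ = ⟪z h, z h⟫_ℂ := by
      rw [ContinuousLinearMap.star_eq_adjoint]
      exact ContinuousLinearMap.adjoint_inner_right z h (z h)
    have h3 : ‖m h‖^2 = ‖z h‖^2 := by
      have e1 : RCLike.re ⟪m h, m h⟫_ℂ = ‖m h‖^2 := inner_self_eq_norm_sq (m h)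
      have e2 : RCLike.re ⟪z h, z h⟫_ℂ = ‖z h‖^2 := inner_self_eq_norm_sq (z h)
      rw [← e1, ← e2, h1, h15, h2]
    have := congrArg Real.sqrt h3
    rwa [Real.sqrt_sq (norm_nonneg _), Real.sqrt_sq (norm_nonneg _)] at this
  -- m is injective with dense range
  have hminj : Function.Injective (m : H →ₗ[ℂ] H) := by
    intro g h hgh
    have h1 : m (g - h) = 0 := by
      simp only [ContinuousLinearMap.coe_coe] at hgh
      rw [map_sub]
      rw [show m g = m h from hgh]
      simp
    have h2 : z (g - h) = 0 := by
      have := hkey (g - h)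
      rw [h1, norm_zero] at this
      exact norm_eq_zero.mp this.symm
    have := hinj _ h2
    exact sub_eq_zero.mp this
  have hmne : m ≠ 0 := by
    intro h0
    apply hz
    ext h
    have := hkey h
    rw [h0] at this
    simp only [ContinuousLinearMap.zero_apply, norm_zero] at this
    simpa using (norm_eq_zero.mp this.symm)
  set R : Submodule ℂ H := LinearMap.range (m : H →ₗ[ℂ] H) with hRdef
  have hdense : Dense (R : Set H) := by
    rw [Submodule.dense_iff_topologicalClosure_eq_top]
    rw [Submodule.topologicalClosure_eq_top_iff]
    rw [Submodule.eq_bot_iff]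
    intro v hv
    rw [Submodule.mem_orthogonal] at hv
    have h1 : ⟪m (m v), v⟫_ℂ = 0 := hv (m (m v)) ⟨m v, rfl⟩
    have h2 : ⟪m v, m v⟫_ℂ = 0 := by
      rw [← h1, hadj (m v) v]
    have h3 : m v = 0 := by
      rwa [inner_self_eq_zero] at h2
    have h4 : (m : H →ₗ[ℂ] H) v = 0 := h3
    have := hminj (a₂ := 0) (by simpa using h4)
    exact this
  -- the partial isometry w with w ∘ m = z
  set equiv : H ≃ₗ[ℂ] R := LinearEquiv.ofInjective (m : H →ₗ[ℂ] H) hminj with hequiv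
  set f₀ : R →ₗ[ℂ] H := (z : H →ₗ[ℂ] H) ∘ₗ (equiv.symm : R →ₗ[ℂ] H) with hf₀
  have hf₀norm : ∀ r : R, ‖f₀ r‖ = ‖(r : H)‖ := by
    intro r
    set g : H := equiv.symm r with hg
    have h1 : (r : H) = m g := by
      have h2 : equiv g = r := equiv.apply_symm_apply r
      have h3 : ((equiv g : R) : H) = (m : H →ₗ[ℂ] H) g := LinearEquiv.ofInjective_apply _ g
      rw [← h2, h3]
      rfl
    have h4 : f₀ r = z g := rfl
    rw [h4, h1]
    exact (hkey g).symm
  set f : R →L[ℂ] H := f₀.mkContinuous 1 (fun r => by rw [hf₀norm r, one_mul]; rfl) with hf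
  set e : R →L[ℂ] H := R.subtypeL with he
  have hde : DenseRange e := by
    have : Set.range e = (R : Set H) := Subtype.range_coe
    rw [DenseRange, this]
    exact hdense
  have hue : IsUniformInducing e := isometry_subtype_coe.isUniformInducing
  set w : H →L[ℂ] H := f.extend e with hw
  have hwm : ∀ h : H, w (m h) = z h := by
    intro h
    have hmem : m h ∈ R := ⟨h, rfl⟩
    have h1 : m h = e ⟨m h, hmem⟩ := rfl
    rw [h1, hw, ContinuousLinearMap.extend_eq f hde hue]
    have h2 : f ⟨m h, hmem⟩ = f₀ ⟨m h, hmem⟩ := rfl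
    rw [h2, hf₀]
    have h3 : equiv h = ⟨m h, hmem⟩ := by
      apply Subtype.ext
      exact LinearEquiv.ofInjective_apply _ h
    have h4 : equiv.symm ⟨m h, hmem⟩ = h := by
      rw [← h3, LinearEquiv.symm_apply_apply]
    show z (equiv.symm ⟨m h, hmem⟩) = z h
    rw [h4]
  have hwiso : ∀ v : H, ‖w v‖ = ‖v‖ := by
    have : (fun v : H => ‖w v‖) = (fun v : H => ‖v‖) := by
      apply Continuous.ext_on hdense
      · exact w.continuous.norm
      · exact continuous_norm
      · rintro v ⟨h, rfl⟩
        show ‖w ((m : H →ₗ[ℂ] H) h)‖ = ‖(m : H →ₗ[ℂ] H) h‖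
        have : (m : H →ₗ[ℂ] H) h = m h := rfl
        rw [this, hwm h, hkey h]
    exact fun v => congrFun this v
  -- composition with w preserves norms
  have hcomp : ∀ T : H →L[ℂ] H, ‖w.comp T‖ = ‖T‖ := by
    intro T
    apply le_antisymm
    · apply opNorm_le_bound _ (norm_nonneg T)
      intro h
      rw [ContinuousLinearMap.comp_apply, hwiso]
      exact T.le_opNorm h
    · apply opNorm_le_bound _ (norm_nonneg _)
      intro h
      calc ‖T h‖ = ‖w (T h)‖ := (hwiso _).symm
        _ = ‖(w.comp T) h‖ := rfl
        _ ≤ ‖w.comp T‖ * ‖h‖ := (w.comp T).le_opNorm h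
  -- w - c • z = w ∘ (1 - c • m)
  have hfactor : ∀ c : ℂ, w - c • z = w.comp (1 - c • m) := by
    intro c
    ext h
    simp only [ContinuousLinearMap.sub_apply, ContinuousLinearMap.smul_apply,
      ContinuousLinearMap.comp_apply, ContinuousLinearMap.one_apply]
    rw [map_sub, map_smul, hwm h]
  have hnormid : ∀ c : ℂ, ‖w - c • z‖ = ‖1 - c • m‖ := by
    intro c
    rw [hfactor c, hcomp]
  -- nontriviality
  obtain ⟨h₀, hh₀⟩ : ∃ h : H, z h ≠ 0 := by
    by_contra hcon
    push_neg at hcon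
    exact hz (by ext h; simpa using hcon h)
  haveI : Nontrivial H := nontrivial_of_ne (z h₀) 0 hh₀
  -- lower bound: 1 ≤ ‖1 - c • m‖
  have hlower : ∀ c : ℂ, 1 ≤ ‖(1 : H →L[ℂ] H) - c • m‖ := by
    intro c
    have hunit : ¬ IsUnit (c • m) := by
      rcases eq_or_ne c 0 with rfl | hc
      · rw [zero_smul]
        rw [isUnit_zero_iff]
        intro h01
        exact one_ne_zero h01.symm
      · intro hu
        have hmu : IsUnit m := by
          obtain ⟨yv, hy1, hy2⟩ := isUnit_iff_exists.mp hu
          apply isUnit_iff_exists.mpr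
          refine ⟨c • yv, ?_, ?_⟩
          · have : m * (c • yv) = c • (m * yv) := by
              rw [mul_smul_comm]
            rw [this]
            have h5 : (c • m) * yv = c • (m * yv) := smul_mul_assoc c m yv
            rw [← h5, hy1]
          · have : (c • yv) * m = c • (yv * m) := smul_mul_assoc c yv m
            rw [this]
            have h5 : yv * (c • m) = c • (yv * m) := mul_smul_comm c yv m
            rw [← h5, hy2]
        apply hns
        have : m * m = star z * z := by rw [← sq, hmsq]
        rw [← this]
        exact hmu.mul hmu
    have hmem : (1:ℂ) ∈ spectrum ℂ ((1 : H →L[ℂ] H) - c • m) := by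
      rw [spectrum.mem_iff]
      have : algebraMap ℂ (H →L[ℂ] H) 1 - ((1 : H →L[ℂ] H) - c • m) = c • m := by
        rw [map_one]; abel
      rw [this]
      exact hunit
    have := spectrum.norm_le_norm_of_mem hmem
    simpa using this
  -- upper bound: ‖1 - t • m‖ ≤ 1 for t = ‖m‖⁻¹
  have hmn : (0:ℝ) < ‖m‖ := norm_pos_iff.mpr hmne
  set t : ℝ := ‖m‖⁻¹ with ht
  have htpos : 0 < t := inv_pos.mpr hmn
  set n : H →L[ℂ] H := CFC.sqrt m with hndef
  have hnnn : (0:H →L[ℂ] H) ≤ n := CFC.sqrt_nonneg _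
  have hnsa : IsSelfAdjoint n := IsSelfAdjoint.of_nonneg hnnn
  have hnsq : n ^ 2 = m := CFC.sq_sqrt (a := m) hmnn
  have hnadj : ∀ g h : H, ⟪n g, h⟫_ℂ = ⟪g, n h⟫_ℂ := by
    intro g h
    have h1 : ⟪(ContinuousLinearMap.adjoint n) g, h⟫_ℂ = ⟪g, n h⟫_ℂ :=
      ContinuousLinearMap.adjoint_inner_left n h g
    rw [← h1]
    congr 1
    rw [← ContinuousLinearMap.star_eq_adjoint, hnsa.star_eq]
  have hnm : ∀ h : H, m h = n (n h) := by
    intro h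
    rw [← mul_apply_eq_comp, ← sq, hnsq]
  have hnorm2 : ‖m‖ = ‖n‖ * ‖n‖ := by
    have h1 : ‖star n * n‖ = ‖n‖ * ‖n‖ := CStarRing.norm_star_mul_self
    rw [← h1, hnsa.star_eq, ← sq, hnsq]
  have hupper : ‖(1 : H →L[ℂ] H) - ((t:ℂ)) • m‖ ≤ 1 := by
    apply opNorm_le_bound _ zero_le_one
    intro h
    rw [one_mul]
    have h7 : ((1 : H →L[ℂ] H) - (t:ℂ) • m) h = h - (t:ℂ) • m h := by
      simp
    have h8 : ‖h - (t:ℂ) • m h‖^2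
        = ‖h‖^2 - 2 * RCLike.re ⟪h, (t:ℂ) • m h⟫_ℂ + ‖(t:ℂ) • m h‖^2 := norm_sub_sq _ _
    have h9 : RCLike.re ⟪h, (t:ℂ) • m h⟫_ℂ = t * ‖n h‖^2 := by
      rw [inner_smul_right]
      have e1 : ⟪h, m h⟫_ℂ = ⟪n h, n h⟫_ℂ := by
        rw [hnm h, ← hnadj h (n h)]
      have e2 : RCLike.re ((t:ℂ) * ⟪h, m h⟫_ℂ) = t * RCLike.re ⟪h, m h⟫_ℂ := by
        simp [RCLike.re_to_complex]
      rw [e2, e1, inner_self_eq_norm_sq]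
    have h10 : ‖m h‖ ≤ ‖n‖ * ‖n h‖ := by
      rw [hnm h]
      exact n.le_opNorm (n h)
    have h11 : ‖(t:ℂ) • m h‖^2 ≤ t^2 * (‖n‖ * ‖n h‖)^2 := by
      rw [norm_smul]
      have : ‖(t:ℂ)‖ = t := by
        rw [Complex.norm_real]
        exact abs_of_pos htpos
      rw [this, mul_pow]
      gcongr

    have h12 : t^2 * (‖n‖ * ‖n h‖)^2 = t * ‖n h‖^2 := by
      have : ‖n‖ * ‖n‖ = ‖m‖ := hnorm2.symm
      calc t^2 * (‖n‖ * ‖n h‖)^2 = t * t * (‖n‖*‖n‖) * ‖n h‖^2 := by ring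
        _ = t * (t * ‖m‖) * ‖n h‖^2 := by rw [this]; ring
        _ = t * ‖n h‖^2 := by
            have : t * ‖m‖ = 1 := by
              rw [ht]; field_simp
            rw [this, mul_one]
    have hsq : ‖h - (t:ℂ) • m h‖^2 ≤ ‖h‖^2 := by
      rw [h8, h9]
      have := h11.trans (le_of_eq h12)
      nlinarith [sq_nonneg (‖n h‖), htpos]
    rw [h7]
    nlinarith [hsq, norm_nonneg (h - (t:ℂ) • m h), norm_nonneg h]
  -- assemble
  refine ⟨w, (t:ℂ), ?_, ?_, ?_, ?_⟩
  · simpa using ne_of_gt htpos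
  · apply opNorm_le_bound _ zero_le_one
    intro h
    rw [hwiso, one_mul]
  · rw [hnormid]
    exact hupper
  · intro c
    rw [hnormid]
    exact hlower c

private lemma cheb_of_invertible (x : H →L[ℂ] H) (hx : x ≠ 0)
    (hinv : (∃ y : H →L[ℂ] H, y * x = 1) ∨ (∃ y : H →L[ℂ] H, x * y = 1))
    (a : H →L[ℂ] H) :
    ∃! v : H →L[ℂ] H,
        v ∈ Submodule.span ℂ ({x} : Set (H →L[ℂ] H)) ∧
        ∀ w ∈ Submodule.span ℂ ({x} : Set (H →L[ℂ] H)), ‖a - v‖ ≤ ‖a - w‖ := by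
  obtain ⟨c, hc⟩ := exists_best x hx a
  refine ⟨c • x, ⟨mem_span_singleton.mpr ⟨c, rfl⟩, ?_⟩, ?_⟩
  · rintro w hw
    obtain ⟨c', rfl⟩ := mem_span_singleton.mp hw
    exact hc c'
  · rintro v' ⟨hv'mem, hv'⟩
    obtain ⟨c', rfl⟩ := mem_span_singleton.mp hv'mem
    have hle1 : ‖a - c' • x‖ ≤ ‖a - c • x‖ :=
      hv' (c • x) (mem_span_singleton.mpr ⟨c, rfl⟩)
    have heq : c' = c := by
      rcases hinv with ⟨y, hyx⟩ | ⟨y, hxy⟩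
      · -- x left invertible, hence bounded below
        have hy : y ≠ 0 := by
          rintro rfl
          rw [zero_mul] at hyx
          have : x = 0 := by
            calc x = x * 1 := (mul_one x).symm
              _ = x * 0 := by rw [← hyx]
              _ = 0 := mul_zero x
          exact hx this
        have hyn : (0:ℝ) < ‖y‖ := norm_pos_iff.mpr hy
        have hlow : ∀ h : H, ‖y‖⁻¹ * ‖h‖ ≤ ‖x h‖ := by
          intro h
          have h1 : ‖h‖ ≤ ‖y‖ * ‖x h‖ := by
            calc ‖h‖ = ‖(y * x) h‖ := by rw [hyx]; simp
              _ = ‖y (x h)‖ := by rw [mul_apply_eq_comp]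
              _ ≤ ‖y‖ * ‖x h‖ := y.le_opNorm _
          rw [inv_mul_le_iff₀ hyn]
          exact h1
        have hkey := key_unique x hx (inv_pos.mpr hyn) hlow (a - c • x) (c' - c)
          (d := ‖a - c • x‖) le_rfl
          (by
            have : a - c • x - (c' - c) • x = a - c' • x := by module
            rw [this]; exact hle1)
          (by
            have : a - c • x - ((c' - c)/2) • x = a - ((c + c')/2) • x := by module
            rw [this]; exact hc _)
        have := sub_eq_zero.mp hkey
        exact this
      · -- x right invertible, hence star x bounded below
        have hsx : star x ≠ 0 := by
          intro h
          apply hx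
          have := congrArg star h
          rwa [star_star, star_zero] at this
        have hyx' : star y * star x = 1 := by
          rw [← star_mul, hxy, star_one]
        have hy : star y ≠ 0 := by
          rintro h
          rw [h, zero_mul] at hyx'
          have : star x = 0 := by
            calc star x = star x * 1 := (mul_one _).symm
              _ = star x * 0 := by rw [← hyx']
              _ = 0 := mul_zero _
          exact hsx this
        have hyn : (0:ℝ) < ‖star y‖ := norm_pos_iff.mpr hy
        have hlow : ∀ h : H, ‖star y‖⁻¹ * ‖h‖ ≤ ‖(star x) h‖ := by
          intro h
          have h1 : ‖h‖ ≤ ‖star y‖ * ‖(star x) h‖ := by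
            calc ‖h‖ = ‖(star y * star x) h‖ := by rw [hyx']; simp
              _ = ‖(star y) ((star x) h)‖ := by rw [mul_apply_eq_comp]
              _ ≤ ‖star y‖ * ‖(star x) h‖ := (star y).le_opNorm _
          rw [inv_mul_le_iff₀ hyn]
          exact h1
        have hstar1 : star (a - c • x) - (conj c' - conj c) • star x = star (a - c' • x) := by
          rw [star_sub, star_sub, star_smul, star_smul]
          simp only [Complex.star_def]
          module
        have hstar2 : star (a - c • x) - ((conj c' - conj c)/2) • star x
            = star (a - ((c + c')/2) • x) := by
          rw [star_sub, star_sub, star_smul, star_smul]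
          simp only [Complex.star_def, map_div₀, map_add]
          have h2 : (starRingEnd ℂ) 2 = 2 := by
            rw [Complex.conj_eq_iff_im]
            rfl
          rw [h2]
          module
        have hkey := key_unique (star x) hsx (inv_pos.mpr hyn) hlow
          (star (a - c • x)) (conj c' - conj c) (d := ‖a - c • x‖)
          (by rw [norm_star])
          (by rw [hstar1, norm_star]; exact hle1)
          (by rw [hstar2, norm_star]; exact hc _)
        have h2 : conj c' = conj c := sub_eq_zero.mp hkey
        have := congrArg conj h2
        simpa using this
    rw [heq]

private lemma flat_transfer (x : H →L[ℂ] H)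
    (h : ∃ (a : H →L[ℂ] H) (c₀ : ℂ), c₀ ≠ 0 ∧ ‖a‖ ≤ 1 ∧ ‖a - c₀ • star x‖ ≤ 1 ∧
      ∀ c : ℂ, 1 ≤ ‖a - c • star x‖) :
    ∃ (a : H →L[ℂ] H) (c₀ : ℂ), c₀ ≠ 0 ∧ ‖a‖ ≤ 1 ∧ ‖a - c₀ • x‖ ≤ 1 ∧
      ∀ c : ℂ, 1 ≤ ‖a - c • x‖ := by
  obtain ⟨a', c₀', hc0, h1, h2, h3⟩ := h
  have keystar : ∀ c : ℂ, star a' - (conj c) • x = star (a' - c • star x) := by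
    intro c
    rw [star_sub, star_smul, star_star]
    rfl
  refine ⟨star a', conj c₀', ?_, ?_, ?_, ?_⟩
  · intro hcc
    apply hc0
    have := congrArg conj hcc
    simpa using this
  · rw [norm_star]; exact h1
  · rw [keystar, norm_star]; exact h2
  · intro c
    have hc' : c = conj (conj c) := by simp
    rw [hc', keystar (conj c), norm_star]
    exact h3 _

end ChebyshevAux

set_option maxHeartbeats 2000000 in
set_option synthInstance.maxHeartbeats 1000000 in
/-- For a non-zero bounded operator `x` on a complex Hilbert space `H`, the line `ℂx` is a
Chebyshev subspace of `B(H)` iff `x` is left invertible or right invertible. -/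
theorem span_singleton_chebyshev_iff_one_sided_invertible
    {H : Type*} [NormedAddCommGroup H] [InnerProductSpace ℂ H] [CompleteSpace H]
    (x : H →L[ℂ] H) (hx : x ≠ 0) :
    (∀ a : H →L[ℂ] H, ∃! v : H →L[ℂ] H,
        v ∈ Submodule.span ℂ ({x} : Set (H →L[ℂ] H)) ∧
        ∀ w ∈ Submodule.span ℂ ({x} : Set (H →L[ℂ] H)), ‖a - v‖ ≤ ‖a - w‖) ↔
    ((∃ y : H →L[ℂ] H, y * x = 1) ∨ (∃ y : H →L[ℂ] H, x * y = 1)) := by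
  constructor
  · intro hcheb
    by_contra hn
    push_neg at hn
    obtain ⟨hL, hR⟩ := hn
    have hnsL : ¬ IsUnit (star x * x) := by
      intro hu
      obtain ⟨i, hi⟩ := hu.exists_left_inv
      exact hL (i * star x) (by rw [mul_assoc]; exact hi)
    have hnsR : ¬ IsUnit (x * star x) := by
      intro hu
      obtain ⟨i, hi⟩ := hu.exists_right_inv
      exact hR (star x * i) (by rw [← mul_assoc]; exact hi)
    obtain ⟨a, c₀, hc₀, ha1, ha2, ha3⟩ :
        ∃ (a : H →L[ℂ] H) (c₀ : ℂ), c₀ ≠ 0 ∧ ‖a‖ ≤ 1 ∧ ‖a - c₀ • x‖ ≤ 1 ∧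
          ∀ c : ℂ, 1 ≤ ‖a - c • x‖ := by
      by_cases hker : ∃ u : H, u ≠ 0 ∧ x u = 0
      · by_cases hker' : ∃ v : H, v ≠ 0 ∧ (star x) v = 0
        · obtain ⟨u, hu0, hu⟩ := hker
          obtain ⟨v, hv0, hv⟩ := hker'
          have hun : (0:ℝ) < ‖u‖ := norm_pos_iff.mpr hu0
          have hvn : (0:ℝ) < ‖v‖ := norm_pos_iff.mpr hv0
          set u' : H := ((‖u‖⁻¹ : ℝ) : ℂ) • u with hu'
          set v' : H := ((‖v‖⁻¹ : ℝ) : ℂ) • v with hv'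
          have hu1 : ‖u'‖ = 1 := by
            rw [hu', norm_smul, Complex.norm_real, Real.norm_eq_abs,
              abs_of_pos (inv_pos.mpr hun)]
            field_simp
          have hv1 : ‖v'‖ = 1 := by
            rw [hv', norm_smul, Complex.norm_real, Real.norm_eq_abs,
              abs_of_pos (inv_pos.mpr hvn)]
            field_simp
          have hxu : x u' = 0 := by rw [hu', map_smul, hu, smul_zero]
          have hxv : (star x) v' = 0 := by rw [hv', map_smul, hv, smul_zero]
          exact exists_flat_ker x hx hu1 hv1 hxu hxv
        · push_neg at hker'
          have hinj : ∀ h : H, (star x) h = 0 → h = 0 := by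
            intro h hh
            by_contra h0
            exact hker' h h0 hh
          have hsx : star x ≠ 0 := by
            intro h
            apply hx
            have := congrArg star h
            rwa [star_star, star_zero] at this
          have hns' : ¬ IsUnit (star (star x) * star x) := by
            rwa [star_star]
          exact flat_transfer x (exists_flat (star x) hsx hinj hns')
      · push_neg at hker
        have hinj : ∀ h : H, x h = 0 → h = 0 := by
          intro h hh
          by_contra h0
          exact hker h h0 hh
        exact exists_flat x hx hinj hnsL
    obtain ⟨v, _, huniq⟩ := hcheb a
    have h0 : (0 : H →L[ℂ] H) = v := by
      apply huniq
      refine ⟨Submodule.zero_mem _, ?_⟩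
      rintro w hw
      obtain ⟨c, rfl⟩ := Submodule.mem_span_singleton.mp hw
      rw [sub_zero]
      exact le_trans ha1 (ha3 c)
    have h1 : c₀ • x = v := by
      apply huniq
      refine ⟨Submodule.mem_span_singleton.mpr ⟨c₀, rfl⟩, ?_⟩
      rintro w hw
      obtain ⟨c, rfl⟩ := Submodule.mem_span_singleton.mp hw
      exact le_trans ha2 (ha3 c)
    exact smul_ne_zero hc₀ hx (h1.trans h0.symm)
  · intro hinv a
    exact cheb_of_invertible x hx hinv a
end
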